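/- arXiv:0905.4836 — 11 statements merged into one kernel-verified Lean document; each statement's English description precedes it below -/
import Mathlib

section
/- Let {x_n} be the sequence generated by the explicit viscosity-type iteration x_{n+1} = T(α_n Φ(x_n) + (1 − α_n) x_n) from a starting point x_0 ∈ C. Then for all n ≥ 1 one has ‖x_{n+1} − x_n‖ ≤ (1 − (1 − ρ)α_n)‖x_n − x_{n−1}‖ + |α_n − α_{n−1}| · ‖Φ(x_{n−1}) − x_{n−1}‖. -/
theorem stmt_2
    {X : Type*} [NormedAddCommGroup X] [NormedSpace ℝ X]
    (C : Set X) (hC : C.Nonempty) (hconv : Convex ℝ C)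
    (T Φ : X → X) (hT : ∀ x ∈ C, T x ∈ C) (hΦ : ∀ x ∈ C, Φ x ∈ C)
    (hTne : ∀ x ∈ C, ∀ y ∈ C, ‖T x - T y‖ ≤ ‖x - y‖)
    (ρ : ℝ) (hρ : ρ ∈ Set.Ioo (0 : ℝ) 1)
    (hΦc : ∀ x ∈ C, ∀ y ∈ C, ‖Φ x - Φ y‖ ≤ ρ * ‖x - y‖)
    (α : ℕ → ℝ) (hα : ∀ n, α n ∈ Set.Ioo (0 : ℝ) 1)
    (x : ℕ → X) (hx0 : x 0 ∈ C) (hxC : ∀ n, x n ∈ C)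
    (hrec : ∀ n, x (n + 1) = T (α n • Φ (x n) + (1 - α n) • x n)) :
    ∀ n : ℕ, 1 ≤ n →
      ‖x (n + 1) - x n‖ ≤ (1 - (1 - ρ) * α n) * ‖x n - x (n - 1)‖
        + |α n - α (n - 1)| * ‖Φ (x (n - 1)) - x (n - 1)‖ := by
  intro n hn
  obtain ⟨m, rfl⟩ : ∃ m, n = m + 1 := ⟨n - 1, (Nat.succ_pred_eq_of_pos hn).symm⟩
  simp only [Nat.add_sub_cancel]
  set y : ℕ → X := fun k => α k • Φ (x k) + (1 - α k) • x k with hy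
  have hyC : ∀ k, y k ∈ C := by
    intro k
    exact hconv (hΦ _ (hxC k)) (hxC k) (hα k).1.le (by linarith [(hα k).2]) (by ring)
  have h1 : x (m + 1 + 1) - x (m + 1) = T (y (m + 1)) - T (y m) := by
    simp only [hrec (m + 1), hrec m, hy]
  have h2 : ‖x (m + 1 + 1) - x (m + 1)‖ ≤ ‖y (m + 1) - y m‖ := by
    rw [h1]; exact hTne _ (hyC _) _ (hyC _)
  have h3 : y (m + 1) - y m = α (m + 1) • (Φ (x (m + 1)) - Φ (x m))
      + (1 - α (m + 1)) • (x (m + 1) - x m)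
      + (α (m + 1) - α m) • (Φ (x m) - x m) := by
    simp only [hy, smul_sub, sub_smul, one_smul]
    abel
  have h4 : ‖y (m + 1) - y m‖ ≤ α (m + 1) * (ρ * ‖x (m + 1) - x m‖)
      + (1 - α (m + 1)) * ‖x (m + 1) - x m‖
      + |α (m + 1) - α m| * ‖Φ (x m) - x m‖ := by
    rw [h3]
    refine le_trans (norm_add_le _ _) ?_
    gcongr
    · refine le_trans (norm_add_le _ _) ?_
      gcongr
      · rw [norm_smul, Real.norm_eq_abs, abs_of_pos (hα (m+1)).1]
        exact mul_le_mul_of_nonneg_left (hΦc _ (hxC _) _ (hxC _)) (hα (m+1)).1.le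
      · rw [norm_smul, Real.norm_eq_abs, abs_of_pos (by linarith [(hα (m+1)).2])]
    · rw [norm_smul, Real.norm_eq_abs]
  calc ‖x (m + 1 + 1) - x (m + 1)‖ ≤ _ := h2
    _ ≤ _ := h4
    _ = (1 - (1 - ρ) * α (m + 1)) * ‖x (m + 1) - x m‖
        + |α (m + 1) - α m| * ‖Φ (x m) - x m‖ := by ring
end

section
/- Let {x_n} be the sequence generated by the explicit viscosity-type iteration x_{n+1} = T(α_n Φ(x_n) + (1 − α_n) x_n) from a starting point x_0 ∈ C, and suppose p ∈ C is a fixed point of T (Tp = p). Then for all n ≥ 0 one has ‖x_n − p‖ ≤ max{‖x_0 − p‖, ‖Φ(p) − p‖/(1 − ρ)}; in particular the sequence {x_n} is bounded. -/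
theorem stmt_3
    {X : Type*} [NormedAddCommGroup X] [NormedSpace ℝ X]
    (C : Set X) (hC : C.Nonempty) (hconv : Convex ℝ C)
    (T Φ : X → X) (hT : ∀ x ∈ C, T x ∈ C) (hΦ : ∀ x ∈ C, Φ x ∈ C)
    (hTne : ∀ x ∈ C, ∀ y ∈ C, ‖T x - T y‖ ≤ ‖x - y‖)
    (ρ : ℝ) (hρ : ρ ∈ Set.Ioo (0 : ℝ) 1)
    (hΦc : ∀ x ∈ C, ∀ y ∈ C, ‖Φ x - Φ y‖ ≤ ρ * ‖x - y‖)
    (α : ℕ → ℝ) (hα : ∀ n, α n ∈ Set.Ioo (0 : ℝ) 1)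
    (x : ℕ → X) (hx0 : x 0 ∈ C) (hxC : ∀ n, x n ∈ C)
    (hrec : ∀ n, x (n + 1) = T (α n • Φ (x n) + (1 - α n) • x n))
    (p : X) (hp : p ∈ C) (hfp : T p = p) :
    (∀ n, ‖x n - p‖ ≤ max ‖x 0 - p‖ (‖Φ p - p‖ / (1 - ρ))) ∧
      ∃ M : ℝ, ∀ n, ‖x n‖ ≤ M := by
  obtain ⟨hρ0, hρ1⟩ := hρ
  set M : ℝ := max ‖x 0 - p‖ (‖Φ p - p‖ / (1 - ρ)) with hM
  have hKM : ‖Φ p - p‖ / (1 - ρ) ≤ M := le_max_right _ _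
  have hK : (1 - ρ) * (‖Φ p - p‖ / (1 - ρ)) = ‖Φ p - p‖ := by
    field_simp
  have key : ∀ n, ‖x n - p‖ ≤ M := by
    intro n
    induction n with
    | zero => exact le_max_left _ _
    | succ n ih =>
      obtain ⟨ha0, ha1⟩ := hα n
      set a := α n
      set y := a • Φ (x n) + (1 - a) • x n with hy
      have hyC : y ∈ C := hconv (hΦ _ (hxC n)) (hxC n) ha0.le (by linarith) (by ring)
      have h1 : ‖x (n + 1) - p‖ ≤ ‖y - p‖ := by
        rw [hrec n]
        calc ‖T y - p‖ = ‖T y - T p‖ := by rw [hfp]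
        _ ≤ ‖y - p‖ := hTne _ hyC _ hp
      have h2 : ‖y - p‖ ≤ a * ‖Φ (x n) - p‖ + (1 - a) * ‖x n - p‖ := by
        have : y - p = a • (Φ (x n) - p) + (1 - a) • (x n - p) := by
          rw [hy]; module
        rw [this]
        calc ‖a • (Φ (x n) - p) + (1 - a) • (x n - p)‖
            ≤ ‖a • (Φ (x n) - p)‖ + ‖(1 - a) • (x n - p)‖ := norm_add_le _ _
        _ = a * ‖Φ (x n) - p‖ + (1 - a) * ‖x n - p‖ := by
            rw [norm_smul, norm_smul, Real.norm_of_nonneg ha0.le,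
              Real.norm_of_nonneg (by linarith)]
      have h3 : ‖Φ (x n) - p‖ ≤ ρ * ‖x n - p‖ + ‖Φ p - p‖ := by
        calc ‖Φ (x n) - p‖ ≤ ‖Φ (x n) - Φ p‖ + ‖Φ p - p‖ := by
              have := norm_add_le (Φ (x n) - Φ p) (Φ p - p)
              simpa using this
        _ ≤ ρ * ‖x n - p‖ + ‖Φ p - p‖ := by
              linarith [hΦc _ (hxC n) _ hp]
      have hc1 : (0:ℝ) ≤ 1 - a * (1 - ρ) := by nlinarith
      have hc2 : (0:ℝ) ≤ a * (1 - ρ) := by nlinarith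
      have h5 := mul_le_mul_of_nonneg_left h3 ha0.le
      have h6 := mul_le_mul_of_nonneg_left ih hc1
      have h7 := mul_le_mul_of_nonneg_left hKM hc2
      nlinarith [h1, h2, h5, h6, h7, hK]
  refine ⟨key, M + ‖p‖, fun n => ?_⟩
  calc ‖x n‖ = ‖(x n - p) + p‖ := by rw [sub_add_cancel]
  _ ≤ ‖x n - p‖ + ‖p‖ := norm_add_le _ _
  _ ≤ M + ‖p‖ := by linarith [key n]
end

section
/- Let {λ_n}_{n≥1} be a sequence in (0,1) and {a_n}_{n≥1}, {b_n}_{n≥1} be sequences of nonnegative real numbers such that a_{n+1} ≤ (1 − λ_{n+1})a_n + b_n for all n ≥ 1. Assume ∑_{n≥1} λ_n diverges with rate of divergence δ : ℤ₊ → ℕ, ∑_{n≥1} b_n converges with Cauchy modulus γ : (0,∞) → ℕ, and D > 0 is an upper bound on {a_n}. Then lim_{n→∞} a_n = 0 and, moreover, for every ε ∈ (0,2) one has a_n < ε for all n ≥ h(γ, δ, D, ε), where h(γ, δ, D, ε) = δ(γ(ε/2) + 1 + ⌈ln(2D/ε)⌉). -/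
open Filter

lemma aux_rec_stmt5 (lam a b : ℕ → ℝ)
    (hlam : ∀ n ≥ 1, lam n ∈ Set.Ioo (0 : ℝ) 1)
    (ha : ∀ n ≥ 1, 0 ≤ a n) (hb : ∀ n ≥ 1, 0 ≤ b n)
    (hrec : ∀ n ≥ 1, a (n + 1) ≤ (1 - lam (n + 1)) * a n + b n)
    (N : ℕ) (hN : 1 ≤ N) :
    ∀ k : ℕ, a (N + k) ≤ (∏ i ∈ Finset.Icc (N+1) (N+k), (1 - lam i)) * a N
      + ∑ i ∈ Finset.Ico N (N+k), b i := by
  intro k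
  induction k with
  | zero =>
    rw [Nat.add_zero, Finset.Icc_eq_empty (by omega), Finset.Ico_self]
    simp
  | succ k ih =>
    have hP : 0 ≤ ∏ i ∈ Finset.Icc (N+1) (N+k), (1 - lam i) := by
      apply Finset.prod_nonneg
      intro i hi
      have hi' := Finset.mem_Icc.1 hi
      have := (hlam i (by omega)).2
      linarith
    have hS : 0 ≤ ∑ i ∈ Finset.Ico N (N+k), b i :=
      Finset.sum_nonneg fun i hi => hb i (by
        have := Finset.mem_Ico.1 hi; omega)
    have hl := hlam (N+k+1) (by omega)
    have hbk : 0 ≤ b (N+k) := hb _ (by omega)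
    have haN : 0 ≤ a N := ha N hN
    have h1 : a (N+k+1) ≤ (1 - lam (N+k+1)) * a (N+k) + b (N+k) := hrec (N+k) (by omega)
    have h2 : (1 - lam (N+k+1)) * a (N+k) ≤ (1 - lam (N+k+1)) *
        ((∏ i ∈ Finset.Icc (N+1) (N+k), (1 - lam i)) * a N + ∑ i ∈ Finset.Ico N (N+k), b i) :=
      mul_le_mul_of_nonneg_left ih (by have := hl.2; linarith)
    have hgoalP : ∏ i ∈ Finset.Icc (N+1) (N+(k+1)), (1 - lam i)
        = (∏ i ∈ Finset.Icc (N+1) (N+k), (1 - lam i)) * (1 - lam (N+k+1)) := by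
      rw [show N + (k+1) = (N+k)+1 from rfl, Finset.prod_Icc_succ_top (by omega)]
    have hgoalS : ∑ i ∈ Finset.Ico N (N+(k+1)), b i
        = (∑ i ∈ Finset.Ico N (N+k), b i) + b (N+k) := by
      rw [show N + (k+1) = (N+k)+1 from rfl, Finset.sum_Ico_succ_top (by omega)]
    rw [show N + (k+1) = (N+k)+1 from rfl] at hgoalP hgoalS ⊢
    rw [hgoalP, hgoalS]
    have hl2 := hl.1
    have hl3 := hl.2
    nlinarith [mul_nonneg hP haN]

theorem stmt_5
    (lam a b : ℕ → ℝ)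
    (hlam : ∀ n ≥ 1, lam n ∈ Set.Ioo (0 : ℝ) 1)
    (ha : ∀ n ≥ 1, 0 ≤ a n) (hb : ∀ n ≥ 1, 0 ≤ b n)
    (hrec : ∀ n ≥ 1, a (n + 1) ≤ (1 - lam (n + 1)) * a n + b n)
    (δ : ℕ → ℕ) (hδ1 : ∀ n, 1 ≤ δ n)
    (hδ : ∀ n : ℕ, (n : ℝ) ≤ ∑ i ∈ Finset.Icc 1 (δ n), lam i)
    (γ : ℝ → ℕ) (hγ1 : ∀ e : ℝ, 0 < e → 1 ≤ γ e)
    (hγ : ∀ e : ℝ, 0 < e → ∀ n : ℕ,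
      |(∑ i ∈ Finset.Icc 1 (γ e + n), b i) - ∑ i ∈ Finset.Icc 1 (γ e), b i| < e)
    (D : ℝ) (hD : 0 < D) (hDa : ∀ n ≥ 1, a n ≤ D) :
    Tendsto a atTop (nhds 0) ∧
      ∀ e ∈ Set.Ioo (0 : ℝ) 2,
        ∀ n ≥ δ (γ (e / 2) + 1 + ⌈Real.log (2 * D / e)⌉₊), a n < e := by
  have key : ∀ e ∈ Set.Ioo (0 : ℝ) 2,
      ∀ n ≥ δ (γ (e / 2) + 1 + ⌈Real.log (2 * D / e)⌉₊), a n < e := by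
    rintro e ⟨he0, he2⟩ n hn
    have he2' : 0 < e / 2 := by linarith
    set G := γ (e/2) with hGdef
    set N := G + 1 with hNdef
    set c := ⌈Real.log (2*D/e)⌉₊ with hcdef
    set K := G + 1 + c with hKdef
    have hG1 : 1 ≤ G := hγ1 _ he2'
    have hn' : δ K ≤ n := hn
    -- δ K > K
    have hδK : K + 1 ≤ δ K := by
      by_contra h
      push_neg at h
      have h1 := hδ K
      have h2 : ∑ i ∈ Finset.Icc 1 (δ K), lam i < (δ K : ℝ) := by
        have h3 : ∑ i ∈ Finset.Icc 1 (δ K), lam i < ∑ i ∈ Finset.Icc 1 (δ K), (1:ℝ) := by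
          apply Finset.sum_lt_sum_of_nonempty
          · exact Finset.nonempty_Icc.2 (hδ1 K)
          · intro i hi
            exact (hlam i (Finset.mem_Icc.1 hi).1).2
        simpa [Nat.card_Icc] using h3
      have h4 : (δ K : ℝ) ≤ (K : ℝ) := by exact_mod_cast Nat.lt_succ_iff.mp h
      linarith
    have hNK : N ≤ K := Nat.le_add_right N c
    have hnN : N + 1 ≤ n := le_trans (Nat.succ_le_succ hNK) (le_trans hδK hn')
    have hk := aux_rec_stmt5 lam a b hlam ha hb hrec N (by omega) (n - N)
    rw [show N + (n - N) = n from by omega] at hk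
    -- product bound
    have hDe : 0 < 2 * D / e := by positivity
    have hPle : ∏ i ∈ Finset.Icc (N+1) n, (1 - lam i) ≤ e / (2*D) := by
      have h1 : ∏ i ∈ Finset.Icc (N+1) n, (1 - lam i)
          ≤ ∏ i ∈ Finset.Icc (N+1) n, Real.exp (-(lam i)) := by
        apply Finset.prod_le_prod
        · intro i hi
          have hi' := Finset.mem_Icc.1 hi
          have := (hlam i (by omega)).2
          linarith
        · intro i hi
          have := Real.add_one_le_exp (-(lam i))
          linarith
      have h2 : ∏ i ∈ Finset.Icc (N+1) n, Real.exp (-(lam i))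
          = Real.exp (-(∑ i ∈ Finset.Icc (N+1) n, lam i)) := by
        rw [← Real.exp_sum, Finset.sum_neg_distrib]
      have hsumlam : Real.log (2*D/e) ≤ ∑ i ∈ Finset.Icc (N+1) n, lam i := by
        have hsplit : ∑ i ∈ Finset.Icc 1 N, lam i + ∑ i ∈ Finset.Icc (N+1) n, lam i
            = ∑ i ∈ Finset.Icc 1 n, lam i := by
          rw [show Finset.Icc 1 N = Finset.Ioc 0 N from (Finset.Icc_add_one_left_eq_Ioc 0 N),
              show Finset.Icc (N+1) n = Finset.Ioc N n from (Finset.Icc_add_one_left_eq_Ioc N n),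
              show Finset.Icc 1 n = Finset.Ioc 0 n from (Finset.Icc_add_one_left_eq_Ioc 0 n)]
          exact Finset.sum_Ioc_consecutive _ (by omega) (by omega)
        have hub : ∑ i ∈ Finset.Icc 1 N, lam i ≤ (N : ℝ) := by
          have h3 : ∑ i ∈ Finset.Icc 1 N, lam i ≤ ∑ i ∈ Finset.Icc 1 N, (1:ℝ) := by
            apply Finset.sum_le_sum
            intro i hi
            exact le_of_lt (hlam i (Finset.mem_Icc.1 hi).1).2
          simpa [Nat.card_Icc] using h3
        have hlb : (K : ℝ) ≤ ∑ i ∈ Finset.Icc 1 n, lam i := by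
          refine le_trans (hδ K) ?_
          apply Finset.sum_le_sum_of_subset_of_nonneg
          · exact Finset.Icc_subset_Icc_right (by omega)
          · intro i hi _
            exact le_of_lt (hlam i (Finset.mem_Icc.1 hi).1).1
        have hc : (c : ℝ) ≤ ∑ i ∈ Finset.Icc (N+1) n, lam i := by
          have hKc : (K : ℝ) = (N : ℝ) + (c : ℝ) := by push_cast [hKdef, hNdef]; ring
          linarith
        exact le_trans (Nat.le_ceil _) hc
      have h3 : Real.exp (-(∑ i ∈ Finset.Icc (N+1) n, lam i))
          ≤ Real.exp (-(Real.log (2*D/e))) := by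
        apply Real.exp_le_exp.2
        linarith
      have h4 : Real.exp (-(Real.log (2*D/e))) = e / (2*D) := by
        rw [Real.exp_neg, Real.exp_log hDe, inv_div]
      linarith [le_trans h1 (le_of_eq h2), le_trans (h2 ▸ h1) h3]
    -- tail bound
    have hT : ∑ i ∈ Finset.Ico N n, b i < e/2 := by
      have hset : Finset.Ico N n = Finset.Ioc G (n-1) := by
        ext i
        simp only [Finset.mem_Ico, Finset.mem_Ioc]
        omega
      have hsplit : ∑ i ∈ Finset.Icc 1 G, b i + ∑ i ∈ Finset.Ioc G (n-1), b i
          = ∑ i ∈ Finset.Icc 1 (n-1), b i := by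
        rw [show Finset.Icc 1 G = Finset.Ioc 0 G from (Finset.Icc_add_one_left_eq_Ioc 0 G),
            show Finset.Icc 1 (n-1) = Finset.Ioc 0 (n-1) from (Finset.Icc_add_one_left_eq_Ioc 0 (n-1))]
        exact Finset.sum_Ioc_consecutive _ (by omega) (by omega)
      have habs := hγ (e/2) he2' (n - 1 - G)
      rw [show G + (n - 1 - G) = n - 1 from by omega] at habs
      have h5 := lt_of_le_of_lt (le_abs_self _) habs
      rw [hset]
      linarith
    -- combine
    have haN : a N ≤ D := hDa N (by omega)
    have haN0 : 0 ≤ a N := ha N (by omega)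
    have hP0 : 0 ≤ ∏ i ∈ Finset.Icc (N+1) n, (1 - lam i) := by
      apply Finset.prod_nonneg
      intro i hi
      have hi' := Finset.mem_Icc.1 hi
      have := (hlam i (by omega)).2
      linarith
    have hmul : (∏ i ∈ Finset.Icc (N+1) n, (1 - lam i)) * a N ≤ (e/(2*D)) * D :=
      mul_le_mul hPle haN haN0 (by positivity)
    have heq : (e/(2*D)) * D = e/2 := by field_simp
    linarith
  refine ⟨?_, key⟩
  rw [Metric.tendsto_atTop]
  intro ε hε
  set e := min ε 1 with hedef
  have he : e ∈ Set.Ioo (0:ℝ) 2 := by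
    constructor
    · exact lt_min hε one_pos
    · have := min_le_right ε 1; linarith
  refine ⟨max (δ (γ (e/2) + 1 + ⌈Real.log (2*D/e)⌉₊)) 1, fun n hn => ?_⟩
  have h1 := key e he n (le_trans (le_max_left _ _) hn)
  have h2 : 0 ≤ a n := ha n (le_trans (le_max_right _ _) hn)
  rw [Real.dist_eq, sub_zero, abs_of_nonneg h2]
  exact lt_of_lt_of_le h1 (min_le_left _ _)
end

section
/- Suppose that for t ∈ (0,1) the point x_t ∈ C satisfies the implicit equation x_t = T(tΦ(x_t) + (1 − t)x_t), and let p ∈ C be a fixed point of T. Then ‖x_t − p‖ ≤ ‖Φ(p) − p‖/(1 − ρ); in particular the approximating curve {x_t : t ∈ (0,1)} is bounded. -/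
theorem stmt_7
    {X : Type*} [NormedAddCommGroup X] [NormedSpace ℝ X]
    (C : Set X) (hC : C.Nonempty) (hconv : Convex ℝ C)
    (T Φ : X → X) (hT : ∀ x ∈ C, T x ∈ C) (hΦ : ∀ x ∈ C, Φ x ∈ C)
    (hTne : ∀ x ∈ C, ∀ y ∈ C, ‖T x - T y‖ ≤ ‖x - y‖)
    (ρ : ℝ) (hρ : ρ ∈ Set.Ioo (0 : ℝ) 1)
    (hΦc : ∀ x ∈ C, ∀ y ∈ C, ‖Φ x - Φ y‖ ≤ ρ * ‖x - y‖)
    (p : X) (hp : p ∈ C) (hfp : T p = p)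
    (t : ℝ) (ht : t ∈ Set.Ioo (0 : ℝ) 1)
    (xt : X) (hxt : xt ∈ C)
    (heq : xt = T (t • Φ xt + (1 - t) • xt)) :
    ‖xt - p‖ ≤ ‖Φ p - p‖ / (1 - ρ) := by
  obtain ⟨ht0, ht1⟩ := ht
  obtain ⟨hρ0, hρ1⟩ := hρ
  have hz : t • Φ xt + (1 - t) • xt ∈ C :=
    hconv (hΦ xt hxt) hxt ht0.le (by linarith) (by ring)
  have h1 : ‖xt - p‖ ≤ ‖t • (Φ xt - p) + (1 - t) • (xt - p)‖ := by
    calc ‖xt - p‖ = ‖T (t • Φ xt + (1 - t) • xt) - T p‖ := by rw [← heq, hfp]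
    _ ≤ ‖(t • Φ xt + (1 - t) • xt) - p‖ := hTne _ hz _ hp
    _ = ‖t • (Φ xt - p) + (1 - t) • (xt - p)‖ := by
        congr 1; simp [smul_sub, sub_smul]; abel
  have h2 : ‖t • (Φ xt - p) + (1 - t) • (xt - p)‖
      ≤ t * ‖Φ xt - p‖ + (1 - t) * ‖xt - p‖ := by
    calc ‖t • (Φ xt - p) + (1 - t) • (xt - p)‖
        ≤ ‖t • (Φ xt - p)‖ + ‖(1 - t) • (xt - p)‖ := norm_add_le _ _
    _ = t * ‖Φ xt - p‖ + (1 - t) * ‖xt - p‖ := by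
        rw [norm_smul, norm_smul, Real.norm_of_nonneg ht0.le,
          Real.norm_of_nonneg (by linarith)]
  have h3 : ‖Φ xt - p‖ ≤ ρ * ‖xt - p‖ + ‖Φ p - p‖ := by
    calc ‖Φ xt - p‖ ≤ ‖Φ xt - Φ p‖ + ‖Φ p - p‖ := norm_sub_le_norm_sub_add_norm_sub _ _ _
    _ ≤ ρ * ‖xt - p‖ + ‖Φ p - p‖ := by gcongr; exact hΦc xt hxt p hp
  have key : ‖xt - p‖ ≤ t * (ρ * ‖xt - p‖ + ‖Φ p - p‖) + (1 - t) * ‖xt - p‖ := by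
    refine h1.trans (h2.trans ?_)
    gcongr
  have h4 : (1 - ρ) * ‖xt - p‖ ≤ ‖Φ p - p‖ := by nlinarith
  rw [le_div_iff₀ (by linarith)]
  linarith
end

section
/- Let {x_n} be a bounded sequence contained in a separable subset D of a Banach space X. Then there is a subsequence {x_{n_k}} of {x_n} such that lim_{k→∞} ‖x_{n_k} − y‖ exists for every y ∈ D. -/
open Filter

theorem stmt_8
    {X : Type*} [NormedAddCommGroup X] [NormedSpace ℝ X] [CompleteSpace X]
    (D : Set X) (hD : TopologicalSpace.IsSeparable D)
    (x : ℕ → X) (hxD : ∀ n, x n ∈ D)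
    (hbdd : ∃ M : ℝ, ∀ n, ‖x n‖ ≤ M) :
    ∃ φ : ℕ → ℕ, StrictMono φ ∧
      ∀ y ∈ D, ∃ l : ℝ, Tendsto (fun k => ‖x (φ k) - y‖) atTop (nhds l) := by
  obtain ⟨M, hM⟩ := hbdd
  obtain ⟨c, hc, hDc⟩ := hD
  have hc' : (insert (0 : X) c).Countable := hc.insert 0
  obtain ⟨f, hf⟩ := hc'.exists_eq_range ⟨0, Set.mem_insert 0 c⟩
  -- the sequence of "distance profiles" lives in a compact set
  set g : ℕ → (ℕ → ℝ) := fun n i => ‖x n - f i‖ with hg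
  have hgmem : ∀ n, g n ∈ Set.pi Set.univ (fun i => Set.Icc (0 : ℝ) (M + ‖f i‖)) := by
    intro n i _
    constructor
    · positivity
    · calc ‖x n - f i‖ ≤ ‖x n‖ + ‖f i‖ := norm_sub_le _ _
        _ ≤ M + ‖f i‖ := by linarith [hM n]
  have hcomp : IsCompact (Set.pi Set.univ (fun i => Set.Icc (0 : ℝ) (M + ‖f i‖))) :=
    isCompact_univ_pi (fun i => isCompact_Icc)
  obtain ⟨a, -, φ, hφ, hconv⟩ := hcomp.tendsto_subseq hgmem
  refine ⟨φ, hφ, fun y hy => ?_⟩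
  have hconv' : ∀ i, Tendsto (fun k => ‖x (φ k) - f i‖) atTop (nhds (a i)) := by
    intro i
    have := (tendsto_pi_nhds.1 hconv) i
    exact this
  -- show the sequence is Cauchy
  have hcau : CauchySeq (fun k => ‖x (φ k) - y‖) := by
    rw [Metric.cauchySeq_iff]
    intro ε hε
    -- find f i close to y
    have hyc : y ∈ closure (insert (0:X) c) :=
      closure_mono (Set.subset_insert 0 c) (hDc hy)
    obtain ⟨t, ht, htd⟩ := Metric.mem_closure_iff.1 hyc (ε/4) (by linarith)
    rw [hf] at ht
    obtain ⟨i, rfl⟩ := ht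
    have hclose : ∀ k, |‖x (φ k) - y‖ - ‖x (φ k) - f i‖| ≤ ε/4 := by
      intro k
      calc |‖x (φ k) - y‖ - ‖x (φ k) - f i‖| ≤ ‖(x (φ k) - y) - (x (φ k) - f i)‖ :=
            abs_norm_sub_norm_le _ _
        _ = ‖f i - y‖ := by rw [sub_sub_sub_cancel_left]
        _ ≤ ε/4 := by
            rw [dist_eq_norm] at htd
            rw [show ‖f i - y‖ = ‖y - f i‖ from norm_sub_rev _ _]
            linarith
    have hicau : CauchySeq (fun k => ‖x (φ k) - f i‖) := (hconv' i).cauchySeq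
    obtain ⟨N, hN⟩ := Metric.cauchySeq_iff.1 hicau (ε/4) (by linarith)
    refine ⟨N, fun m hm n hn => ?_⟩
    have h1 := hclose m
    have h2 := hclose n
    have h3 := hN m hm n hn
    rw [Real.dist_eq] at h3 ⊢
    have e1 : |‖x (φ m) - y‖ - ‖x (φ n) - y‖| ≤
        |‖x (φ m) - y‖ - ‖x (φ m) - f i‖| + |‖x (φ m) - f i‖ - ‖x (φ n) - f i‖|
          + |‖x (φ n) - f i‖ - ‖x (φ n) - y‖| := by
      apply (abs_sub_le _ (‖x (φ m) - f i‖) _).trans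
      have := abs_sub_le (‖x (φ m) - f i‖) (‖x (φ n) - f i‖) (‖x (φ n) - y‖)
      linarith
    have h2' : |‖x (φ n) - f i‖ - ‖x (φ n) - y‖| ≤ ε/4 := by
      rw [abs_sub_comm]; exact h2
    linarith
  obtain ⟨l, hl⟩ := cauchySeq_tendsto_of_complete hcau
  exact ⟨l, hl⟩
end

section
/- Let H be a Hilbert space, C ⊆ H a nonempty closed convex subset, T : C → C a nonexpansive mapping with nonempty fixed point set F = {x ∈ C : Tx = x}, and Φ : C → C a ρ-contraction. For each t ∈ (0,1) let x_t ∈ C be the unique point satisfying x_t = T(tΦ(x_t) + (1 − t)x_t). Then, as t → 0⁺, x_t converges strongly (in norm) to the unique point q ∈ F satisfying the variational inequality ⟨Φ(q) − q, x − q⟩ ≤ 0 for all x ∈ F. -/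
open Filter Topology
open scoped RealInnerProductSpace

set_option maxHeartbeats 2000000 in
private lemma browder_seq
    {H : Type*} [NormedAddCommGroup H] [InnerProductSpace ℝ H] [CompleteSpace H]
    (C : Set H) (hclosed : IsClosed C) (hconv : Convex ℝ C)
    (T Φ : H → H) (hT : ∀ x ∈ C, T x ∈ C) (hΦ : ∀ x ∈ C, Φ x ∈ C)
    (hTne : ∀ x ∈ C, ∀ y ∈ C, ‖T x - T y‖ ≤ ‖x - y‖)
    (p₀ : H) (hp₀C : p₀ ∈ C) (hp₀F : T p₀ = p₀)
    (ρ : ℝ) (hρ : ρ ∈ Set.Ioo (0 : ℝ) 1)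
    (hΦc : ∀ x ∈ C, ∀ y ∈ C, ‖Φ x - Φ y‖ ≤ ρ * ‖x - y‖)
    (x : ℝ → H)
    (hx : ∀ t ∈ Set.Ioo (0 : ℝ) 1,
      x t ∈ C ∧ x t = T (t • Φ (x t) + (1 - t) • x t))
    (t : ℕ → ℝ) (htm : ∀ n, t n ∈ Set.Ioo (0:ℝ) 1) (ht0 : Tendsto t atTop (𝓝 0)) :
    ∃ z : H, z ∈ C ∧ T z = z ∧ (∀ y ∈ C, T y = y → ⟪Φ z - z, y - z⟫ ≤ 0) ∧
      ∃ ms : ℕ → ℕ, Tendsto (fun k => x (t (ms k))) atTop (𝓝 z) := by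
  obtain ⟨hρ0, hρ1⟩ := hρ
  have h1ρ : (0:ℝ) < 1 - ρ := by linarith
  set c₀ : ℝ := ‖Φ p₀ - p₀‖ with hc₀
  set R : ℝ := c₀ / (1 - ρ) with hR
  have hR0 : 0 ≤ R := div_nonneg (norm_nonneg _) h1ρ.le
  set M : ℝ := ρ * R + c₀ + R with hM
  have hM0 : 0 ≤ M := by positivity
  -- membership and convex combination facts
  have hxC : ∀ s ∈ Set.Ioo (0:ℝ) 1, x s ∈ C := fun s hs => (hx s hs).1
  have hyC : ∀ s ∈ Set.Ioo (0:ℝ) 1, s • Φ (x s) + (1 - s) • x s ∈ C := by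
    intro s hs
    exact hconv (hΦ _ (hxC s hs)) (hxC s hs) hs.1.le (by linarith [hs.2]) (by ring)
  -- boundedness
  have hbR : ∀ s ∈ Set.Ioo (0:ℝ) 1, ‖x s - p₀‖ ≤ R := by
    intro s hs
    set u := x s with hu
    set y := s • Φ u + (1 - s) • u with hy
    have h1 : ‖u - p₀‖ ≤ ‖y - p₀‖ := by
      calc ‖u - p₀‖ = ‖T y - T p₀‖ := by rw [hp₀F, ← (hx s hs).2]
      _ ≤ ‖y - p₀‖ := hTne _ (hyC s hs) _ hp₀C
    have h2 : y - p₀ = s • (Φ u - p₀) + (1 - s) • (u - p₀) := by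
      rw [hy]; module
    have h3 : ‖y - p₀‖ ≤ s * ‖Φ u - p₀‖ + (1 - s) * ‖u - p₀‖ := by
      rw [h2]
      refine (norm_add_le _ _).trans ?_
      rw [norm_smul, norm_smul, Real.norm_eq_abs, Real.norm_eq_abs,
        abs_of_pos hs.1, abs_of_pos (by linarith [hs.2] : (0:ℝ) < 1 - s)]
    have h4 : ‖Φ u - p₀‖ ≤ ρ * ‖u - p₀‖ + c₀ := by
      calc ‖Φ u - p₀‖ ≤ ‖Φ u - Φ p₀‖ + ‖Φ p₀ - p₀‖ := norm_sub_le_norm_sub_add_norm_sub _ _ _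
      _ ≤ ρ * ‖u - p₀‖ + c₀ := by
          rw [hc₀]; gcongr; exact hΦc _ (hxC s hs) _ hp₀C
    have h13 : ‖u - p₀‖ ≤ s * ‖Φ u - p₀‖ + (1 - s) * ‖u - p₀‖ := h1.trans h3
    have h4' := mul_le_mul_of_nonneg_left h4 hs.1.le
    have h5 : s * (1 - ρ) * ‖u - p₀‖ ≤ s * c₀ := by nlinarith
    have h6 : (1 - ρ) * ‖u - p₀‖ ≤ c₀ := by
      have := (mul_le_mul_iff_right₀ hs.1).mp (by linarith : s * ((1 - ρ) * ‖u - p₀‖) ≤ s * c₀)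
      linarith
    rw [hR, le_div_iff₀ h1ρ]; linarith
  have hMb : ∀ s ∈ Set.Ioo (0:ℝ) 1, ‖Φ (x s) - x s‖ ≤ M := by
    intro s hs
    have h4 : ‖Φ (x s) - Φ p₀‖ ≤ ρ * ‖x s - p₀‖ := hΦc _ (hxC s hs) _ hp₀C
    calc ‖Φ (x s) - x s‖ ≤ ‖Φ (x s) - Φ p₀‖ + ‖Φ p₀ - x s‖ :=
          norm_sub_le_norm_sub_add_norm_sub _ _ _
    _ ≤ ρ * ‖x s - p₀‖ + (‖Φ p₀ - p₀‖ + ‖p₀ - x s‖) := by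
        refine add_le_add h4 (norm_sub_le_norm_sub_add_norm_sub _ _ _)
    _ ≤ M := by
        rw [hM]
        have := hbR s hs
        have h7 : ‖p₀ - x s‖ = ‖x s - p₀‖ := norm_sub_rev _ _
        nlinarith
  -- the key variational inequality for approximants
  have hkey : ∀ s ∈ Set.Ioo (0:ℝ) 1, ∀ p ∈ C, T p = p →
      2 * ⟪x s - Φ (x s), x s - p⟫ ≤ s * M ^ 2 := by
    intro s hs p hpC hpF
    set u := x s with hu
    set y := s • Φ u + (1 - s) • u with hy
    have h1 : ‖u - p‖ ≤ ‖y - p‖ := by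
      calc ‖u - p‖ = ‖T y - T p‖ := by rw [hpF, ← (hx s hs).2]
      _ ≤ ‖y - p‖ := hTne _ (hyC s hs) _ hpC
    have h2 : y - p = (u - p) + s • (Φ u - u) := by rw [hy]; module
    have h3 : ‖y - p‖ ^ 2 = ‖u - p‖ ^ 2 + 2 * (s * ⟪u - p, Φ u - u⟫) + s ^ 2 * ‖Φ u - u‖ ^ 2 := by
      rw [h2, norm_add_sq_real, real_inner_smul_right, norm_smul, Real.norm_eq_abs,
        abs_of_pos hs.1, mul_pow]
    have h4 : 0 ≤ 2 * (s * ⟪u - p, Φ u - u⟫) + s ^ 2 * ‖Φ u - u‖ ^ 2 := by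
      nlinarith [h1, norm_nonneg (u - p), norm_nonneg (y - p)]
    have h5 : ⟪u - Φ u, u - p⟫ = - ⟪u - p, Φ u - u⟫ := by
      rw [real_inner_comm]
      rw [show u - Φ u = -(Φ u - u) from (neg_sub _ _).symm, inner_neg_right]
    have h6 : ‖Φ u - u‖ ≤ M := hMb s hs
    rw [h5]
    have h7 : 2 * (s * ⟪u - p, Φ u - u⟫) ≥ - (s ^ 2 * ‖Φ u - u‖ ^ 2) := by linarith
    have h8 : ‖Φ u - u‖ ^ 2 ≤ M ^ 2 := by nlinarith [norm_nonneg (Φ u - u)]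
    have h9 : s * (2 * (- ⟪u - p, Φ u - u⟫)) ≤ s * (s * M ^ 2) := by
      nlinarith [mul_le_mul_of_nonneg_left h8 (sq_nonneg s)]
    exact le_of_mul_le_mul_left h9 hs.1
  -- the sequence and asymptotic-center machinery
  set u : ℕ → H := fun n => x (t n) with hudef
  have huC : ∀ n, u n ∈ C := fun n => hxC _ (htm n)
  set S : H → ℕ → ℝ := fun p n => ‖u n - p‖ ^ 2 with hSdef
  set φf : H → ℝ := fun p => limsup (S p) atTop with hφdef
  have hub : ∀ p : H, ∀ n, ‖u n - p‖ ≤ R + ‖p₀ - p‖ := by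
    intro p n
    calc ‖u n - p‖ ≤ ‖u n - p₀‖ + ‖p₀ - p‖ := norm_sub_le_norm_sub_add_norm_sub _ _ _
    _ ≤ R + ‖p₀ - p‖ := by gcongr; exact hbR _ (htm n)
  have hS0 : ∀ p n, 0 ≤ S p n := by
    intro p n; simp only [hSdef]; positivity
  have hSub : ∀ p n, S p n ≤ (R + ‖p₀ - p‖) ^ 2 := by
    intro p n
    have h := hub p n
    have h2 := norm_nonneg (u n - p)
    simp only [hSdef]
    nlinarith
  have hBu : ∀ p, IsBoundedUnder (· ≤ ·) atTop (S p) :=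
    fun p => isBoundedUnder_of ⟨(R + ‖p₀ - p‖) ^ 2, hSub p⟩
  have hBl : ∀ p, IsBoundedUnder (· ≥ ·) atTop (S p) :=
    fun p => isBoundedUnder_of ⟨0, hS0 p⟩
  have hCo : ∀ p, IsCoboundedUnder (· ≤ ·) atTop (S p) := fun p => (hBl p).isCoboundedUnder_le
  have hCo' : ∀ p, IsCoboundedUnder (· ≥ ·) atTop (S p) := fun p => (hBu p).isCoboundedUnder_ge
  have hφ0 : ∀ p, 0 ≤ φf p := by
    intro p
    have h := limsup_le_limsup (Eventually.of_forall (hS0 p))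
      ((isBoundedUnder_of ⟨(0:ℝ), fun _ => le_refl (0:ℝ)⟩ :
        IsBoundedUnder (· ≥ ·) atTop (fun _ : ℕ => (0:ℝ))).isCoboundedUnder_le) (hBu p)
    rwa [limsup_const (0:ℝ)] at h
  have hφlip : ∀ p q : H, φf p ≤ φf q + (2 * (R + ‖p₀ - q‖) + ‖p - q‖) * ‖p - q‖ := by
    intro p q
    have hpt : ∀ n, S p n ≤ S q n + (2 * (R + ‖p₀ - q‖) + ‖p - q‖) * ‖p - q‖ := by
      intro n
      have h1 : ‖u n - p‖ ≤ ‖u n - q‖ + ‖q - p‖ := norm_sub_le_norm_sub_add_norm_sub _ _ _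
      have h2 : ‖u n - q‖ ≤ R + ‖p₀ - q‖ := hub q n
      have h3 : ‖q - p‖ = ‖p - q‖ := norm_sub_rev _ _
      have h4 := norm_nonneg (u n - p); have h5 := norm_nonneg (u n - q)
      have h6 := norm_nonneg (p - q)
      simp only [hSdef]
      nlinarith
    have h7 : limsup (S p) atTop
        ≤ limsup (fun n => S q n + (2 * (R + ‖p₀ - q‖) + ‖p - q‖) * ‖p - q‖) atTop :=
      limsup_le_limsup (Eventually.of_forall hpt) (hCo p)
        (isBoundedUnder_of ⟨(R + ‖p₀ - q‖) ^ 2 + (2 * (R + ‖p₀ - q‖) + ‖p - q‖) * ‖p - q‖,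
          fun n => by linarith [hSub q n]⟩)
    rwa [limsup_add_const atTop (S q) _ (hBu q) (hCo q)] at h7
  set d : ℝ := sInf (φf '' C) with hd
  have hdbdd : BddBelow (φf '' C) := ⟨0, by rintro y ⟨p', hp', rfl⟩; exact hφ0 p'⟩
  have hdne : (φf '' C).Nonempty := ⟨φf p₀, ⟨p₀, hp₀C, rfl⟩⟩
  have hdle : ∀ p ∈ C, d ≤ φf p := fun p hp => csInf_le hdbdd ⟨p, hp, rfl⟩
  have hmin : ∀ k : ℕ, ∃ p', p' ∈ C ∧ φf p' < d + 1 / (k + 1) := by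
    intro k
    have h1 : d < d + 1 / ((k:ℝ) + 1) := lt_add_of_pos_right d (by positivity)
    obtain ⟨yv, ⟨p', hp', rfl⟩, hy⟩ := exists_lt_of_csInf_lt hdne h1
    exact ⟨p', hp', hy⟩
  choose p hpC hpφ using hmin
  clear_value d φf S u M R c₀
  -- midpoints and the parallelogram estimate
  have hmidC : ∀ a ∈ C, ∀ b ∈ C, (1/2 : ℝ) • (a + b) ∈ C := by
    intro a ha b hb
    have h := hconv ha hb (by norm_num : (0:ℝ) ≤ 1/2) (by norm_num : (0:ℝ) ≤ 1/2) (by norm_num)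
    convert h using 1
    module
  have hBuh : ∀ p', IsBoundedUnder (· ≤ ·) atTop (fun n => (1/2 : ℝ) * S p' n) :=
    fun p' => isBoundedUnder_of ⟨(1/2) * (R + ‖p₀ - p'‖) ^ 2, fun n => by linarith [hSub p' n]⟩
  have hBlh : ∀ p', IsBoundedUnder (· ≥ ·) atTop (fun n => (1/2 : ℝ) * S p' n) :=
    fun p' => isBoundedUnder_of ⟨0, fun n => by linarith [hS0 p' n]⟩
  have hhalf : ∀ p' : H,
      limsup (fun n => (1/2 : ℝ) * S p' n) atTop = (1/2) * limsup (S p') atTop := by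
    intro p'
    have hmono : Monotone (fun r : ℝ => (1/2) * r) := fun a b h => by dsimp; linarith
    exact (hmono.map_limsup_of_continuousAt (S p')
      ((continuous_const.mul continuous_id).continuousAt) (hBu p') (hCo p')).symm
  have hpar : ∀ a ∈ C, ∀ b ∈ C,
      φf ((1/2 : ℝ) • (a + b)) ≤ (1/2) * φf a + (1/2) * φf b - (1/4) * ‖a - b‖ ^ 2 := by
    intro a ha b hb
    have hpt : ∀ n, S ((1/2 : ℝ) • (a + b)) n
        = ((1/2) * S a n + (1/2) * S b n) + (-(1/4) * ‖a - b‖ ^ 2) := by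
      intro n
      have law := parallelogram_law_with_norm ℝ (u n - a) (u n - b)
      have e1 : u n - (1/2 : ℝ) • (a + b) = (1/2 : ℝ) • ((u n - a) + (u n - b)) := by module
      have e2 : ‖a - b‖ = ‖(u n - a) - (u n - b)‖ := by
        rw [show (u n - a) - (u n - b) = b - a from by module]
        exact norm_sub_rev a b
      simp only [hSdef]
      rw [e1, norm_smul, Real.norm_eq_abs, abs_of_pos (by norm_num : (0:ℝ) < 1/2), e2]
      linear_combination (1/4 : ℝ) * law
    have hb2 : IsBoundedUnder (· ≤ ·) atTop (fun n => (1/2:ℝ) * S a n + (1/2) * S b n) :=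
      isBoundedUnder_of ⟨(1/2) * (R + ‖p₀ - a‖) ^ 2 + (1/2) * (R + ‖p₀ - b‖) ^ 2,
        fun n => by linarith [hSub a n, hSub b n]⟩
    have hc2 : IsCoboundedUnder (· ≤ ·) atTop (fun n => (1/2:ℝ) * S a n + (1/2) * S b n) :=
      (isBoundedUnder_of ⟨0, fun n => by linarith [hS0 a n, hS0 b n]⟩ :
        IsBoundedUnder (· ≥ ·) atTop _).isCoboundedUnder_le
    calc φf ((1/2 : ℝ) • (a + b))
        = limsup (fun n => ((1/2) * S a n + (1/2) * S b n) + (-(1/4) * ‖a - b‖ ^ 2)) atTop := by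
          simp only [hφdef]
          congr 1
          exact funext hpt
      _ = limsup (fun n => (1/2:ℝ) * S a n + (1/2) * S b n) atTop + (-(1/4) * ‖a - b‖ ^ 2) :=
          limsup_add_const atTop _ _ hb2 hc2
      _ ≤ ((1/2) * φf a + (1/2) * φf b) + (-(1/4) * ‖a - b‖ ^ 2) := by
          have h8 : limsup (fun n => (1/2:ℝ) * S a n + (1/2) * S b n) atTop
              ≤ limsup (fun n => (1/2:ℝ) * S a n) atTop
                + limsup (fun n => (1/2:ℝ) * S b n) atTop :=
            limsup_add_le (hBlh a) (hBuh a) ((hBlh b).isCoboundedUnder_le) (hBuh b)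
          rw [hhalf a, hhalf b] at h8
          simp only [hφdef]
          linarith
      _ = _ := by ring
  -- the minimizing sequence is Cauchy
  have hkey2 : ∀ j k N : ℕ, N ≤ j → N ≤ k → ‖p j - p k‖ ^ 2 ≤ 4 / (N + 1) := by
    intro j k N hj hk
    have hmid := hpar (p j) (hpC j) (p k) (hpC k)
    have h1 := hdle _ (hmidC (p j) (hpC j) (p k) (hpC k))
    have h2 : (1:ℝ) / (j + 1) ≤ 1 / (N + 1) := by gcongr
    have h3 : (1:ℝ) / (k + 1) ≤ 1 / (N + 1) := by gcongr
    have h4 := hpφ j; have h5 := hpφ k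
    have h6 : 4/((N:ℝ)+1) = 4*(1/((N:ℝ)+1)) := by ring
    linarith
  have hcauchy : CauchySeq p := by
    apply cauchySeq_of_le_tendsto_0 (fun N : ℕ => Real.sqrt (4 / ((N:ℝ) + 1)))
    · intro j k N hj hk
      rw [dist_eq_norm]
      calc ‖p j - p k‖ = Real.sqrt (‖p j - p k‖ ^ 2) := (Real.sqrt_sq (norm_nonneg _)).symm
      _ ≤ Real.sqrt (4 / (N + 1)) := Real.sqrt_le_sqrt (hkey2 j k N hj hk)
    · have h0 : Tendsto (fun N : ℕ => 4 / ((N:ℝ) + 1)) atTop (𝓝 0) := by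
        have h := tendsto_one_div_add_atTop_nhds_zero_nat.const_mul (4:ℝ)
        simpa [mul_one_div, div_eq_mul_inv] using h
      have h1 := (Real.continuous_sqrt.tendsto 0).comp h0
      rw [Real.sqrt_zero] at h1
      exact h1
  obtain ⟨z, hz⟩ := cauchySeq_tendsto_of_complete hcauchy
  have hzC : z ∈ C := hclosed.mem_of_tendsto hz (Eventually.of_forall hpC)
  have hpz0 : Tendsto (fun k => ‖z - p k‖) atTop (𝓝 0) := by
    have h := tendsto_iff_dist_tendsto_zero.mp hz
    have e : (fun k => ‖z - p k‖) = fun k => dist (p k) z := by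
      funext k; rw [dist_eq_norm, norm_sub_rev]
    rw [e]; exact h
  -- z attains the infimum
  have hφzled : φf z ≤ d := by
    have hev : ∀ᶠ k in atTop, φf z
        ≤ (d + 1 / (k + 1)) + (2 * (R + ‖p₀ - z‖ + 1) + 1) * ‖z - p k‖ := by
      filter_upwards [hpz0.eventually_lt_const (by norm_num : (0:ℝ) < 1)] with k hk1
      have h1 := hφlip z (p k)
      have h2 : ‖p₀ - p k‖ ≤ ‖p₀ - z‖ + ‖z - p k‖ := norm_sub_le_norm_sub_add_norm_sub _ _ _
      have h4 := norm_nonneg (z - p k)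
      have h5 := (hpφ k).le
      nlinarith [hR0, norm_nonneg (p₀ - z)]
    have hlim : Tendsto (fun k : ℕ =>
        (d + 1 / ((k:ℝ) + 1)) + (2 * (R + ‖p₀ - z‖ + 1) + 1) * ‖z - p k‖) atTop (𝓝 d) := by
      have l1 : Tendsto (fun k : ℕ => d + 1 / ((k:ℝ) + 1)) atTop (𝓝 (d + 0)) :=
        tendsto_const_nhds.add tendsto_one_div_add_atTop_nhds_zero_nat
      have l2 := hpz0.const_mul (2 * (R + ‖p₀ - z‖ + 1) + 1)
      have l3 := l1.add l2
      simpa using l3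
    exact ge_of_tendsto hlim hev
  have hφz : φf z = d := le_antisymm hφzled (hdle z hzC)
  -- z is a fixed point of T
  have hTzC : T z ∈ C := hT z hzC
  have hK₂0 : (0:ℝ) ≤ M * (2 * (R + ‖p₀ - z‖) + M) := by
    have := norm_nonneg (p₀ - z)
    nlinarith [hM0, hR0]
  have hφTz : φf (T z) ≤ d := by
    have hpt : ∀ n, S (T z) n ≤ S z n + t n * (M * (2 * (R + ‖p₀ - z‖) + M)) := by
      intro n
      have h1 : ‖u n - T z‖ ≤ ‖u n - z‖ + t n * M := by
        have e1 : u n = T (t n • Φ (u n) + (1 - t n) • u n) := by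
          simpa only [hudef] using (hx _ (htm n)).2
        calc ‖u n - T z‖ = ‖T (t n • Φ (u n) + (1 - t n) • u n) - T z‖ := by rw [← e1]
        _ ≤ ‖(t n • Φ (u n) + (1 - t n) • u n) - z‖ := by
            refine hTne _ ?_ _ hzC
            simpa only [hudef] using hyC _ (htm n)
        _ ≤ ‖u n - z‖ + t n * M := by
            rw [show (t n • Φ (u n) + (1 - t n) • u n) - z
                = (u n - z) + t n • (Φ (u n) - u n) from by module]
            refine (norm_add_le _ _).trans ?_
            rw [norm_smul, Real.norm_eq_abs, abs_of_pos (htm n).1]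
            gcongr
            · exact (htm n).1.le
            · simpa only [hudef] using hMb _ (htm n)
      have h2 : ‖u n - z‖ ≤ R + ‖p₀ - z‖ := hub z n
      have h3 := (htm n).1.le; have h4 := (htm n).2.le
      simp only [hSdef]
      nlinarith [mul_self_le_mul_self (norm_nonneg (u n - T z)) h1, hM0,
        norm_nonneg (u n - z), mul_le_mul_of_nonneg_left h2 (mul_nonneg h3 hM0),
        mul_nonneg h3 hM0, sq_nonneg M, sq_nonneg (t n),
        mul_le_mul_of_nonneg_right (mul_le_mul_of_nonneg_left h4 h3) (sq_nonneg M)]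
    have hco : IsCoboundedUnder (· ≤ ·) atTop
        (fun n => t n * (M * (2 * (R + ‖p₀ - z‖) + M))) :=
      (isBoundedUnder_of ⟨0, fun n => mul_nonneg (htm n).1.le hK₂0⟩ :
        IsBoundedUnder (· ≥ ·) atTop _).isCoboundedUnder_le
    have hbt : IsBoundedUnder (· ≤ ·) atTop
        (fun n => t n * (M * (2 * (R + ‖p₀ - z‖) + M))) :=
      isBoundedUnder_of ⟨M * (2 * (R + ‖p₀ - z‖) + M), fun n => by
        nlinarith [(htm n).1.le, (htm n).2.le, hK₂0]⟩
    have hts : Tendsto (fun n => t n * (M * (2 * (R + ‖p₀ - z‖) + M))) atTop (𝓝 0) := by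
      have h := ht0.mul_const (M * (2 * (R + ‖p₀ - z‖) + M))
      simpa using h
    have h7 : φf (T z) ≤ limsup (fun n => S z n + t n * (M * (2 * (R + ‖p₀ - z‖) + M))) atTop := by
      rw [hφdef]
      exact limsup_le_limsup (Eventually.of_forall hpt) (hCo (T z))
        (isBoundedUnder_of ⟨(R + ‖p₀ - z‖) ^ 2 + M * (2 * (R + ‖p₀ - z‖) + M), fun n => by
          have := hSub z n
          nlinarith [(htm n).1.le, (htm n).2.le, hK₂0]⟩)
    have h8 : limsup (fun n => S z n + t n * (M * (2 * (R + ‖p₀ - z‖) + M))) atTop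
        ≤ limsup (S z) atTop + limsup (fun n => t n * (M * (2 * (R + ‖p₀ - z‖) + M))) atTop :=
      limsup_add_le (hBl z) (hBu z) hco hbt
    rw [hts.limsup_eq] at h8
    have h9 : limsup (S z) atTop = d := by rw [← hφz, hφdef]
    linarith
  have hzF : T z = z := by
    have h1 := hdle _ (hmidC z hzC (T z) hTzC)
    have h2 := hpar z hzC (T z) hTzC
    have h3 : ‖z - T z‖ ^ 2 ≤ 0 := by linarith [hdle _ hTzC]
    have h4 : z - T z = 0 := norm_eq_zero.mp (sq_eq_zero_iff.mp (le_antisymm h3 (sq_nonneg _)))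
    exact (sub_eq_zero.mp h4).symm
  -- the inner-product estimate from the asymptotic center property
  have hgbound : ∀ n, |⟪Φ z - z, u n - z⟫| ≤ ‖Φ z - z‖ * (R + ‖p₀ - z‖) := by
    intro n
    refine (abs_real_inner_le_norm _ _).trans ?_
    gcongr
    exact hub z n
  have hA : ∀ δ : ℝ, 0 < δ → ∃ᶠ n in atTop, ⟪Φ z - z, u n - z⟫ < δ := by
    intro δ hδ
    set ε := min 1 (δ / (‖Φ z - z‖ ^ 2 + 1)) with hε
    have hεpos : 0 < ε := lt_min one_pos (by positivity)
    have hε1 : ε ≤ 1 := min_le_left _ _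
    have hεw : ε * (‖Φ z - z‖ ^ 2 + 1) ≤ δ := by
      have h1 : ε ≤ δ / (‖Φ z - z‖ ^ 2 + 1) := min_le_right _ _
      rwa [le_div_iff₀ (by positivity)] at h1
    clear_value ε
    have hzεC : z + ε • (Φ z - z) ∈ C := by
      have h := hconv hzC (hΦ z hzC) (by linarith : (0:ℝ) ≤ 1 - ε) hεpos.le (by ring)
      convert h using 1
      module
    have hpt : ∀ n, S (z + ε • (Φ z - z)) n
        = (S z n - 2 * ε * ⟪Φ z - z, u n - z⟫) + ε ^ 2 * ‖Φ z - z‖ ^ 2 := by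
      intro n
      have e1 : u n - (z + ε • (Φ z - z)) = (u n - z) - ε • (Φ z - z) := by module
      simp only [hSdef]
      rw [e1, norm_sub_sq_real, real_inner_smul_right, real_inner_comm (u n - z) (Φ z - z),
        norm_smul, Real.norm_eq_abs, abs_of_pos hεpos]
      ring
    have hbfu : IsBoundedUnder (· ≤ ·) atTop
        (fun n => S z n - 2 * ε * ⟪Φ z - z, u n - z⟫) := by
      refine isBoundedUnder_of ⟨(R + ‖p₀ - z‖) ^ 2
        + 2 * ε * (‖Φ z - z‖ * (R + ‖p₀ - z‖)), fun n => ?_⟩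
      have hgl := (abs_le.mp (hgbound n)).1
      have h := mul_nonneg hεpos.le
        (by linarith : (0:ℝ) ≤ ⟪Φ z - z, u n - z⟫ + ‖Φ z - z‖ * (R + ‖p₀ - z‖))
      have h2 := hSub z n
      nlinarith
    have hbfl : IsBoundedUnder (· ≥ ·) atTop
        (fun n => S z n - 2 * ε * ⟪Φ z - z, u n - z⟫) := by
      refine isBoundedUnder_of ⟨-(2 * ε * (‖Φ z - z‖ * (R + ‖p₀ - z‖))), fun n => ?_⟩
      have hgu := (abs_le.mp (hgbound n)).2
      have h := mul_nonneg hεpos.le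
        (by linarith : (0:ℝ) ≤ ‖Φ z - z‖ * (R + ‖p₀ - z‖) - ⟪Φ z - z, u n - z⟫)
      have h2 := hS0 z n
      nlinarith
    have hbfco : IsCoboundedUnder (· ≤ ·) atTop
        (fun n => S z n - 2 * ε * ⟪Φ z - z, u n - z⟫) := hbfl.isCoboundedUnder_le
    have hd1 : d ≤ limsup (fun n => S z n - 2 * ε * ⟪Φ z - z, u n - z⟫) atTop
        + ε ^ 2 * ‖Φ z - z‖ ^ 2 := by
      have h1 := hdle _ hzεC
      have h2 : φf (z + ε • (Φ z - z))
          = limsup (fun n => S z n - 2 * ε * ⟪Φ z - z, u n - z⟫) atTop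
            + ε ^ 2 * ‖Φ z - z‖ ^ 2 := by
        have e : S (z + ε • (Φ z - z))
            = fun n => (S z n - 2 * ε * ⟪Φ z - z, u n - z⟫) + ε ^ 2 * ‖Φ z - z‖ ^ 2 :=
          funext hpt
        simp only [hφdef, e]
        exact limsup_add_const atTop _ _ hbfu hbfco
      linarith
    have hfreq1 : ∃ᶠ n in atTop,
        d - ε ^ 2 * ‖Φ z - z‖ ^ 2 - ε * δ / 4 < S z n - 2 * ε * ⟪Φ z - z, u n - z⟫ := by
      refine frequently_lt_of_lt_limsup hbfco ?_
      have : 0 < ε * δ / 4 := by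
        have := mul_pos hεpos hδ
        linarith
      linarith
    have hev1 : ∀ᶠ n in atTop, S z n < d + ε * δ / 4 := by
      refine eventually_lt_of_limsup_lt ?_ (hBu z)
      have h9 : limsup (S z) atTop = d := by rw [← hφz, hφdef]
      have h10 : 0 < ε * δ / 4 := by
        have := mul_pos hεpos hδ
        linarith
      linarith
    refine (hfreq1.and_eventually hev1).mono ?_
    rintro n ⟨hn1, hn2⟩
    have hstep : (2 * ε) * ⟪Φ z - z, u n - z⟫ < (2 * ε) * δ := by
      nlinarith [mul_pos hεpos hδ, mul_le_mul_of_nonneg_left hεw hεpos.le,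
        mul_pos hεpos hεpos]
    exact lt_of_mul_lt_mul_left hstep (by linarith)
  -- the contraction estimate
  have hg2 : ∀ n, (1 - ρ) * S z n ≤ ⟪Φ z - z, u n - z⟫ + t n * M ^ 2 / 2 := by
    intro n
    have hk : 2 * ⟪u n - Φ (u n), u n - z⟫ ≤ t n * M ^ 2 := by
      simpa only [hudef] using hkey (t n) (htm n) z hzC hzF
    have e1 : ⟪u n - Φ (u n), u n - z⟫
        = ‖u n - z‖ ^ 2 - ⟪Φ (u n) - Φ z, u n - z⟫ - ⟪Φ z - z, u n - z⟫ := by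
      rw [show u n - Φ (u n) = (u n - z) - ((Φ (u n) - Φ z) + (Φ z - z)) from by module,
        inner_sub_left, inner_add_left, real_inner_self_eq_norm_sq]
      ring
    have e2 : ⟪Φ (u n) - Φ z, u n - z⟫ ≤ ρ * ‖u n - z‖ ^ 2 := by
      have h1 := real_inner_le_norm (Φ (u n) - Φ z) (u n - z)
      have h2 := hΦc _ (huC n) _ hzC
      nlinarith [norm_nonneg (u n - z), norm_nonneg (Φ (u n) - Φ z)]
    rw [e1] at hk
    simp only [hSdef]
    linarith
  have hfreqS : ∀ k : ℕ, ∃ᶠ n in atTop, S z n < 1 / (k + 1) := by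
    intro k
    have hδp : (0:ℝ) < (1 - ρ) / (2 * ((k:ℝ) + 1)) := div_pos h1ρ (by positivity)
    have h1 := hA _ hδp
    have h2 : ∀ᶠ n in atTop, t n * M ^ 2 / 2 < (1 - ρ) / (2 * (k + 1)) := by
      have hl : Tendsto (fun n => t n * M ^ 2 / 2) atTop (𝓝 0) := by
        have h := (ht0.mul_const (M ^ 2)).div_const 2
        simpa using h
      exact hl.eventually_lt_const hδp
    refine (h1.and_eventually h2).mono ?_
    rintro n ⟨ha, hb⟩
    have h3 := hg2 n
    have h4 : (1 - ρ) * S z n < (1 - ρ) * (1 / (k + 1)) := by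
      have he : (1 - ρ) / (2 * ((k:ℝ) + 1)) + (1 - ρ) / (2 * ((k:ℝ) + 1))
          = (1 - ρ) * (1 / ((k:ℝ) + 1)) := by
        field_simp
        ring
      linarith
    exact lt_of_mul_lt_mul_left h4 h1ρ.le
  obtain ⟨ms, hmsmono, hms⟩ := extraction_forall_of_frequently hfreqS
  have hSz0 : Tendsto (fun k => S z (ms k)) atTop (𝓝 0) :=
    squeeze_zero (fun k => hS0 z (ms k)) (fun k => (hms k).le)
      tendsto_one_div_add_atTop_nhds_zero_nat
  have humz : Tendsto (fun k => u (ms k)) atTop (𝓝 z) := by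
    rw [tendsto_iff_dist_tendsto_zero]
    have h1 : (fun k => dist (u (ms k)) z) = fun k => Real.sqrt (S z (ms k)) := by
      funext k
      rw [dist_eq_norm]
      simp only [hSdef]
      rw [Real.sqrt_sq (norm_nonneg _)]
    rw [h1]
    have h2 := (Real.continuous_sqrt.tendsto 0).comp hSz0
    simpa [Function.comp_def] using h2
  -- z satisfies the variational inequality
  have hVI : ∀ yp ∈ C, T yp = yp → ⟪Φ z - z, yp - z⟫ ≤ 0 := by
    intro yp hypC hypF
    have hle : ∀ k, 2 * ⟪u (ms k) - Φ (u (ms k)), u (ms k) - yp⟫ ≤ t (ms k) * M ^ 2 := by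
      intro k
      simpa only [hudef] using hkey (t (ms k)) (htm (ms k)) yp hypC hypF
    have hΦu : Tendsto (fun k => Φ (u (ms k))) atTop (𝓝 (Φ z)) := by
      rw [tendsto_iff_dist_tendsto_zero]
      refine squeeze_zero (g := fun k => ρ * dist (u (ms k)) z)
        (fun k => dist_nonneg) (fun k => ?_) ?_
      · simp only [dist_eq_norm]
        exact hΦc _ (huC (ms k)) _ hzC
      · have h := (tendsto_iff_dist_tendsto_zero.mp humz).const_mul ρ
        simpa using h
    have hLHS : Tendsto (fun k => 2 * ⟪u (ms k) - Φ (u (ms k)), u (ms k) - yp⟫) atTop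
        (𝓝 (2 * ⟪z - Φ z, z - yp⟫)) := by
      have h1 : Tendsto (fun k => u (ms k) - Φ (u (ms k))) atTop (𝓝 (z - Φ z)) :=
        humz.sub hΦu
      have h2 : Tendsto (fun k => u (ms k) - yp) atTop (𝓝 (z - yp)) :=
        humz.sub tendsto_const_nhds
      exact (h1.inner h2).const_mul 2
    have hRHS : Tendsto (fun k => t (ms k) * M ^ 2) atTop (𝓝 0) := by
      have h1 : Tendsto (fun k => t (ms k)) atTop (𝓝 0) :=
        ht0.comp hmsmono.tendsto_atTop
      have h := h1.mul_const (M ^ 2)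
      simpa using h
    have h3 : 2 * ⟪z - Φ z, z - yp⟫ ≤ 0 := le_of_tendsto_of_tendsto' hLHS hRHS hle
    have h4 : ⟪Φ z - z, yp - z⟫ = ⟪z - Φ z, z - yp⟫ := by
      rw [show Φ z - z = -(z - Φ z) from (neg_sub _ _).symm,
        show yp - z = -(z - yp) from (neg_sub _ _).symm, inner_neg_neg]
    rw [h4]
    linarith
  exact ⟨z, hzC, hzF, hVI, ms, by simpa only [hudef] using humz⟩


set_option maxHeartbeats 1000000 in
theorem stmt_9
    {H : Type*} [NormedAddCommGroup H] [InnerProductSpace ℝ H] [CompleteSpace H]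
    (C : Set H) (hC : C.Nonempty) (hclosed : IsClosed C) (hconv : Convex ℝ C)
    (T Φ : H → H) (hT : ∀ x ∈ C, T x ∈ C) (hΦ : ∀ x ∈ C, Φ x ∈ C)
    (hTne : ∀ x ∈ C, ∀ y ∈ C, ‖T x - T y‖ ≤ ‖x - y‖)
    (hF : ∃ x ∈ C, T x = x)
    (ρ : ℝ) (hρ : ρ ∈ Set.Ioo (0 : ℝ) 1)
    (hΦc : ∀ x ∈ C, ∀ y ∈ C, ‖Φ x - Φ y‖ ≤ ρ * ‖x - y‖)
    (x : ℝ → H)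
    (hx : ∀ t ∈ Set.Ioo (0 : ℝ) 1,
      x t ∈ C ∧ x t = T (t • Φ (x t) + (1 - t) • x t)) :
    ∃ q : H, (q ∈ C ∧ T q = q ∧ ∀ y ∈ C, T y = y → ⟪Φ q - q, y - q⟫ ≤ 0) ∧
      (∀ q' : H, (q' ∈ C ∧ T q' = q' ∧ ∀ y ∈ C, T y = y → ⟪Φ q' - q', y - q'⟫ ≤ 0)
        → q' = q) ∧
      Tendsto x (nhdsWithin 0 (Set.Ioo (0 : ℝ) 1)) (nhds q) := by
  obtain ⟨hρ0, hρ1⟩ := hρ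
  obtain ⟨p₀, hp₀C, hp₀F⟩ := hF
  -- uniqueness of the variational-inequality point
  have huniq : ∀ q q' : H,
      (q ∈ C ∧ T q = q ∧ ∀ y ∈ C, T y = y → ⟪Φ q - q, y - q⟫ ≤ 0) →
      (q' ∈ C ∧ T q' = q' ∧ ∀ y ∈ C, T y = y → ⟪Φ q' - q', y - q'⟫ ≤ 0) →
      q' = q := by
    intro q q' ⟨hqC, hqF, hqVI⟩ ⟨hq'C, hq'F, hq'VI⟩
    have h1 : ⟪Φ q - q, q' - q⟫ ≤ 0 := hqVI q' hq'C hq'F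
    have h2 : ⟪Φ q' - q', q - q'⟫ ≤ 0 := hq'VI q hqC hqF
    set v := q' - q with hv
    have h2' : ⟪Φ q' - q', v⟫ ≥ 0 := by
      have : q - q' = -v := by rw [hv]; abel
      rw [this, inner_neg_right] at h2; linarith
    have e1 : ⟪Φ q - q, v⟫ = ⟪Φ q, v⟫ - ⟪q, v⟫ := inner_sub_left _ _ _
    have e2 : ⟪Φ q' - q', v⟫ = ⟪Φ q', v⟫ - ⟪q', v⟫ := inner_sub_left _ _ _
    have e3 : ⟪Φ q' - Φ q, v⟫ = ⟪Φ q', v⟫ - ⟪Φ q, v⟫ := inner_sub_left _ _ _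
    have e4 : ⟪q' - q, v⟫ = ⟪q', v⟫ - ⟪q, v⟫ := inner_sub_left _ _ _
    have e5 : ⟪q' - q, v⟫ = ‖v‖ ^ 2 := by rw [hv]; exact real_inner_self_eq_norm_sq v
    have hcs : ⟪Φ q' - Φ q, v⟫ ≤ ‖Φ q' - Φ q‖ * ‖v‖ := real_inner_le_norm _ _
    have hc : ‖Φ q' - Φ q‖ ≤ ρ * ‖q' - q‖ := hΦc _ hq'C _ hqC
    have hv2 : ‖v‖ ^ 2 ≤ ρ * ‖v‖ * ‖v‖ := by nlinarith [norm_nonneg v]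
    have hv0 : ‖v‖ ^ 2 = 0 := le_antisymm (by nlinarith [norm_nonneg v]) (sq_nonneg _)
    have : v = 0 := by
      have := sq_eq_zero_iff.mp hv0
      exact norm_eq_zero.mp this
    rw [hv] at this; exact sub_eq_zero.mp this
  -- obtain q from a specific sequence
  have htseq : ∀ n : ℕ, (1:ℝ) / (n + 2) ∈ Set.Ioo (0:ℝ) 1 := by
    intro n
    constructor
    · positivity
    · rw [div_lt_one (by positivity)]
      linarith [Nat.cast_nonneg (α := ℝ) n]
  have htten : Tendsto (fun n : ℕ => (1:ℝ) / (n + 2)) atTop (𝓝 0) := by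
    refine squeeze_zero (fun n => by positivity) (fun n => ?_) tendsto_one_div_add_atTop_nhds_zero_nat
    gcongr
    norm_num
  obtain ⟨q, hqC, hqF, hqVI, _⟩ := browder_seq C hclosed hconv T Φ hT hΦ hTne p₀ hp₀C hp₀F
    ρ ⟨hρ0, hρ1⟩ hΦc x hx _ htseq htten
  refine ⟨q, ⟨hqC, hqF, hqVI⟩, fun q' hq' => huniq q q' ⟨hqC, hqF, hqVI⟩ hq', ?_⟩
  -- convergence via subsequences
  apply tendsto_of_subseq_tendsto
  intro ns hns
  have hmem : ∀ᶠ n in atTop, ns n ∈ Set.Ioo (0:ℝ) 1 := hns.eventually eventually_mem_nhdsWithin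
  obtain ⟨N, hN⟩ := eventually_atTop.mp hmem
  have hns0 : Tendsto ns atTop (𝓝 0) := hns.mono_right nhdsWithin_le_nhds
  have hns0' : Tendsto (fun n => ns (n + N)) atTop (𝓝 0) :=
    hns0.comp (tendsto_add_atTop_nat N)
  obtain ⟨z, hzC, hzF, hzVI, ms, hms⟩ := browder_seq C hclosed hconv T Φ hT hΦ hTne p₀ hp₀C hp₀F
    ρ ⟨hρ0, hρ1⟩ hΦc x hx (fun n => ns (n + N)) (fun n => hN _ (Nat.le_add_left _ _)) hns0'
  have hzq : z = q := huniq q z ⟨hqC, hqF, hqVI⟩ ⟨hzC, hzF, hzVI⟩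
  exact ⟨fun k => ms k + N, by rw [← hzq]; exact hms⟩
end

section
/- Let X be a normed space, C ⊆ X a nonempty convex subset, T : C → C nonexpansive, Φ : C → C a ρ-contraction, and {α_n}_{n≥0} a sequence in (0,1) such that lim α_n = 0 with rate of convergence φ, ∑ α_n diverges with rate of divergence θ, and ∑ |α_{n+1} − α_n| converges with Cauchy modulus β. Let x_0 ∈ C and x_{n+1} = T(α_n Φ(x_n) + (1 − α_n)x_n), and assume {x_n} is bounded, with M ≥ ‖Φ(x_0) − x_0‖ and D > 0 such that ‖x_n − x_m‖ ≤ D for all m, n. Then lim_{n→∞} ‖x_n − Tx_n‖ = 0 and, moreover, for all ε ∈ (0,2), ‖x_n − Tx_n‖ < ε for all n ≥ Ψ, where Ψ = max{ 1 + θ(⌈1/(1 − ρ)⌉ · (β(ε/(4P)) + 2 + ⌈ln(4D/ε)⌉)), 1 + φ(ε/(2P)) } and P = (1 + ρ)D + M. -/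
open Filter

set_option maxHeartbeats 1000000 in
theorem stmt_12
    {X : Type*} [NormedAddCommGroup X] [NormedSpace ℝ X]
    (C : Set X) (hC : C.Nonempty) (hconv : Convex ℝ C)
    (T Φ : X → X) (hT : ∀ x ∈ C, T x ∈ C) (hΦ : ∀ x ∈ C, Φ x ∈ C)
    (hTne : ∀ x ∈ C, ∀ y ∈ C, ‖T x - T y‖ ≤ ‖x - y‖)
    (ρ : ℝ) (hρ : ρ ∈ Set.Ioo (0 : ℝ) 1)
    (hΦc : ∀ x ∈ C, ∀ y ∈ C, ‖Φ x - Φ y‖ ≤ ρ * ‖x - y‖)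
    (α : ℕ → ℝ) (hα : ∀ n, α n ∈ Set.Ioo (0 : ℝ) 1)
    (φ : ℝ → ℕ) (hφ : ∀ e : ℝ, 0 < e → ∀ n ≥ φ e, |α n| < e)
    (θ : ℕ → ℕ) (hθ : ∀ n : ℕ, (n : ℝ) ≤ ∑ i ∈ Finset.range (θ n + 1), α i)
    (β : ℝ → ℕ)
    (hβ : ∀ e : ℝ, 0 < e → ∀ n : ℕ,
      abs ((∑ i ∈ Finset.range (β e + n + 1), |α (i + 1) - α i|) -
          ∑ i ∈ Finset.range (β e + 1), |α (i + 1) - α i|) < e)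
    (x : ℕ → X) (hx0 : x 0 ∈ C) (hxC : ∀ n, x n ∈ C)
    (hrec : ∀ n, x (n + 1) = T (α n • Φ (x n) + (1 - α n) • x n))
    (M : ℝ) (hM : ‖Φ (x 0) - x 0‖ ≤ M) (hM0 : 0 ≤ M)
    (D : ℝ) (hD : 0 < D) (hDx : ∀ m n : ℕ, ‖x n - x m‖ ≤ D) :
    Tendsto (fun n => ‖x n - T (x n)‖) atTop (nhds 0) ∧
      ∀ e ∈ Set.Ioo (0 : ℝ) 2,
        ∀ n ≥ max
          (1 + θ (⌈1 / (1 - ρ)⌉₊ *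
            (β (e / (4 * ((1 + ρ) * D + M))) + 2 + ⌈Real.log (4 * D / e)⌉₊)))
          (1 + φ (e / (2 * ((1 + ρ) * D + M)))),
        ‖x n - T (x n)‖ < e := by
  obtain ⟨hρ0, hρ1⟩ := hρ
  set P : ℝ := (1 + ρ) * D + M with hPdef
  have hP0 : 0 < P := by nlinarith [mul_pos (by linarith : (0:ℝ) < 1 + ρ) hD]
  -- bound on ‖Φ (x n) - x n‖
  have hPb : ∀ n, ‖Φ (x n) - x n‖ ≤ P := by
    intro n
    have h1 : Φ (x n) - x n = (Φ (x n) - Φ (x 0)) + (Φ (x 0) - x 0) + (x 0 - x n) := by abel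
    have h2 : ‖Φ (x n) - Φ (x 0)‖ ≤ ρ * ‖x n - x 0‖ := hΦc _ (hxC n) _ hx0
    have h3 : ‖x n - x 0‖ ≤ D := hDx 0 n
    have h4 : ‖x 0 - x n‖ ≤ D := hDx n 0
    calc ‖Φ (x n) - x n‖ ≤ ‖Φ (x n) - Φ (x 0)‖ + ‖Φ (x 0) - x 0‖ + ‖x 0 - x n‖ := by
          rw [h1]; exact norm_add₃_le
      _ ≤ ρ * D + M + D := by nlinarith
      _ = P := by rw [hPdef]; ring
  -- convex combinations stay in C
  have hyC : ∀ n, α n • Φ (x n) + (1 - α n) • x n ∈ C := fun n =>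
    hconv (hΦ _ (hxC n)) (hxC n) (hα n).1.le (by linarith [(hα n).2]) (by ring)
  -- recurrence inequality
  have hrec2 : ∀ n, ‖x (n+1+1) - x (n+1)‖ ≤
      (1 - (1 - ρ) * α (n+1)) * ‖x (n+1) - x n‖ + |α (n+1) - α n| * P := by
    intro n
    have step1 : ‖x (n+1+1) - x (n+1)‖ ≤
        ‖(α (n+1) • Φ (x (n+1)) + (1 - α (n+1)) • x (n+1)) -
          (α n • Φ (x n) + (1 - α n) • x n)‖ := by
      have h := hTne _ (hyC (n+1)) _ (hyC n)
      rwa [← hrec (n+1), ← hrec n] at h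
    have id1 : (α (n+1) • Φ (x (n+1)) + (1 - α (n+1)) • x (n+1)) -
          (α n • Φ (x n) + (1 - α n) • x n)
        = α (n+1) • (Φ (x (n+1)) - Φ (x n)) + (1 - α (n+1)) • (x (n+1) - x n) +
          (α (n+1) - α n) • (Φ (x n) - x n) := by module
    have t1 : ‖α (n+1) • (Φ (x (n+1)) - Φ (x n))‖ ≤ α (n+1) * (ρ * ‖x (n+1) - x n‖) := by
      rw [norm_smul, Real.norm_eq_abs, abs_of_pos (hα (n+1)).1]
      exact mul_le_mul_of_nonneg_left (hΦc _ (hxC (n+1)) _ (hxC n)) (hα (n+1)).1.le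
    have t2 : ‖(1 - α (n+1)) • (x (n+1) - x n)‖ = (1 - α (n+1)) * ‖x (n+1) - x n‖ := by
      rw [norm_smul, Real.norm_eq_abs, abs_of_pos (by linarith [(hα (n+1)).2])]
    have t3 : ‖(α (n+1) - α n) • (Φ (x n) - x n)‖ ≤ |α (n+1) - α n| * P := by
      rw [norm_smul, Real.norm_eq_abs]
      exact mul_le_mul_of_nonneg_left (hPb n) (abs_nonneg _)
    have tri : ‖(α (n+1) • Φ (x (n+1)) + (1 - α (n+1)) • x (n+1)) -
          (α n • Φ (x n) + (1 - α n) • x n)‖ ≤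
        ‖α (n+1) • (Φ (x (n+1)) - Φ (x n))‖ + ‖(1 - α (n+1)) • (x (n+1) - x n)‖ +
          ‖(α (n+1) - α n) • (Φ (x n) - x n)‖ := by
      rw [id1]; exact norm_add₃_le
    have hring : (1 - (1 - ρ) * α (n+1)) * ‖x (n+1) - x n‖ =
        α (n+1) * (ρ * ‖x (n+1) - x n‖) + (1 - α (n+1)) * ‖x (n+1) - x n‖ := by ring
    linarith
  -- unrolled bound
  have key : ∀ m k : ℕ, ‖x (m+1+k+1) - x (m+1+k)‖ ≤
      D * (∏ j ∈ Finset.range k, (1 - (1 - ρ) * α (m+1+j+1))) +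
      P * ∑ j ∈ Finset.range k, |α (m+1+j+1) - α (m+1+j)| := by
    intro m k
    induction k with
    | zero => simpa using hDx (m+1) (m+1+1)
    | succ k ih =>
      show ‖x (m+1+k+1+1) - x (m+1+k+1)‖ ≤
        D * (∏ j ∈ Finset.range (k+1), (1 - (1 - ρ) * α (m+1+j+1))) +
        P * ∑ j ∈ Finset.range (k+1), |α (m+1+j+1) - α (m+1+j)|
      rw [Finset.prod_range_succ, Finset.sum_range_succ]
      have h1 := hrec2 (m+1+k)
      have hSnn : 0 ≤ ∑ j ∈ Finset.range k, |α (m+1+j+1) - α (m+1+j)| :=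
        Finset.sum_nonneg fun j _ => abs_nonneg _
      have hc1 : 0 ≤ 1 - (1 - ρ) * α (m+1+k+1) := by
        nlinarith [(hα (m+1+k+1)).1, (hα (m+1+k+1)).2]
      have hc0 : 0 ≤ (1 - ρ) * α (m+1+k+1) := by nlinarith [(hα (m+1+k+1)).1]
      have h2 := mul_le_mul_of_nonneg_left ih hc1
      have expand : (1 - (1 - ρ) * α (m+1+k+1)) *
            (D * (∏ j ∈ Finset.range k, (1 - (1 - ρ) * α (m+1+j+1))) +
              P * ∑ j ∈ Finset.range k, |α (m+1+j+1) - α (m+1+j)|) +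
            |α (m+1+k+1) - α (m+1+k)| * P =
          D * ((∏ j ∈ Finset.range k, (1 - (1 - ρ) * α (m+1+j+1))) *
              (1 - (1 - ρ) * α (m+1+k+1))) +
            P * ((∑ j ∈ Finset.range k, |α (m+1+j+1) - α (m+1+j)|) +
              |α (m+1+k+1) - α (m+1+k)|) -
            ((1 - ρ) * α (m+1+k+1)) *
              (P * ∑ j ∈ Finset.range k, |α (m+1+j+1) - α (m+1+j)|) := by ring
      have hnn : 0 ≤ ((1 - ρ) * α (m+1+k+1)) *
          (P * ∑ j ∈ Finset.range k, |α (m+1+j+1) - α (m+1+j)|) :=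
        mul_nonneg hc0 (mul_nonneg hP0.le hSnn)
      linarith
  -- main quantitative statement
  have main : ∀ e ∈ Set.Ioo (0:ℝ) 2,
      ∀ n ≥ max
        (1 + θ (⌈1 / (1 - ρ)⌉₊ *
          (β (e / (4 * P)) + 2 + ⌈Real.log (4 * D / e)⌉₊)))
        (1 + φ (e / (2 * P))),
      ‖x n - T (x n)‖ < e := by
    rintro e ⟨he0, he2⟩ n hn
    set m := β (e / (4 * P)) with hm
    set L := ⌈Real.log (4 * D / e)⌉₊ with hL
    set N := ⌈1 / (1 - ρ)⌉₊ with hN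
    set K := N * (m + 2 + L) with hK
    have hn1 : 1 + θ K ≤ n := le_trans (le_max_left _ _) hn
    have hn2 : 1 + φ (e / (2 * P)) ≤ n := le_trans (le_max_right _ _) hn
    have hNρ : (1:ℝ) ≤ (1 - ρ) * N := by
      have h := Nat.le_ceil (1 / (1 - ρ))
      rw [div_le_iff₀ (by linarith : (0:ℝ) < 1 - ρ)] at h
      calc (1:ℝ) ≤ (N:ℝ) * (1 - ρ) := h
        _ = (1 - ρ) * N := by ring
    have hNpos : 1 ≤ N := by
      rw [hN]; exact Nat.one_le_ceil_iff.mpr (div_pos one_pos (by linarith))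
    have hKm : m + 2 + L ≤ K := Nat.le_mul_of_pos_left _ hNpos
    -- θ K ≥ m + 1
    have hθK : m + 1 ≤ θ K := by
      have h1 : (K:ℝ) ≤ ∑ i ∈ Finset.range (θ K + 1), α i := hθ K
      have h2 : ∑ i ∈ Finset.range (θ K + 1), α i ≤ (θ K + 1 : ℕ) := by
        calc ∑ i ∈ Finset.range (θ K + 1), α i ≤ ∑ i ∈ Finset.range (θ K + 1), (1:ℝ) :=
              Finset.sum_le_sum fun i _ => (hα i).2.le
          _ = ((θ K + 1 : ℕ) : ℝ) := by simp
      have h3 : K ≤ θ K + 1 := by exact_mod_cast h1.trans h2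
      omega
    obtain ⟨k, rfl⟩ : ∃ k, n = m + 1 + k := ⟨n - (m+1), by omega⟩
    -- tail sum bound
    have hTsum : (∑ j ∈ Finset.range k, |α (m+1+j+1) - α (m+1+j)|) < e / (4 * P) := by
      have hid : (∑ i ∈ Finset.range (m + k + 1), |α (i+1) - α i|) -
          (∑ i ∈ Finset.range (m + 1), |α (i+1) - α i|) =
          ∑ j ∈ Finset.range k, |α (m+1+j+1) - α (m+1+j)| := by
        rw [← Finset.sum_Ico_eq_sub _ (by omega : m + 1 ≤ m + k + 1),
          Finset.sum_Ico_eq_sum_range, show m + k + 1 - (m+1) = k from by omega]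
      have hb := hβ (e / (4 * P)) (by positivity) k
      rw [hid] at hb
      exact lt_of_le_of_lt (le_abs_self _) hb
    -- product bound
    have hprod : (∏ j ∈ Finset.range k, (1 - (1 - ρ) * α (m+1+j+1))) ≤
        Real.exp (-((1 - ρ) * ∑ j ∈ Finset.range k, α (m+1+j+1))) := by
      have h1 : (∏ j ∈ Finset.range k, (1 - (1 - ρ) * α (m+1+j+1))) ≤
          ∏ j ∈ Finset.range k, Real.exp (-((1 - ρ) * α (m+1+j+1))) := by
        refine Finset.prod_le_prod (fun j _ => ?_) (fun j _ => ?_)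
        · nlinarith [(hα (m+1+j+1)).1, (hα (m+1+j+1)).2]
        · linarith [Real.add_one_le_exp (-((1 - ρ) * α (m+1+j+1)))]
      rw [← Real.exp_sum] at h1
      have h2 : (∑ j ∈ Finset.range k, -((1 - ρ) * α (m+1+j+1))) =
          -((1 - ρ) * ∑ j ∈ Finset.range k, α (m+1+j+1)) := by
        rw [Finset.sum_neg_distrib, Finset.mul_sum]
      rwa [h2] at h1
    -- lower bound on the α-sum
    have hSα : (K:ℝ) - (m + 2) ≤ ∑ j ∈ Finset.range k, α (m+1+j+1) := by
      have hid : (∑ i ∈ Finset.range (m + 2 + k), α i) -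
          (∑ i ∈ Finset.range (m + 2), α i) = ∑ j ∈ Finset.range k, α (m+1+j+1) := by
        rw [← Finset.sum_Ico_eq_sub _ (by omega : m + 2 ≤ m + 2 + k),
          Finset.sum_Ico_eq_sum_range, show m + 2 + k - (m+2) = k from by omega]
        exact Finset.sum_congr rfl fun j _ => by congr 1; omega
      have h2 : (K:ℝ) ≤ ∑ i ∈ Finset.range (θ K + 1), α i := hθ K
      have h3 : ∑ i ∈ Finset.range (θ K + 1), α i ≤ ∑ i ∈ Finset.range (m + 2 + k), α i :=
        Finset.sum_le_sum_of_subset_of_nonneg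
          (Finset.range_subset_range.mpr (by omega)) (fun i _ _ => (hα i).1.le)
      have h4 : ∑ i ∈ Finset.range (m + 2), α i ≤ ((m:ℝ) + 2) := by
        calc ∑ i ∈ Finset.range (m + 2), α i ≤ ∑ i ∈ Finset.range (m + 2), (1:ℝ) :=
              Finset.sum_le_sum fun i _ => (hα i).2.le
          _ = ((m:ℝ) + 2) := by simp
      linarith [hid ▸ (by linarith : (K:ℝ) - (m + 2) ≤
        (∑ i ∈ Finset.range (m + 2 + k), α i) - ∑ i ∈ Finset.range (m + 2), α i)]
    -- log bound
    have hlog : Real.log (4 * D / e) ≤ (1 - ρ) * ((K:ℝ) - (m + 2)) := by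
      have h1 : Real.log (4 * D / e) ≤ (L:ℝ) := Nat.le_ceil _
      have h2 : (K:ℝ) = (N:ℝ) * ((m:ℝ) + 2 + L) := by rw [hK]; push_cast; ring
      nlinarith [hNρ, (by positivity : (0:ℝ) ≤ (m:ℝ) + 2 + L), (Nat.cast_nonneg L : (0:ℝ) ≤ L),
        (by linarith : (0:ℝ) < 1 - ρ), (Nat.cast_nonneg m : (0:ℝ) ≤ m)]
    have hexp : Real.exp (-((1 - ρ) * ∑ j ∈ Finset.range k, α (m+1+j+1))) ≤ e / (4 * D) := by
      have h1 : Real.log (4 * D / e) ≤ (1 - ρ) * ∑ j ∈ Finset.range k, α (m+1+j+1) := by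
        have := mul_le_mul_of_nonneg_left hSα (by linarith : (0:ℝ) ≤ 1 - ρ)
        linarith
      calc Real.exp (-((1 - ρ) * ∑ j ∈ Finset.range k, α (m+1+j+1))) ≤
            Real.exp (-(Real.log (4 * D / e))) := by
            apply Real.exp_le_exp.mpr; linarith
        _ = e / (4 * D) := by
            rw [Real.exp_neg, Real.exp_log (by positivity), inv_div]
    -- combine: ‖x (n+1) - x n‖ < e/2
    have han : ‖x (m+1+k+1) - x (m+1+k)‖ < e / 2 := by
      have h1 := key m k
      have hprodnn : (0:ℝ) ≤ ∏ j ∈ Finset.range k, (1 - (1 - ρ) * α (m+1+j+1)) :=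
        Finset.prod_nonneg fun j _ => by nlinarith [(hα (m+1+j+1)).1, (hα (m+1+j+1)).2]
      have h2 : D * (∏ j ∈ Finset.range k, (1 - (1 - ρ) * α (m+1+j+1))) ≤ e / 4 := by
        calc D * (∏ j ∈ Finset.range k, (1 - (1 - ρ) * α (m+1+j+1))) ≤
              D * (e / (4 * D)) := by
              apply mul_le_mul_of_nonneg_left _ hD.le
              exact hprod.trans hexp
          _ = e / 4 := by field_simp
      have h3 : P * (∑ j ∈ Finset.range k, |α (m+1+j+1) - α (m+1+j)|) < e / 4 := by
        calc P * (∑ j ∈ Finset.range k, |α (m+1+j+1) - α (m+1+j)|) <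
              P * (e / (4 * P)) := by exact mul_lt_mul_of_pos_left hTsum hP0
          _ = e / 4 := by field_simp
      calc ‖x (m+1+k+1) - x (m+1+k)‖ ≤
            D * (∏ j ∈ Finset.range k, (1 - (1 - ρ) * α (m+1+j+1))) +
            P * ∑ j ∈ Finset.range k, |α (m+1+j+1) - α (m+1+j)| := h1
        _ < e / 4 + e / 4 := add_lt_add_of_le_of_lt h2 h3
        _ = e / 2 := by ring
    -- final
    have hαn : α (m+1+k) * P < e / 2 := by
      have h1 : |α (m+1+k)| < e / (2 * P) := hφ _ (by positivity) _ (by omega)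
      have h2 : α (m+1+k) < e / (2 * P) := (abs_lt.mp h1).2
      calc α (m+1+k) * P < (e / (2 * P)) * P :=
            mul_lt_mul_of_pos_right h2 hP0
        _ = e / 2 := by field_simp
    have h2 : ‖x (m+1+k+1) - T (x (m+1+k))‖ ≤ α (m+1+k) * P := by
      have e1 : x (m+1+k+1) = T (α (m+1+k) • Φ (x (m+1+k)) + (1 - α (m+1+k)) • x (m+1+k)) :=
        hrec (m+1+k)
      have s1 : ‖x (m+1+k+1) - T (x (m+1+k))‖ ≤
          ‖(α (m+1+k) • Φ (x (m+1+k)) + (1 - α (m+1+k)) • x (m+1+k)) - x (m+1+k)‖ := by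
        rw [e1]; exact hTne _ (hyC (m+1+k)) _ (hxC (m+1+k))
      have id1 : (α (m+1+k) • Φ (x (m+1+k)) + (1 - α (m+1+k)) • x (m+1+k)) - x (m+1+k) =
          α (m+1+k) • (Φ (x (m+1+k)) - x (m+1+k)) := by module
      rw [id1, norm_smul, Real.norm_eq_abs, abs_of_pos (hα (m+1+k)).1] at s1
      exact s1.trans (mul_le_mul_of_nonneg_left (hPb (m+1+k)) (hα (m+1+k)).1.le)
    have tri : ‖x (m+1+k) - T (x (m+1+k))‖ ≤
        ‖x (m+1+k) - x (m+1+k+1)‖ + ‖x (m+1+k+1) - T (x (m+1+k))‖ := by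
      have hid : x (m+1+k) - T (x (m+1+k)) =
          (x (m+1+k) - x (m+1+k+1)) + (x (m+1+k+1) - T (x (m+1+k))) := by abel
      rw [hid]; exact norm_add_le _ _
    rw [norm_sub_rev (x (m+1+k)) (x (m+1+k+1))] at tri
    calc ‖x (m+1+k) - T (x (m+1+k))‖ ≤
          ‖x (m+1+k+1) - x (m+1+k)‖ + ‖x (m+1+k+1) - T (x (m+1+k))‖ := tri
      _ < e / 2 + e / 2 := add_lt_add han (lt_of_le_of_lt h2 hαn)
      _ = e := by ring
  refine ⟨?_, main⟩
  rw [Metric.tendsto_atTop]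
  intro ε hε
  have hmin : min ε 1 ∈ Set.Ioo (0:ℝ) 2 :=
    ⟨lt_min hε one_pos, lt_of_le_of_lt (min_le_right _ _) one_lt_two⟩
  refine ⟨max
      (1 + θ (⌈1 / (1 - ρ)⌉₊ *
        (β (min ε 1 / (4 * P)) + 2 + ⌈Real.log (4 * D / min ε 1)⌉₊)))
      (1 + φ (min ε 1 / (2 * P))), fun n hn => ?_⟩
  have h := main (min ε 1) hmin n hn
  rw [Real.dist_eq, sub_zero, abs_of_nonneg (norm_nonneg _)]
  exact lt_of_lt_of_le h (min_le_left _ _)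
end

section
/- Let X be a normed space, C ⊆ X a nonempty bounded convex subset with diameter d_C = sup{‖x − y‖ : x, y ∈ C} > 0, T : C → C nonexpansive, Φ : C → C a ρ-contraction, and {α_n}_{n≥0} a sequence in (0,1) such that lim α_n = 0 with rate of convergence φ, ∑ α_n diverges with rate of divergence θ, and ∑ |α_{n+1} − α_n| converges with Cauchy modulus β. Then for every x_0 ∈ C the iteration x_{n+1} = T(α_n Φ(x_n) + (1 − α_n)x_n) satisfies lim ‖x_n − Tx_n‖ = 0 and, for all ε ∈ (0,2), ‖x_n − Tx_n‖ < ε for all n ≥ Ψ, where Ψ = max{ 1 + θ(⌈1/(1 − ρ)⌉ · (β(ε/(4P)) + 2 + ⌈ln(4d_C/ε)⌉)), 1 + φ(ε/(2P)) } and P = (2 + ρ)d_C. -/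
set_option maxHeartbeats 1000000


open Filter

theorem stmt_13
    {X : Type*} [NormedAddCommGroup X] [NormedSpace ℝ X]
    (C : Set X) (hC : C.Nonempty) (hconv : Convex ℝ C)
    (hbdd : Bornology.IsBounded C) (hdC : 0 < Metric.diam C)
    (T Φ : X → X) (hT : ∀ x ∈ C, T x ∈ C) (hΦ : ∀ x ∈ C, Φ x ∈ C)
    (hTne : ∀ x ∈ C, ∀ y ∈ C, ‖T x - T y‖ ≤ ‖x - y‖)
    (ρ : ℝ) (hρ : ρ ∈ Set.Ioo (0 : ℝ) 1)
    (hΦc : ∀ x ∈ C, ∀ y ∈ C, ‖Φ x - Φ y‖ ≤ ρ * ‖x - y‖)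
    (α : ℕ → ℝ) (hα : ∀ n, α n ∈ Set.Ioo (0 : ℝ) 1)
    (φ : ℝ → ℕ) (hφ : ∀ e : ℝ, 0 < e → ∀ n ≥ φ e, |α n| < e)
    (θ : ℕ → ℕ) (hθ : ∀ n : ℕ, (n : ℝ) ≤ ∑ i ∈ Finset.range (θ n + 1), α i)
    (β : ℝ → ℕ)
    (hβ : ∀ e : ℝ, 0 < e → ∀ n : ℕ,
      abs ((∑ i ∈ Finset.range (β e + n + 1), |α (i + 1) - α i|) -
          ∑ i ∈ Finset.range (β e + 1), |α (i + 1) - α i|) < e)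
    (x : ℕ → X) (hx0 : x 0 ∈ C) (hxC : ∀ n, x n ∈ C)
    (hrec : ∀ n, x (n + 1) = T (α n • Φ (x n) + (1 - α n) • x n)) :
    Tendsto (fun n => ‖x n - T (x n)‖) atTop (nhds 0) ∧
      ∀ e ∈ Set.Ioo (0 : ℝ) 2,
        ∀ n ≥ max
          (1 + θ (⌈1 / (1 - ρ)⌉₊ *
            (β (e / (4 * ((2 + ρ) * Metric.diam C))) + 2 +
              ⌈Real.log (4 * Metric.diam C / e)⌉₊)))
          (1 + φ (e / (2 * ((2 + ρ) * Metric.diam C)))),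
        ‖x n - T (x n)‖ < e := by
  obtain ⟨hρ0, hρ1⟩ := hρ
  set d := Metric.diam C with hded
  have hd : 0 < d := hdC
  have hdle : ∀ a ∈ C, ∀ b ∈ C, ‖a - b‖ ≤ d := by
    intro a ha b hb
    rw [← dist_eq_norm]
    exact Metric.dist_le_diam_of_mem hbdd ha hb
  have hα0 : ∀ n, 0 < α n := fun n => (hα n).1
  have hα1 : ∀ n, α n < 1 := fun n => (hα n).2
  set y : ℕ → X := fun n => α n • Φ (x n) + (1 - α n) • x n with hy
  have hyC : ∀ n, y n ∈ C := fun n =>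
    hconv (hΦ _ (hxC n)) (hxC n) (le_of_lt (hα0 n)) (by linarith [hα1 n]) (by ring)
  have hstep : ∀ n, ‖x (n+1+1) - x (n+1)‖ ≤
      (1 - (1-ρ) * α (n+1)) * ‖x (n+1) - x n‖ + |α (n+1) - α n| * d := by
    intro n
    have e1 : x (n+1+1) = T (y (n+1)) := hrec (n+1)
    have e2 : x (n+1) = T (y n) := hrec n
    have hsplit : y (n+1) - y n =
        α (n+1) • (Φ (x (n+1)) - Φ (x n)) + (1 - α (n+1)) • (x (n+1) - x n)
          + (α (n+1) - α n) • (Φ (x n) - x n) := by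
      simp only [hy]; module
    have h1 : ‖x (n+1+1) - x (n+1)‖ ≤ ‖y (n+1) - y n‖ := by
      rw [e1, e2]; exact hTne _ (hyC _) _ (hyC _)
    have h2 : ‖y (n+1) - y n‖ ≤ α (n+1) * (ρ * ‖x (n+1) - x n‖)
        + (1 - α (n+1)) * ‖x (n+1) - x n‖ + |α (n+1) - α n| * d := by
      rw [hsplit]
      calc ‖α (n+1) • (Φ (x (n+1)) - Φ (x n)) + (1 - α (n+1)) • (x (n+1) - x n)
            + (α (n+1) - α n) • (Φ (x n) - x n)‖
          ≤ ‖α (n+1) • (Φ (x (n+1)) - Φ (x n))‖ + ‖(1 - α (n+1)) • (x (n+1) - x n)‖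
            + ‖(α (n+1) - α n) • (Φ (x n) - x n)‖ := norm_add₃_le
        _ = α (n+1) * ‖Φ (x (n+1)) - Φ (x n)‖ + (1 - α (n+1)) * ‖x (n+1) - x n‖
            + |α (n+1) - α n| * ‖Φ (x n) - x n‖ := by
              rw [norm_smul, norm_smul, norm_smul, Real.norm_eq_abs, Real.norm_eq_abs,
                Real.norm_eq_abs, abs_of_pos (hα0 (n+1)),
                abs_of_pos (by linarith [hα1 (n+1)] : (0:ℝ) < 1 - α (n+1))]
        _ ≤ α (n+1) * (ρ * ‖x (n+1) - x n‖) + (1 - α (n+1)) * ‖x (n+1) - x n‖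
            + |α (n+1) - α n| * d :=
            add_le_add (add_le_add
              (mul_le_mul_of_nonneg_left (hΦc _ (hxC _) _ (hxC _)) (hα0 _).le) le_rfl)
              (mul_le_mul_of_nonneg_left (hdle _ (hΦ _ (hxC n)) _ (hxC n)) (abs_nonneg _))
    have hkey : α (n+1) * (ρ * ‖x (n+1) - x n‖) + (1 - α (n+1)) * ‖x (n+1) - x n‖
        = (1 - (1-ρ) * α (n+1)) * ‖x (n+1) - x n‖ := by ring
    linarith [h1, h2]
  have hB : ∀ m n, m ≤ n → ‖x (n+1) - x n‖ ≤
      (∏ k ∈ Finset.Ico m n, (1 - (1-ρ) * α (k+1))) * d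
        + (∑ k ∈ Finset.Ico m n, |α (k+1) - α k|) * d := by
    intro m n hmn
    induction n, hmn using Nat.le_induction with
    | base =>
        simp only [Finset.Ico_self, Finset.prod_empty, Finset.sum_empty, one_mul, zero_mul,
          add_zero]
        exact hdle _ (hxC _) _ (hxC _)
    | succ n hmn ih =>
        have hfac0 : 0 ≤ 1 - (1-ρ) * α (n+1) := by nlinarith [hα0 (n+1), hα1 (n+1)]
        have hfac1 : 1 - (1-ρ) * α (n+1) ≤ 1 := by nlinarith [hα0 (n+1)]
        have hprodnn : 0 ≤ ∏ k ∈ Finset.Ico m n, (1 - (1-ρ) * α (k+1)) :=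
          Finset.prod_nonneg (fun k _ => by nlinarith [hα0 (k+1), hα1 (k+1)])
        have hsumnn : 0 ≤ ∑ k ∈ Finset.Ico m n, |α (k+1) - α k| :=
          Finset.sum_nonneg fun k _ => abs_nonneg _
        rw [Finset.prod_Ico_succ_top hmn, Finset.sum_Ico_succ_top hmn]
        have h := hstep n
        have h2 := mul_le_mul_of_nonneg_left ih hfac0
        have key : 0 ≤ (1 - (1 - (1-ρ) * α (n+1))) *
            ((∑ k ∈ Finset.Ico m n, |α (k+1) - α k|) * d) := by
          apply mul_nonneg (by linarith) (mul_nonneg hsumnn hd.le)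
        nlinarith [h, h2, key]
  have key : ∀ e ∈ Set.Ioo (0:ℝ) 2,
      ∀ n ≥ max
        (1 + θ (⌈1 / (1 - ρ)⌉₊ * (β (e / (4 * ((2 + ρ) * d))) + 2 +
            ⌈Real.log (4 * d / e)⌉₊)))
        (1 + φ (e / (2 * ((2 + ρ) * d)))),
      ‖x n - T (x n)‖ < e := by
    rintro e ⟨he0, he2⟩ n hn
    set P := (2 + ρ) * d with hPdef
    have hP : 0 < P := mul_pos (by linarith) hd
    set β' := β (e / (4 * P)) with hβ'def
    set L := ⌈Real.log (4 * d / e)⌉₊ with hLdef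
    set K := ⌈1 / (1 - ρ)⌉₊ with hKdef
    set N := K * (β' + 2 + L) with hNdef
    have h1ρ : (0:ℝ) < 1 - ρ := by linarith
    have hKge : 1 / (1 - ρ) ≤ (K:ℝ) := Nat.le_ceil _
    have hK1ρ : (1:ℝ) ≤ (1 - ρ) * K := by
      calc (1:ℝ) = (1-ρ) * (1/(1-ρ)) := by field_simp
        _ ≤ (1-ρ) * K := mul_le_mul_of_nonneg_left hKge h1ρ.le
    have hK1 : 1 ≤ K := by
      by_contra h
      push_neg at h
      interval_cases K
      simp at hK1ρ
      linarith
    have hθNN : N ≤ θ N := by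
      have h2 : (∑ i ∈ Finset.range (θ N + 1), α i) < ((θ N + 1 : ℕ) : ℝ) := by
        have := Finset.sum_lt_sum_of_nonempty (s := Finset.range (θ N + 1))
          (f := α) (g := fun _ => (1:ℝ)) (by simp) (fun i _ => hα1 i)
        simpa using this
      have h3 : (N:ℝ) < ((θ N : ℕ) : ℝ) + 1 := by
        have := lt_of_le_of_lt (hθ N) h2
        push_cast at this ⊢
        linarith
      have h4 : N < θ N + 1 := by exact_mod_cast h3
      omega
    have hNβ2 : β' + 2 ≤ N := by
      calc β' + 2 ≤ β' + 2 + L := by omega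
        _ ≤ K * (β' + 2 + L) := Nat.le_mul_of_pos_left _ (by omega)
    set m := β' + 1 with hmdef
    have hn1 : 1 + θ N ≤ n := le_trans (le_max_left _ _) hn
    have hmn : m ≤ n := by omega
    -- sum bound
    have hsumnn : 0 ≤ ∑ k ∈ Finset.Ico m n, |α (k+1) - α k| :=
      Finset.sum_nonneg fun k _ => abs_nonneg _
    have hsb : (∑ k ∈ Finset.Ico m n, |α (k+1) - α k|) < e / (4*P) := by
      have hpos : 0 < e / (4*P) := by positivity
      have h := hβ (e/(4*P)) hpos (n - m)
      have hidx : β' + (n - m) + 1 = n := by omega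
      rw [hidx] at h
      rw [← hβ'def] at h
      have hrw : (∑ i ∈ Finset.range n, |α (i+1) - α i|)
          - ∑ i ∈ Finset.range (β' + 1), |α (i+1) - α i|
          = ∑ k ∈ Finset.Ico m n, |α (k+1) - α k| := by
        rw [Finset.sum_Ico_eq_sub _ hmn, hmdef]
      rw [hrw] at h
      rwa [abs_of_nonneg hsumnn] at h
    -- alpha sum lower bound
    have hSα : (N:ℝ) - ((m:ℝ) + 1) ≤ ∑ k ∈ Finset.Ico m n, α (k+1) := by
      have hshift : ∑ k ∈ Finset.Ico m n, α (k+1) = ∑ k ∈ Finset.Ico (m+1) (n+1), α k :=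
        Finset.sum_Ico_add' α m n 1
      rw [hshift, Finset.sum_Ico_eq_sub _ (by omega : m+1 ≤ n+1)]
      have h1 : (N:ℝ) ≤ ∑ i ∈ Finset.range (n+1), α i :=
        le_trans (hθ N) (Finset.sum_le_sum_of_subset_of_nonneg
          (Finset.range_subset_range.mpr (by omega)) (fun i _ _ => (hα0 i).le))
      have h2 : ∑ i ∈ Finset.range (m+1), α i ≤ ((m:ℝ) + 1) := by
        calc ∑ i ∈ Finset.range (m+1), α i ≤ ∑ i ∈ Finset.range (m+1), (1:ℝ) :=
              Finset.sum_le_sum (fun i _ => (hα1 i).le)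
          _ = ((m:ℝ) + 1) := by simp
      linarith
    -- product bound
    have hprodnn : 0 ≤ ∏ k ∈ Finset.Ico m n, (1 - (1-ρ) * α (k+1)) :=
      Finset.prod_nonneg (fun k _ => by nlinarith [hα0 (k+1), hα1 (k+1)])
    have hprod : (∏ k ∈ Finset.Ico m n, (1 - (1-ρ) * α (k+1)))
        ≤ Real.exp (-((1-ρ) * ∑ k ∈ Finset.Ico m n, α (k+1))) := by
      calc (∏ k ∈ Finset.Ico m n, (1 - (1-ρ) * α (k+1)))
          ≤ ∏ k ∈ Finset.Ico m n, Real.exp (-((1-ρ) * α (k+1))) :=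
            Finset.prod_le_prod (fun k _ => by nlinarith [hα0 (k+1), hα1 (k+1)])
              (fun k _ => by linarith [Real.add_one_le_exp (-((1-ρ) * α (k+1)))])
        _ = Real.exp (∑ k ∈ Finset.Ico m n, -((1-ρ) * α (k+1))) :=
            (Real.exp_sum _ _).symm
        _ = Real.exp (-((1-ρ) * ∑ k ∈ Finset.Ico m n, α (k+1))) := by
            rw [Finset.mul_sum]
            simp
    have hexp1 : (L:ℝ) ≤ (1-ρ) * ∑ k ∈ Finset.Ico m n, α (k+1) := by
      have hcast : (N:ℝ) = (K:ℝ) * ((β':ℝ) + 2 + (L:ℝ)) := by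
        rw [hNdef]; push_cast; ring
      have hm' : (m:ℝ) = (β':ℝ) + 1 := by rw [hmdef]; push_cast; ring
      have ha : (1-ρ) * ((N:ℝ) - ((m:ℝ)+1)) ≤ (1-ρ) * ∑ k ∈ Finset.Ico m n, α (k+1) :=
        mul_le_mul_of_nonneg_left hSα h1ρ.le
      have hb : ((β':ℝ) + 2 + L) ≤ (1-ρ) * N := by
        rw [hcast, ← mul_assoc]
        nlinarith [hK1ρ, (Nat.cast_nonneg β' : (0:ℝ) ≤ (β':ℝ)), (Nat.cast_nonneg L : (0:ℝ) ≤ (L:ℝ))]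
      have hc : (1-ρ) * ((m:ℝ)+1) ≤ (β':ℝ) + 2 := by
        rw [hm']
        nlinarith [(Nat.cast_nonneg β' : (0:ℝ) ≤ (β':ℝ))]
      nlinarith [ha, hb, hc]
    have hexp2 : Real.exp (-((1-ρ) * ∑ k ∈ Finset.Ico m n, α (k+1)))
        ≤ Real.exp (-(L:ℝ)) := Real.exp_le_exp.mpr (by linarith)
    have hexp3 : Real.exp (-(L:ℝ)) * d ≤ e / 4 := by
      have h4de : 0 < 4*d/e := by positivity
      have hlog : Real.log (4*d/e) ≤ (L:ℝ) := Nat.le_ceil _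
      have hLe : 4*d/e ≤ Real.exp (L:ℝ) := by
        calc 4*d/e = Real.exp (Real.log (4*d/e)) := (Real.exp_log h4de).symm
          _ ≤ Real.exp (L:ℝ) := Real.exp_le_exp.mpr hlog
      have h4d : 4*d ≤ Real.exp (L:ℝ) * e := (div_le_iff₀ he0).mp hLe
      rw [Real.exp_neg, inv_mul_le_iff₀ (Real.exp_pos _)]
      nlinarith [h4d]
    -- alpha small
    have hφn : α n < e / (2*P) := by
      have hn2 : 1 + φ (e/(2*P)) ≤ n := le_trans (le_max_right _ _) hn
      have := hφ (e/(2*P)) (by positivity) n (by omega)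
      rwa [abs_of_pos (hα0 n)] at this
    -- assemble
    have hyn : ‖x (n+1) - T (x n)‖ ≤ α n * d := by
      rw [hrec n]
      refine le_trans (hTne _ (hyC n) _ (hxC n)) ?_
      have hy2 : (fun n => α n • Φ (x n) + (1 - α n) • x n) n - x n
          = α n • (Φ (x n) - x n) := by simp only []; module
      rw [hy2, norm_smul, Real.norm_eq_abs, abs_of_pos (hα0 n)]
      exact mul_le_mul_of_nonneg_left (hdle _ (hΦ _ (hxC n)) _ (hxC n)) (hα0 n).le
    have hsn := hB m n hmn
    have tri : ‖x n - T (x n)‖ ≤ ‖x (n+1) - x n‖ + ‖x (n+1) - T (x n)‖ := by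
      have habel : x n - T (x n) = (x n - x (n+1)) + (x (n+1) - T (x n)) := by abel
      calc ‖x n - T (x n)‖ = ‖(x n - x (n+1)) + (x (n+1) - T (x n))‖ := by rw [← habel]
        _ ≤ ‖x n - x (n+1)‖ + ‖x (n+1) - T (x n)‖ := norm_add_le _ _
        _ = ‖x (n+1) - x n‖ + ‖x (n+1) - T (x n)‖ := by rw [norm_sub_rev (x n)]
    have hprodd : (∏ k ∈ Finset.Ico m n, (1 - (1-ρ) * α (k+1))) * d ≤ e/4 := by
      calc (∏ k ∈ Finset.Ico m n, (1 - (1-ρ) * α (k+1))) * d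
          ≤ Real.exp (-(L:ℝ)) * d :=
            mul_le_mul_of_nonneg_right (le_trans hprod hexp2) hd.le
        _ ≤ e/4 := hexp3
    have hsum2 : (∑ k ∈ Finset.Ico m n, |α (k+1) - α k|) * d ≤ e/8 := by
      have ha : (∑ k ∈ Finset.Ico m n, |α (k+1) - α k|) * d ≤ (e/(4*P)) * d :=
        mul_le_mul_of_nonneg_right hsb.le hd.le
      have hb : (e/(4*P)) * d ≤ e/8 := by
        rw [hPdef, div_mul_eq_mul_div, div_le_div_iff₀ (by positivity) (by norm_num)]
        nlinarith [mul_pos (mul_pos he0 hd) hρ0]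
      linarith
    have hα2 : α n * d < e/4 := by
      have ha : α n * d < (e/(2*P)) * d := mul_lt_mul_of_pos_right hφn hd
      have hb : (e/(2*P)) * d ≤ e/4 := by
        rw [hPdef, div_mul_eq_mul_div, div_le_div_iff₀ (by positivity) (by norm_num)]
        nlinarith [mul_pos (mul_pos he0 hd) hρ0]
      linarith
    calc ‖x n - T (x n)‖ ≤ ‖x (n+1) - x n‖ + ‖x (n+1) - T (x n)‖ := tri
      _ ≤ ((∏ k ∈ Finset.Ico m n, (1 - (1-ρ) * α (k+1))) * d
            + (∑ k ∈ Finset.Ico m n, |α (k+1) - α k|) * d) + α n * d :=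
          add_le_add hsn hyn
      _ < e := by linarith
  refine ⟨?_, key⟩
  rw [Metric.tendsto_atTop]
  intro ε hε
  have hε' : min ε 1 ∈ Set.Ioo (0:ℝ) 2 :=
    ⟨lt_min hε one_pos, lt_of_le_of_lt (min_le_right _ _) one_lt_two⟩
  refine ⟨max (1 + θ (⌈1 / (1 - ρ)⌉₊ * (β ((min ε 1) / (4 * ((2 + ρ) * d))) + 2 +
      ⌈Real.log (4 * d / (min ε 1))⌉₊))) (1 + φ ((min ε 1) / (2 * ((2 + ρ) * d)))),
    fun n hn => ?_⟩
  have h := key (min ε 1) hε' n hn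
  rw [Real.dist_eq, sub_zero, abs_of_nonneg (norm_nonneg _)]
  exact lt_of_lt_of_le h (min_le_left _ _)
end

section
/- Let X be a normed space, C ⊆ X a nonempty bounded convex subset with diameter d_C > 0, T : C → C nonexpansive, Φ : C → C a ρ-contraction, and {α_n}_{n≥0} a decreasing sequence in (0,1) such that lim α_n = 0 with rate of convergence φ and ∑ α_n diverges with rate of divergence θ. Then for every x_0 ∈ C the iteration x_{n+1} = T(α_n Φ(x_n) + (1 − α_n)x_n) satisfies lim ‖x_n − Tx_n‖ = 0 and, for all ε ∈ (0,2), ‖x_n − Tx_n‖ < ε for all n ≥ Ψ, where Ψ = max{ 1 + θ(⌈1/(1 − ρ)⌉ · (φ(ε/(4P)) + 2 + ⌈ln(4d_C/ε)⌉)), 1 + φ(ε/(2P)) } and P = (2 + ρ)d_C. -/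
open Filter

set_option maxHeartbeats 1000000 in
theorem stmt_14
    {X : Type*} [NormedAddCommGroup X] [NormedSpace ℝ X]
    (C : Set X) (hC : C.Nonempty) (hconv : Convex ℝ C)
    (hbdd : Bornology.IsBounded C) (hdC : 0 < Metric.diam C)
    (T Φ : X → X) (hT : ∀ x ∈ C, T x ∈ C) (hΦ : ∀ x ∈ C, Φ x ∈ C)
    (hTne : ∀ x ∈ C, ∀ y ∈ C, ‖T x - T y‖ ≤ ‖x - y‖)
    (ρ : ℝ) (hρ : ρ ∈ Set.Ioo (0 : ℝ) 1)
    (hΦc : ∀ x ∈ C, ∀ y ∈ C, ‖Φ x - Φ y‖ ≤ ρ * ‖x - y‖)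
    (α : ℕ → ℝ) (hα : ∀ n, α n ∈ Set.Ioo (0 : ℝ) 1)
    (hdec : Antitone α)
    (φ : ℝ → ℕ) (hφ : ∀ e : ℝ, 0 < e → ∀ n ≥ φ e, |α n| < e)
    (θ : ℕ → ℕ) (hθ : ∀ n : ℕ, (n : ℝ) ≤ ∑ i ∈ Finset.range (θ n + 1), α i)
    (x : ℕ → X) (hx0 : x 0 ∈ C) (hxC : ∀ n, x n ∈ C)
    (hrec : ∀ n, x (n + 1) = T (α n • Φ (x n) + (1 - α n) • x n)) :
    Tendsto (fun n => ‖x n - T (x n)‖) atTop (nhds 0) ∧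
      ∀ e ∈ Set.Ioo (0 : ℝ) 2,
        ∀ n ≥ max
          (1 + θ (⌈1 / (1 - ρ)⌉₊ *
            (φ (e / (4 * ((2 + ρ) * Metric.diam C))) + 2 +
              ⌈Real.log (4 * Metric.diam C / e)⌉₊)))
          (1 + φ (e / (2 * ((2 + ρ) * Metric.diam C)))),
        ‖x n - T (x n)‖ < e := by
  obtain ⟨hρ0, hρ1⟩ := hρ
  have hd0 : (0:ℝ) < Metric.diam C := hdC
  set d := Metric.diam C with hddef
  have hdist : ∀ a ∈ C, ∀ b ∈ C, ‖a - b‖ ≤ d := fun a ha b hb => by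
    rw [← dist_eq_norm]; exact Metric.dist_le_diam_of_mem hbdd ha hb
  have hα' : ∀ e : ℝ, 0 < e → ∀ n ≥ φ e, α n < e := by
    intro e he n hn
    have := hφ e he n hn
    rwa [abs_of_pos (hα n).1] at this
  have hyC : ∀ n, α n • Φ (x n) + (1 - α n) • x n ∈ C := fun n =>
    hconv (hΦ _ (hxC n)) (hxC n) (hα n).1.le (by linarith [(hα n).2]) (by ring)
  set s : ℕ → ℝ := fun n => ‖x (n + 1) - x n‖ with hsdef
  have hsd : ∀ n, s n ≤ d := fun n => hdist _ (hxC _) _ (hxC _)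
  have hs0 : ∀ n, (0:ℝ) ≤ s n := fun n => norm_nonneg _
  have hf0 : ∀ k, (0:ℝ) ≤ 1 - (1 - ρ) * α k := fun k => by nlinarith [(hα k).1, (hα k).2]
  have hf1 : ∀ k, 1 - (1 - ρ) * α k ≤ 1 := fun k => by nlinarith [(hα k).1]
  have key : ∀ n, s (n + 1) ≤ (1 - (1 - ρ) * α (n + 1)) * s n + (α n - α (n + 1)) * d := by
    intro n
    have h1 : s (n+1) = ‖T (α (n+1) • Φ (x (n+1)) + (1 - α (n+1)) • x (n+1))
        - T (α n • Φ (x n) + (1 - α n) • x n)‖ := by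
      show ‖x (n+1+1) - x (n+1)‖ = _
      rw [hrec (n+1), hrec n]
    have h2 := hTne _ (hyC (n+1)) _ (hyC n)
    have h4 : (α (n+1) • Φ (x (n+1)) + (1 - α (n+1)) • x (n+1))
        - (α n • Φ (x n) + (1 - α n) • x n)
        = α (n+1) • (Φ (x (n+1)) - Φ (x n)) + (1 - α (n+1)) • (x (n+1) - x n)
          + (α (n+1) - α n) • (Φ (x n) - x n) := by module
    have h5 : ‖α (n+1) • (Φ (x (n+1)) - Φ (x n))‖ ≤ α (n+1) * (ρ * s n) := by
      rw [norm_smul, Real.norm_eq_abs, abs_of_pos (hα (n+1)).1]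
      exact mul_le_mul_of_nonneg_left (hΦc _ (hxC (n+1)) _ (hxC n)) (hα (n+1)).1.le
    have h6 : ‖(1 - α (n+1)) • (x (n+1) - x n)‖ = (1 - α (n+1)) * s n := by
      rw [norm_smul, Real.norm_eq_abs,
        abs_of_pos (by linarith [(hα (n+1)).2] : (0:ℝ) < 1 - α (n+1))]
    have h7 : ‖(α (n+1) - α n) • (Φ (x n) - x n)‖ ≤ (α n - α (n+1)) * d := by
      rw [norm_smul, Real.norm_eq_abs,
        abs_of_nonpos (by linarith [hdec (Nat.le_succ n)] : α (n+1) - α n ≤ 0), neg_sub]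
      exact mul_le_mul le_rfl (hdist _ (hΦ _ (hxC n)) _ (hxC n)) (norm_nonneg _)
        (sub_nonneg.mpr (hdec (Nat.le_succ n)))
    have h8 : ‖(α (n+1) • Φ (x (n+1)) + (1 - α (n+1)) • x (n+1))
        - (α n • Φ (x n) + (1 - α n) • x n)‖
        ≤ α (n+1) * (ρ * s n) + (1 - α (n+1)) * s n + (α n - α (n+1)) * d := by
      rw [h4]
      refine (norm_add_le _ _).trans ?_
      refine (add_le_add (norm_add_le _ _) le_rfl).trans ?_
      linarith [h5, h6.le, h7]
    have h9 : α (n+1) * (ρ * s n) + (1 - α (n+1)) * s n = (1 - (1 - ρ) * α (n+1)) * s n := by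
      ring
    linarith [h1, h2, h8]
  have unroll : ∀ N m : ℕ, N ≤ m →
      s m ≤ (∏ k ∈ Finset.Icc (N+1) m, (1 - (1 - ρ) * α k)) * d + d * (α N - α m) := by
    intro N m hm
    induction m with
    | zero =>
      obtain rfl : N = 0 := Nat.le_zero.mp hm
      rw [Finset.Icc_eq_empty (by omega), Finset.prod_empty]
      nlinarith [hsd 0]
    | succ m ih =>
      rcases eq_or_lt_of_le hm with h | h
      · rw [← h, Finset.Icc_eq_empty (by omega), Finset.prod_empty]
        nlinarith [hsd N, h ▸ hsd (m+1)]
      · have hm' : N ≤ m := Nat.lt_succ_iff.mp h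
        have ih' := ih hm'
        have hsplit : (∏ k ∈ Finset.Icc (N+1) (m+1), (1 - (1 - ρ) * α k))
            = (∏ k ∈ Finset.Icc (N+1) m, (1 - (1 - ρ) * α k)) * (1 - (1 - ρ) * α (m+1)) :=
          Finset.prod_Icc_succ_top (by omega) _
        have hP0 : 0 ≤ ∏ k ∈ Finset.Icc (N+1) m, (1 - (1 - ρ) * α k) :=
          Finset.prod_nonneg fun k _ => hf0 k
        have hk := key m
        have hαNm : α m ≤ α N := hdec hm'
        have hα1 : α (m+1) ≤ α m := hdec (Nat.le_succ m)
        have hint1 := mul_le_mul_of_nonneg_left ih' (hf0 (m+1))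
        have hint2 : 0 ≤ (1 - (1 - (1 - ρ) * α (m+1))) * (d * (α N - α m)) :=
          mul_nonneg (by linarith [hf1 (m+1)])
            (mul_nonneg hd0.le (sub_nonneg.mpr hαNm))
        rw [hsplit]
        nlinarith [hk, hint1, hint2]
  have prod_le : ∀ N m : ℕ, (∏ k ∈ Finset.Icc (N+1) m, (1 - (1 - ρ) * α k))
      ≤ Real.exp (-((1-ρ) * ∑ k ∈ Finset.Icc (N+1) m, α k)) := by
    intro N m
    calc (∏ k ∈ Finset.Icc (N+1) m, (1 - (1 - ρ) * α k))
        ≤ ∏ k ∈ Finset.Icc (N+1) m, Real.exp (-((1-ρ) * α k)) :=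
          Finset.prod_le_prod (fun k _ => hf0 k)
            (fun k _ => by linarith [Real.add_one_le_exp (-((1-ρ) * α k))])
      _ = Real.exp (∑ k ∈ Finset.Icc (N+1) m, -((1-ρ) * α k)) := (Real.exp_sum _ _).symm
      _ = Real.exp (-((1-ρ) * ∑ k ∈ Finset.Icc (N+1) m, α k)) := by
          rw [Finset.sum_neg_distrib, Finset.mul_sum]
  have main : ∀ e ∈ Set.Ioo (0:ℝ) 2, ∀ n ≥ max
      (1 + θ (⌈1 / (1 - ρ)⌉₊ * (φ (e / (4 * ((2 + ρ) * d))) + 2 + ⌈Real.log (4 * d / e)⌉₊)))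
      (1 + φ (e / (2 * ((2 + ρ) * d)))), ‖x n - T (x n)‖ < e := by
    rintro e ⟨he0, he2⟩ n hn
    set N := φ (e / (4 * ((2 + ρ) * d))) with hN
    set K := ⌈Real.log (4 * d / e)⌉₊ with hK
    set c := ⌈1 / (1 - ρ)⌉₊ with hc
    set M := c * (N + 2 + K) with hM
    have h1ρ : (0:ℝ) < 1 - ρ := by linarith
    have hPc0 : (0:ℝ) < (2+ρ)*d := mul_pos (by linarith) hd0
    have he4 : 0 < e / (4*((2+ρ)*d)) := div_pos he0 (by linarith)
    have he2' : 0 < e / (2*((2+ρ)*d)) := div_pos he0 (by linarith)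
    have hαN : ∀ k ≥ N, α k < e/(4*((2+ρ)*d)) := fun k hk => hα' _ he4 k hk
    have hc1 : 1 ≤ c := Nat.one_le_ceil_iff.mpr (by positivity)
    have hcρ : 1/(1-ρ) ≤ (c:ℝ) := Nat.le_ceil _
    have hKlog : Real.log (4*d/e) ≤ (K:ℝ) := Nat.le_ceil _
    have hθM := hθ M
    have hsum1 : (∑ i ∈ Finset.range (θ M + 1), α i) ≤ (θ M : ℝ) + 1 := by
      calc (∑ i ∈ Finset.range (θ M + 1), α i) ≤ ∑ i ∈ Finset.range (θ M + 1), 1 :=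
            Finset.sum_le_sum (fun i _ => (hα i).2.le)
        _ = ((θ M + 1 : ℕ) : ℝ) := by simp
        _ = (θ M : ℝ) + 1 := by push_cast; ring
    have hMθ : M ≤ θ M + 1 := by exact_mod_cast hθM.trans hsum1
    have hMN : N + 2 ≤ M := by
      calc N + 2 ≤ N + 2 + K := by omega
        _ ≤ c * (N + 2 + K) := Nat.le_mul_of_pos_left _ (by omega)
    have hθN : N + 1 ≤ θ M := by omega
    have hn1 : 1 + θ M ≤ n := le_trans (le_max_left _ _) hn
    have hn2 : 1 + φ (e / (2*((2+ρ)*d))) ≤ n := le_trans (le_max_right _ _) hn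
    have hnN : N ≤ n := by omega
    have hS : (M:ℝ) - ((N:ℝ)+1) ≤ ∑ k ∈ Finset.Icc (N+1) n, α k := by
      have hsub : ∑ k ∈ Finset.Icc (N+1) (θ M), α k ≤ ∑ k ∈ Finset.Icc (N+1) n, α k :=
        Finset.sum_le_sum_of_subset_of_nonneg
          (Finset.Icc_subset_Icc_right (by omega)) (fun k _ _ => (hα k).1.le)
      have hcons : (∑ k ∈ Finset.range (N+1), α k) + ∑ k ∈ Finset.Icc (N+1) (θ M), α k
          = ∑ k ∈ Finset.range (θ M + 1), α k := by
        rw [Finset.range_eq_Ico, Finset.range_eq_Ico, ← Finset.Ico_add_one_right_eq_Icc]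
        exact Finset.sum_Ico_consecutive α (by omega : 0 ≤ N+1) (by omega : N+1 ≤ θ M + 1)
      have hr : (∑ k ∈ Finset.range (N+1), α k) ≤ (N:ℝ) + 1 := by
        calc (∑ k ∈ Finset.range (N+1), α k) ≤ ∑ k ∈ Finset.range (N+1), 1 :=
              Finset.sum_le_sum (fun i _ => (hα i).2.le)
          _ = ((N + 1 : ℕ) : ℝ) := by simp
          _ = (N:ℝ) + 1 := by push_cast; ring
      linarith
    have hSlog : Real.log (4*d/e) ≤ (1-ρ) * ∑ k ∈ Finset.Icc (N+1) n, α k := by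
      rcases le_or_gt (Real.log (4*d/e)) 0 with hl | hl
      · have hSnn : (0:ℝ) ≤ ∑ k ∈ Finset.Icc (N+1) n, α k :=
          Finset.sum_nonneg (fun k _ => (hα k).1.le)
        nlinarith
      · have hK0 : (0:ℝ) < (K:ℝ) := lt_of_lt_of_le hl hKlog
        have hcK : Real.log (4*d/e) / (1-ρ) ≤ (c:ℝ) * K := by
          calc Real.log (4*d/e) / (1-ρ) ≤ (K:ℝ) * (1/(1-ρ)) := by
                rw [div_eq_mul_one_div]
                exact mul_le_mul_of_nonneg_right hKlog (by positivity)
            _ ≤ (K:ℝ) * c := mul_le_mul_of_nonneg_left hcρ hK0.le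
            _ = (c:ℝ) * K := mul_comm _ _
        have hMcast : (M:ℝ) = (c:ℝ) * ((N:ℝ) + 2 + (K:ℝ)) := by rw [hM]; push_cast; ring
        have hup : (c:ℝ) * K + 1 ≤ (M:ℝ) - ((N:ℝ)+1) := by
          rw [hMcast]
          have hc1' : (1:ℝ) ≤ (c:ℝ) := by exact_mod_cast hc1
          nlinarith [(Nat.cast_nonneg K : (0:ℝ) ≤ (K:ℝ)), (Nat.cast_nonneg N : (0:ℝ) ≤ (N:ℝ)),
            mul_nonneg (by linarith : (0:ℝ) ≤ (c:ℝ)-1) (by positivity : (0:ℝ) ≤ (N:ℝ)+2)]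
        have hfin : Real.log (4*d/e) / (1-ρ) ≤ ∑ k ∈ Finset.Icc (N+1) n, α k := by linarith
        rw [div_le_iff₀ h1ρ] at hfin
        linarith
    have h4de : (0:ℝ) < 4*d/e := by positivity
    have hexp : Real.exp (-((1-ρ) * ∑ k ∈ Finset.Icc (N+1) n, α k)) ≤ e / (4*d) := by
      calc Real.exp (-((1-ρ) * ∑ k ∈ Finset.Icc (N+1) n, α k))
          ≤ Real.exp (-(Real.log (4*d/e))) := Real.exp_le_exp.mpr (by linarith)
        _ = (4*d/e)⁻¹ := by rw [Real.exp_neg, Real.exp_log h4de]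
        _ = e/(4*d) := by rw [inv_div]
    have hsn : s n < e/2 := by
      have hu := unroll N n hnN
      have hp := prod_le N n
      have h1 : (∏ k ∈ Finset.Icc (N+1) n, (1 - (1 - ρ) * α k)) * d ≤ e/4 := by
        calc (∏ k ∈ Finset.Icc (N+1) n, (1 - (1 - ρ) * α k)) * d
            ≤ (e/(4*d)) * d := mul_le_mul_of_nonneg_right (hp.trans hexp) hd0.le
          _ = e/4 := by field_simp
      have h2 : d * (α N - α n) ≤ d * α N :=
        mul_le_mul_of_nonneg_left (by linarith [(hα n).1]) hd0.le
      have h3 : d * α N < d * (e/(4*((2+ρ)*d))) := mul_lt_mul_of_pos_left (hαN N le_rfl) hd0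
      have heq : d * (e/(4*((2+ρ)*d))) = e/(4*(2+ρ)) := by field_simp
      have h4 : e/(4*(2+ρ)) ≤ e/8 := by
        rw [div_le_div_iff₀ (by linarith) (by norm_num)]; nlinarith
      linarith
    have hxT : ‖x n - T (x n)‖ ≤ s n + α n * d := by
      have ht : ‖x (n+1) - T (x n)‖ ≤ α n * d := by
        rw [hrec n]
        calc ‖T (α n • Φ (x n) + (1 - α n) • x n) - T (x n)‖
            ≤ ‖(α n • Φ (x n) + (1 - α n) • x n) - x n‖ := hTne _ (hyC n) _ (hxC n)
          _ = ‖α n • (Φ (x n) - x n)‖ := by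
              rw [show (α n • Φ (x n) + (1 - α n) • x n) - x n = α n • (Φ (x n) - x n) by module]
          _ = α n * ‖Φ (x n) - x n‖ := by
              rw [norm_smul, Real.norm_eq_abs, abs_of_pos (hα n).1]
          _ ≤ α n * d := mul_le_mul_of_nonneg_left (hdist _ (hΦ _ (hxC n)) _ (hxC n)) (hα n).1.le
      calc ‖x n - T (x n)‖ ≤ ‖x n - x (n+1)‖ + ‖x (n+1) - T (x n)‖ :=
            norm_sub_le_norm_sub_add_norm_sub _ _ _
        _ = s n + ‖x (n+1) - T (x n)‖ := by rw [norm_sub_rev]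
        _ ≤ s n + α n * d := by linarith
    have hαn : α n < e/(2*((2+ρ)*d)) := hα' _ he2' n (by omega)
    have hand : α n * d < e/4 := by
      have h5 : α n * d < (e/(2*((2+ρ)*d))) * d := mul_lt_mul_of_pos_right hαn hd0
      have heq2 : (e/(2*((2+ρ)*d))) * d = e/(2*(2+ρ)) := by field_simp
      have h6 : e/(2*(2+ρ)) ≤ e/4 := by
        rw [div_le_div_iff₀ (by linarith) (by norm_num)]; nlinarith
      linarith
    linarith
  refine ⟨?_, main⟩
  rw [Metric.tendsto_atTop]
  intro ε hε
  have hε' : min ε 1 ∈ Set.Ioo (0:ℝ) 2 :=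
    ⟨lt_min hε one_pos, lt_of_le_of_lt (min_le_right _ _) one_lt_two⟩
  refine ⟨max
      (1 + θ (⌈1 / (1 - ρ)⌉₊ * (φ (min ε 1 / (4 * ((2 + ρ) * d))) + 2 +
        ⌈Real.log (4 * d / min ε 1)⌉₊)))
      (1 + φ (min ε 1 / (2 * ((2 + ρ) * d)))), fun n hn => ?_⟩
  rw [Real.dist_eq, sub_zero, abs_of_nonneg (norm_nonneg _)]
  exact lt_of_lt_of_le (main _ hε' n hn) (min_le_left _ _)
end

section
/- Let X be a normed space, C ⊆ X a nonempty bounded convex subset with diameter d_C > 0, T : C → C nonexpansive, Φ : C → C a ρ-contraction, and α_n = 1/(n+1) for all n ≥ 0. Then for every x_0 ∈ C the iteration x_{n+1} = T(α_n Φ(x_n) + (1 − α_n)x_n) satisfies lim ‖x_n − Tx_n‖ = 0 and, for all ε ∈ (0,2), ‖x_n − Tx_n‖ < ε for all n ≥ Θ(ρ, d_C, ε), where Θ(ρ, d_C, ε) = exp( (4/(1 − ρ)) · (16 d_C/ε + 2) ). -/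
open Filter

set_option maxHeartbeats 1000000 in
theorem stmt_15
    {X : Type*} [NormedAddCommGroup X] [NormedSpace ℝ X]
    (C : Set X) (hC : C.Nonempty) (hconv : Convex ℝ C)
    (hbdd : Bornology.IsBounded C) (hdC : 0 < Metric.diam C)
    (T Φ : X → X) (hT : ∀ x ∈ C, T x ∈ C) (hΦ : ∀ x ∈ C, Φ x ∈ C)
    (hTne : ∀ x ∈ C, ∀ y ∈ C, ‖T x - T y‖ ≤ ‖x - y‖)
    (ρ : ℝ) (hρ : ρ ∈ Set.Ioo (0 : ℝ) 1)
    (hΦc : ∀ x ∈ C, ∀ y ∈ C, ‖Φ x - Φ y‖ ≤ ρ * ‖x - y‖)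
    (α : ℕ → ℝ) (hαdef : ∀ n : ℕ, α n = 1 / (n + 1))
    (x : ℕ → X) (hx0 : x 0 ∈ C) (hxC : ∀ n, x n ∈ C)
    (hrec : ∀ n, x (n + 1) = T (α n • Φ (x n) + (1 - α n) • x n)) :
    Tendsto (fun n => ‖x n - T (x n)‖) atTop (nhds 0) ∧
      ∀ e ∈ Set.Ioo (0 : ℝ) 2, ∀ n : ℕ,
        Real.exp ((4 / (1 - ρ)) * (16 * Metric.diam C / e + 2)) ≤ (n : ℝ) →
        ‖x n - T (x n)‖ < e := by
  obtain ⟨hρ0, hρ1⟩ := hρ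
  set d := Metric.diam C with hd
  have hd0 : 0 < d := hdC
  set β := 1 - ρ with hβ
  have hβ0 : 0 < β := by rw [hβ]; linarith
  have hβ1 : β ≤ 1 := by rw [hβ]; linarith
  have hnd : ∀ a ∈ C, ∀ b ∈ C, ‖a - b‖ ≤ d := by
    intro a ha b hb
    rw [← dist_eq_norm]
    exact Metric.dist_le_diam_of_mem hbdd ha hb
  have hα0 : ∀ n : ℕ, 0 < α n := by
    intro n; rw [hαdef]; positivity
  have hα1 : ∀ n : ℕ, α n ≤ 1 := by
    intro n; rw [hαdef]
    rw [div_le_one (by positivity)]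
    have : (0:ℝ) ≤ (n:ℝ) := Nat.cast_nonneg n
    linarith
  have hαanti : ∀ m n : ℕ, m ≤ n → α n ≤ α m := by
    intro m n hmn
    rw [hαdef, hαdef]
    apply one_div_le_one_div_of_le (by positivity)
    have : (m:ℝ) ≤ (n:ℝ) := Nat.cast_le.mpr hmn
    linarith
  set y : ℕ → X := fun n => α n • Φ (x n) + (1 - α n) • x n with hy
  have hyn : ∀ n, y n = α n • Φ (x n) + (1 - α n) • x n := fun n => rfl
  have hyC : ∀ n, y n ∈ C := by
    intro n
    exact hconv (hΦ _ (hxC n)) (hxC n) (hα0 n).le (by linarith [hα1 n]) (by ring)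
  set s : ℕ → ℝ := fun n => ‖x (n + 1) - x n‖ with hs
  have hsn : ∀ n, s n = ‖x (n + 1) - x n‖ := fun n => rfl
  have hsd : ∀ n, s n ≤ d := fun n => hnd _ (hxC _) _ (hxC _)
  have hΦd : ∀ n, ‖x n - Φ (x n)‖ ≤ d := fun n => hnd _ (hxC n) _ (hΦ _ (hxC n))
  -- key recursion
  have hkey : ∀ n, s (n + 1) ≤ (1 - β * α (n + 1)) * s n + (α n - α (n + 1)) * d := by
    intro n
    have h1 : x (n + 2) = T (y (n + 1)) := hrec (n + 1)
    have h2 : x (n + 1) = T (y n) := hrec n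
    have hαd : 0 ≤ α n - α (n + 1) := by linarith [hαanti n (n+1) (Nat.le_succ n)]
    have h3 : s (n + 1) ≤ ‖y (n + 1) - y n‖ := by
      rw [hsn]
      calc ‖x (n + 1 + 1) - x (n + 1)‖ = ‖T (y (n + 1)) - T (y n)‖ := by rw [h1, h2]
        _ ≤ ‖y (n + 1) - y n‖ := hTne _ (hyC _) _ (hyC _)
    have hid : y (n + 1) - y n
        = α (n + 1) • (Φ (x (n + 1)) - Φ (x n)) + (1 - α (n + 1)) • (x (n + 1) - x n)
          + (α n - α (n + 1)) • (x n - Φ (x n)) := by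
      rw [hyn, hyn]; module
    have hb1 : ‖Φ (x (n + 1)) - Φ (x n)‖ ≤ ρ * s n := by
      rw [hsn]; exact hΦc _ (hxC _) _ (hxC _)
    calc s (n + 1) ≤ ‖y (n + 1) - y n‖ := h3
      _ ≤ ‖α (n + 1) • (Φ (x (n + 1)) - Φ (x n))‖ + ‖(1 - α (n + 1)) • (x (n + 1) - x n)‖
          + ‖(α n - α (n + 1)) • (x n - Φ (x n))‖ := by rw [hid]; exact norm_add₃_le
      _ ≤ α (n + 1) * (ρ * s n) + (1 - α (n + 1)) * s n + (α n - α (n + 1)) * d := by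
          rw [norm_smul, norm_smul, norm_smul,
            Real.norm_of_nonneg (hα0 (n + 1)).le,
            Real.norm_of_nonneg (by linarith [hα1 (n + 1)] : (0:ℝ) ≤ 1 - α (n + 1)),
            Real.norm_of_nonneg hαd]
          have e1 : α (n + 1) * ‖Φ (x (n + 1)) - Φ (x n)‖ ≤ α (n + 1) * (ρ * s n) :=
            mul_le_mul_of_nonneg_left hb1 (hα0 (n + 1)).le
          have e2 : (1 - α (n + 1)) * ‖x (n + 1) - x n‖ ≤ (1 - α (n + 1)) * s n := by
            rw [hsn]
          have e3 : (α n - α (n + 1)) * ‖x n - Φ (x n)‖ ≤ (α n - α (n + 1)) * d :=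
            mul_le_mul_of_nonneg_left (hΦd n) hαd
          linarith
      _ = (1 - β * α (n + 1)) * s n + (α n - α (n + 1)) * d := by rw [hβ]; ring
  -- log telescoping helper
  have hlog : ∀ t : ℝ, 0 < t → Real.log (t + 1) - Real.log t ≤ 1 / t := by
    intro t ht
    have h := Real.log_le_sub_one_of_pos (x := (t + 1) / t) (by positivity)
    rw [Real.log_div (by positivity) ht.ne'] at h
    have h2 : (t + 1) / t - 1 = 1 / t := by field_simp; ring
    linarith
  -- main induction
  have hmain : ∀ m n : ℕ, m ≤ n →
      s n ≤ d * Real.exp (β * (Real.log ((m:ℝ) + 2) - Real.log ((n:ℝ) + 2)))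
        + (α m - α n) * d := by
    intro m n hmn
    induction n, hmn using Nat.le_induction with
    | base =>
        simp only [sub_self, mul_zero, Real.exp_zero, mul_one, zero_mul, add_zero]
        exact hsd m
    | succ n hmn ih =>
        have hfac0 : 0 ≤ 1 - β * α (n + 1) := by
          nlinarith [hα1 (n + 1), (hα0 (n + 1)).le]
        have hfac : 1 - β * α (n + 1) ≤ Real.exp (-(β * α (n + 1))) := by
          linarith [Real.add_one_le_exp (-(β * α (n + 1)))]
        have hαval : α (n + 1) = 1 / ((n:ℝ) + 2) := by
          rw [hαdef]; push_cast; ring_nf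
        have harg : ((↑(n + 1):ℝ) + 2) = ((n:ℝ) + 2) + 1 := by push_cast; ring
        have hexp : Real.exp (-(β * α (n + 1)))
            * Real.exp (β * (Real.log ((m:ℝ) + 2) - Real.log ((n:ℝ) + 2)))
            ≤ Real.exp (β * (Real.log ((m:ℝ) + 2) - Real.log ((↑(n + 1):ℝ) + 2))) := by
          rw [← Real.exp_add]
          apply Real.exp_le_exp.mpr
          rw [harg, hαval]
          have h2 := hlog ((n:ℝ) + 2) (by positivity)
          nlinarith [mul_le_mul_of_nonneg_left h2 hβ0.le]
        have hE : (1 - β * α (n + 1))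
            * Real.exp (β * (Real.log ((m:ℝ) + 2) - Real.log ((n:ℝ) + 2)))
            ≤ Real.exp (β * (Real.log ((m:ℝ) + 2) - Real.log ((↑(n + 1):ℝ) + 2))) :=
          le_trans (mul_le_mul_of_nonneg_right hfac (Real.exp_pos _).le) hexp
        have hαmn : α n ≤ α m := hαanti m n hmn
        have step := hkey n
        have hdist : (1 - β * α (n + 1))
            * (d * Real.exp (β * (Real.log ((m:ℝ) + 2) - Real.log ((n:ℝ) + 2)))
              + (α m - α n) * d)
            = (1 - β * α (n + 1)) * (d * Real.exp (β * (Real.log ((m:ℝ) + 2) - Real.log ((n:ℝ) + 2))))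
              + (1 - β * α (n + 1)) * ((α m - α n) * d) := by ring
        have t1 : (1 - β * α (n + 1))
            * (d * Real.exp (β * (Real.log ((m:ℝ) + 2) - Real.log ((n:ℝ) + 2))))
            ≤ d * Real.exp (β * (Real.log ((m:ℝ) + 2) - Real.log ((↑(n + 1):ℝ) + 2))) := by
          nlinarith [mul_le_mul_of_nonneg_left hE hd0.le]
        have t2 : (1 - β * α (n + 1)) * ((α m - α n) * d) ≤ (α m - α n) * d := by
          nlinarith [mul_nonneg (sub_nonneg.mpr hαmn) hd0.le,
            mul_nonneg hβ0.le (hα0 (n + 1)).le]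
        have hmono : (1 - β * α (n + 1)) * s n
            ≤ (1 - β * α (n + 1))
              * (d * Real.exp (β * (Real.log ((m:ℝ) + 2) - Real.log ((n:ℝ) + 2)))
                + (α m - α n) * d) :=
          mul_le_mul_of_nonneg_left ih hfac0
        rw [hdist] at hmono
        linarith
  -- distance to fixed point bound
  have hg : ∀ n : ℕ, ‖x n - T (x n)‖ ≤ s n + α n * d := by
    intro n
    have h2 : x (n + 1) = T (y n) := hrec n
    have h4 : ‖T (y n) - T (x n)‖ ≤ ‖y n - x n‖ := hTne _ (hyC n) _ (hxC n)
    have h5 : y n - x n = α n • (Φ (x n) - x n) := by rw [hyn]; module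
    have h6 : ‖y n - x n‖ ≤ α n * d := by
      rw [h5, norm_smul, Real.norm_of_nonneg (hα0 n).le]
      have h7 : ‖Φ (x n) - x n‖ ≤ d := by rw [norm_sub_rev]; exact hΦd n
      exact mul_le_mul_of_nonneg_left h7 (hα0 n).le
    have e1 : ‖x n - x (n + 1)‖ = s n := by rw [hsn, norm_sub_rev]
    have e2 : ‖x (n + 1) - T (x n)‖ ≤ α n * d := by
      rw [h2]; exact le_trans h4 h6
    calc ‖x n - T (x n)‖ = ‖x n - x (n + 1) + (x (n + 1) - T (x n))‖ := by
          rw [sub_add_sub_cancel]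
      _ ≤ ‖x n - x (n + 1)‖ + ‖x (n + 1) - T (x n)‖ := norm_add_le _ _
      _ ≤ s n + α n * d := by rw [e1]; linarith
  -- quantitative claim
  have hquant : ∀ e ∈ Set.Ioo (0 : ℝ) 2, ∀ n : ℕ,
      Real.exp ((4 / β) * (16 * d / e + 2)) ≤ (n : ℝ) → ‖x n - T (x n)‖ < e := by
    rintro e ⟨he0, he2⟩ n hn
    set K := (4 / β) * (16 * d / e + 2) with hK
    set m := Nat.ceil (4 * d / e) with hm
    have hm1 : 4 * d / e ≤ (m:ℝ) := Nat.le_ceil _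
    have hm2 : (m:ℝ) ≤ 4 * d / e + 1 := by
      have := Nat.ceil_lt_add_one (show (0:ℝ) ≤ 4 * d / e by positivity)
      exact this.le
    have hKbig : 4 * d / e + 3 + (1 / β) * (2 * d / e) < K := by
      have hbe : (0:ℝ) < β * e := mul_pos hβ0 he0
      have lhs_eq : (4 * d / e + 3 + (1 / β) * (2 * d / e)) * (β * e)
          = 4 * d * β + 3 * β * e + 2 * d := by field_simp
      have rhs_eq : K * (β * e) = 64 * d + 8 * e := by rw [hK]; field_simp; ring
      have hstep : (4 * d / e + 3 + (1 / β) * (2 * d / e)) * (β * e) < K * (β * e) := by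
        rw [lhs_eq, rhs_eq]
        nlinarith [mul_pos hd0 hβ0, mul_pos hβ0 he0]
      exact lt_of_mul_lt_mul_right (by linarith [hstep]) hbe.le
    have hexpK : K + 1 ≤ Real.exp K := Real.add_one_le_exp K
    have hde_pos : (0:ℝ) < 2 * d / e := by positivity
    have hKpos : 0 < K := by
      have : 0 < (1 / β) * (2 * d / e) := by positivity
      have : 0 < 4 * d / e := by positivity
      linarith
    -- m ≤ n
    have hmn : m ≤ n := by
      have h1 : (m:ℝ) ≤ (n:ℝ) := by
        have : (0:ℝ) < (1 / β) * (2 * d / e) := by positivity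
        linarith
      exact_mod_cast h1
    -- d * α m ≤ e / 4
    have hαm : α m * d ≤ e / 4 := by
      have h4d : 4 * d ≤ (m:ℝ) * e := (div_le_iff₀ he0).mp hm1
      rw [hαdef, one_div, inv_mul_eq_div, div_le_div_iff₀ (by positivity) (by norm_num)]
      nlinarith [h4d, he0.le]
    -- log bounds
    have hlogn : K < Real.log ((n:ℝ) + 2) := by
      have h1 : Real.exp K < (n:ℝ) + 2 := by linarith
      exact (Real.lt_log_iff_exp_lt (by positivity)).mpr h1
    have hlogm : Real.log ((m:ℝ) + 2) ≤ 4 * d / e + 3 := by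
      have h1 : Real.log ((m:ℝ) + 2) ≤ (m:ℝ) + 2 - 1 :=
        Real.log_le_sub_one_of_pos (by positivity)
      linarith
    have hlog2 : Real.log (2 * d / e) ≤ 2 * d / e := by
      linarith [Real.log_le_sub_one_of_pos hde_pos]
    have hln : Real.log ((m:ℝ) + 2) + (1 / β) * Real.log (2 * d / e)
        < Real.log ((n:ℝ) + 2) := by
      have h1 : (1 / β) * Real.log (2 * d / e) ≤ (1 / β) * (2 * d / e) :=
        mul_le_mul_of_nonneg_left hlog2 (by positivity)
      linarith
    have hEbound : d * Real.exp (β * (Real.log ((m:ℝ) + 2) - Real.log ((n:ℝ) + 2)))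
        < e / 2 := by
      have h1 : β * (Real.log ((m:ℝ) + 2) - Real.log ((n:ℝ) + 2))
          < Real.log (e / (2 * d)) := by
        have hlog_inv : Real.log (e / (2 * d)) = - Real.log (2 * d / e) := by
          rw [show e / (2 * d) = (2 * d / e)⁻¹ by rw [inv_div], Real.log_inv]
        rw [hlog_inv]
        have h := mul_lt_mul_of_pos_left hln hβ0
        have hb : β * (Real.log ((m:ℝ) + 2) + (1 / β) * Real.log (2 * d / e))
            = β * Real.log ((m:ℝ) + 2) + Real.log (2 * d / e) := by
          field_simp
        rw [hb] at h
        nlinarith [h]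
      have h2 : Real.exp (β * (Real.log ((m:ℝ) + 2) - Real.log ((n:ℝ) + 2)))
          < e / (2 * d) :=
        lt_of_lt_of_le (Real.exp_lt_exp.mpr h1) (le_of_eq (Real.exp_log (by positivity)))
      have h3 := mul_lt_mul_of_pos_left h2 hd0
      have h4 : d * (e / (2 * d)) = e / 2 := by field_simp
      linarith [h3, h4.le]
    have h1 := hmain m n hmn
    have h2 := hg n
    have h5 : α n * d ≤ α m * d := mul_le_mul_of_nonneg_right (hαanti m n hmn) hd0.le
    calc ‖x n - T (x n)‖ ≤ s n + α n * d := h2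
      _ ≤ (d * Real.exp (β * (Real.log ((m:ℝ) + 2) - Real.log ((n:ℝ) + 2)))
            + (α m - α n) * d) + α n * d := by linarith
      _ = d * Real.exp (β * (Real.log ((m:ℝ) + 2) - Real.log ((n:ℝ) + 2))) + α m * d := by
          ring
      _ < e / 2 + e / 4 := by linarith
      _ < e := by linarith
  refine ⟨?_, hquant⟩
  rw [Metric.tendsto_atTop]
  intro ε hε
  set e := min ε 1 with he_def
  have he : e ∈ Set.Ioo (0 : ℝ) 2 :=
    ⟨lt_min hε one_pos, lt_of_le_of_lt (min_le_right _ _) one_lt_two⟩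
  obtain ⟨N, hN⟩ := exists_nat_ge (Real.exp ((4 / β) * (16 * d / e + 2)))
  refine ⟨N, fun n hn => ?_⟩
  rw [Real.dist_eq, sub_zero, abs_of_nonneg (norm_nonneg _)]
  have hcast : (N:ℝ) ≤ (n:ℝ) := Nat.cast_le.mpr hn
  exact lt_of_lt_of_le (hquant e he n (le_trans hN hcast)) (min_le_left _ _)
end

section
/- Let H be a Hilbert space, T : H → H a nonexpansive mapping with nonempty fixed point set F = {x : Tx = x}, A : H → H an L-Lipschitzian η-strongly monotone operator, and Φ : H → H a ρ-contraction. Let 0 < γ < η/ρ, and let {α_n} ⊂ (0,1) satisfy lim α_n = 0, ∑ α_n = ∞, and either ∑ |α_{n+1} − α_n| < ∞ or lim α_n/α_{n+1} = 1. Then the sequence defined by x_{n+1} = Tx_n − α_n (A − γΦ)(Tx_n) converges strongly to the unique point q ∈ F satisfying the variational inequality ⟨(A − γΦ)q, q − x⟩ ≤ 0 for all x ∈ F. -/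
open Filter
open scoped RealInnerProductSpace

lemma prod_tendsto_zero (lam : ℕ → ℝ) (N : ℕ) (h0 : ∀ n, 0 ≤ lam n)
    (h1 : ∀ k, N ≤ k → lam k ≤ 1)
    (hsum : Tendsto (fun n => ∑ k ∈ Finset.range n, lam k) atTop atTop) :
    Tendsto (fun n => ∏ k ∈ Finset.Ico N n, (1 - lam k)) atTop (nhds 0) := by
  have hexp : Tendsto (fun n => Real.exp ((∑ k ∈ Finset.range N, lam k) - ∑ k ∈ Finset.range n, lam k)) atTop (nhds 0) := by
    apply Real.tendsto_exp_atBot.comp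
    apply tendsto_atBot_add_const_left
    exact tendsto_neg_atBot_iff.mpr hsum
  apply squeeze_zero (g := fun n => Real.exp ((∑ k ∈ Finset.range N, lam k) - ∑ k ∈ Finset.range n, lam k)) _ _ hexp
  · intro n
    exact Finset.prod_nonneg (fun k hk => by linarith [h1 k (Finset.mem_Ico.mp hk).1])
  intro n
  rcases le_or_gt N n with h | h
  · have hle : ∏ k ∈ Finset.Ico N n, (1 - lam k) ≤ ∏ k ∈ Finset.Ico N n, Real.exp (-lam k) := by
      apply Finset.prod_le_prod (fun k hk => by linarith [h1 k (Finset.mem_Ico.mp hk).1])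
      intro k _
      have := Real.add_one_le_exp (-lam k)
      linarith
    calc ∏ k ∈ Finset.Ico N n, (1 - lam k) ≤ ∏ k ∈ Finset.Ico N n, Real.exp (-lam k) := hle
      _ = Real.exp (∑ k ∈ Finset.Ico N n, (-lam k)) := (Real.exp_sum _ _).symm
      _ = Real.exp ((∑ k ∈ Finset.range N, lam k) - ∑ k ∈ Finset.range n, lam k) := by
          rw [Finset.sum_neg_distrib, Finset.sum_Ico_eq_sub _ h]; ring_nf
  · rw [Finset.Ico_eq_empty (by omega)]
    simp only [Finset.prod_empty]
    rw [Real.one_le_exp_iff]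
    have : ∑ k ∈ Finset.range n, lam k ≤ ∑ k ∈ Finset.range N, lam k :=
      Finset.sum_le_sum_of_subset_of_nonneg (Finset.range_subset_range.mpr h.le) (fun k _ _ => h0 k)
    linarith

lemma xu_lemma (a lam b c : ℕ → ℝ) (ha : ∀ n, 0 ≤ a n)
    (hl0 : ∀ n, 0 ≤ lam n) (hl1 : ∀ᶠ n in atTop, lam n ≤ 1)
    (hsum : Tendsto (fun n => ∑ k ∈ Finset.range n, lam k) atTop atTop)
    (hb : ∀ ε > 0, ∀ᶠ n in atTop, b n ≤ ε)
    (hc : ∀ n, 0 ≤ c n) (hcs : Summable c)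
    (hrec : ∀ᶠ n in atTop, a (n+1) ≤ (1 - lam n) * a n + lam n * b n + c n) :
    Tendsto a atTop (nhds 0) := by
  rw [Metric.tendsto_atTop]
  intro ε hε
  have hε4 : 0 < ε/4 := by linarith
  obtain ⟨N1, hN1⟩ := (hb (ε/4) hε4).exists_forall_of_atTop
  obtain ⟨l, hl⟩ := hcs
  have hP : Tendsto (fun n => ∑ k ∈ Finset.range n, c k) atTop (nhds l) := hl.tendsto_sum_nat
  obtain ⟨N2, hN2⟩ := (Metric.tendsto_atTop.mp hP (ε/8) (by linarith)).imp (fun N h => h)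
  obtain ⟨N4, hN4⟩ := hl1.exists_forall_of_atTop
  obtain ⟨N5, hN5⟩ := hrec.exists_forall_of_atTop
  have htail : ∀ n, N2 ≤ n → ∑ k ∈ Finset.Ico N2 n, c k ≤ ε/4 := by
    intro n hn
    rw [Finset.sum_Ico_eq_sub _ hn]
    have h1 := hN2 n hn
    have h2 := hN2 N2 le_rfl
    rw [Real.dist_eq] at h1 h2
    linarith [(abs_lt.mp h1).1, (abs_lt.mp h1).2, (abs_lt.mp h2).1, (abs_lt.mp h2).2]
  obtain ⟨N, hNN1, hNN2, hNN4, hNN5⟩ : ∃ N, N1 ≤ N ∧ N2 ≤ N ∧ N4 ≤ N ∧ N5 ≤ N :=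
    ⟨max (max N1 N2) (max N4 N5), by omega, by omega, by omega, by omega⟩
  have key : ∀ n, N ≤ n → a n ≤ (∏ k ∈ Finset.Ico N n, (1 - lam k)) * a N + ε/4 + ∑ k ∈ Finset.Ico N n, c k := by
    intro n hn
    induction n with
    | zero =>
      have h0 : N = 0 := by omega
      subst h0; simp; linarith
    | succ m ih =>
      rcases Nat.lt_or_ge m N with hm | hm
      · have hmN : N = m + 1 := by omega
        subst hmN
        simp
        linarith
      · have ihm := ih hm
        have hbm : b m ≤ ε/4 := hN1 m (le_trans hNN1 hm)
        have hlb : lam m * b m ≤ lam m * (ε/4) := mul_le_mul_of_nonneg_left hbm (hl0 m)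
        have hpn : (0:ℝ) ≤ ∏ k ∈ Finset.Ico N m, (1 - lam k) :=
          Finset.prod_nonneg (fun k hk => by linarith [hN4 k (le_trans hNN4 (Finset.mem_Ico.mp hk).1)])
        have hcn : (0:ℝ) ≤ ∑ k ∈ Finset.Ico N m, c k := Finset.sum_nonneg (fun k _ => hc k)
        have hprodsucc : ∏ k ∈ Finset.Ico N (m+1), (1 - lam k) = (∏ k ∈ Finset.Ico N m, (1 - lam k)) * (1 - lam m) :=
          Finset.prod_Ico_succ_top hm _
        have hsumsucc : ∑ k ∈ Finset.Ico N (m+1), c k = (∑ k ∈ Finset.Ico N m, c k) + c m :=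
          Finset.sum_Ico_succ_top hm _
        have h1m : 0 ≤ 1 - lam m := by linarith [hN4 m (le_trans hNN4 hm)]
        have step := hN5 m (le_trans hNN5 hm)
        rw [hprodsucc, hsumsucc]
        nlinarith [mul_le_mul_of_nonneg_left ihm h1m, mul_nonneg hpn (ha N), mul_nonneg (hl0 m) hcn]
  have hprod0 : Tendsto (fun n => (∏ k ∈ Finset.Ico N n, (1 - lam k)) * a N) atTop (nhds 0) := by
    simpa using (prod_tendsto_zero lam N hl0 (fun k hk => hN4 k (le_trans hNN4 hk)) hsum).mul_const (a N)
  obtain ⟨N3, hN3⟩ := (Metric.tendsto_atTop.mp hprod0 (ε/4) hε4).imp (fun N h => h)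
  refine ⟨max N N3, fun n hn => ?_⟩
  have h1 := key n (le_trans (le_max_left _ _) hn)
  have h2 := hN3 n (le_trans (le_max_right _ _) hn)
  rw [Real.dist_eq, sub_zero] at h2 ⊢
  have htailn : ∑ k ∈ Finset.Ico N n, c k ≤ ε/4 := by
    calc ∑ k ∈ Finset.Ico N n, c k ≤ ∑ k ∈ Finset.Ico N2 n, c k := by
          apply Finset.sum_le_sum_of_subset_of_nonneg _ (fun k _ _ => hc k)
          exact Finset.Ico_subset_Ico hNN2 le_rfl
      _ ≤ ε/4 := htail n (le_trans (le_trans hNN2 (le_max_left N N3)) hn)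
  rw [abs_of_nonneg (ha n)]
  linarith [(abs_lt.mp h2).2]

lemma weak_cluster {H : Type*} [NormedAddCommGroup H] [InnerProductSpace ℝ H] [CompleteSpace H]
    (u : ℕ → H) (R : ℝ) (hu : ∀ n, ‖u n‖ ≤ R) :
    ∃ z : H, ∃ G : Filter ℕ, G.NeBot ∧ G ≤ atTop ∧
      ∀ v : H, Filter.Tendsto (fun n => ⟪u n, v⟫) G (nhds ⟪z, v⟫) := by
  set D := InnerProductSpace.toDual ℝ H
  set g : H → WeakDual ℝ H := fun y => StrongDual.toWeakDual (D y) with hg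
  have hs : IsCompact (WeakDual.toStrongDual ⁻¹' Metric.closedBall (0 : StrongDual ℝ H) R) :=
    WeakDual.isCompact_closedBall (𝕜 := ℝ) (E := H) 0 R
  have hmem : ∀ n, g (u n) ∈ (WeakDual.toStrongDual ⁻¹' Metric.closedBall (0 : StrongDual ℝ H) R) := by
    intro n
    simp only [Set.mem_preimage, Metric.mem_closedBall, dist_zero_right]
    have : ‖D (u n)‖ = ‖u n‖ := (D.norm_map (u n))
    simpa [g, this] using hu n
  have hle : Filter.map (g ∘ u) Filter.atTop ≤ Filter.principal (WeakDual.toStrongDual ⁻¹' Metric.closedBall (0 : StrongDual ℝ H) R) := by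
    rw [Filter.le_principal_iff, Filter.mem_map]
    exact Filter.Eventually.of_forall (fun n => hmem n)
  obtain ⟨ψ, hψs, hclus⟩ := hs.exists_clusterPt hle
  refine ⟨D.symm (WeakDual.toStrongDual ψ), atTop ⊓ Filter.comap (g ∘ u) (nhds ψ), ?_, inf_le_left, ?_⟩
  · have h1 : (nhds ψ ⊓ Filter.map (g ∘ u) Filter.atTop).NeBot := hclus
    have h2 : Filter.map (g ∘ u) (atTop ⊓ Filter.comap (g ∘ u) (nhds ψ))
        = Filter.map (g ∘ u) atTop ⊓ nhds ψ := Filter.push_pull (g ∘ u) _ _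
    have : (Filter.map (g ∘ u) (atTop ⊓ Filter.comap (g ∘ u) (nhds ψ))).NeBot := by
      rw [h2, inf_comm]; exact h1
    exact Filter.map_neBot_iff (g ∘ u) |>.mp this
  · intro v
    have hgt : Filter.Tendsto (g ∘ u) (atTop ⊓ Filter.comap (g ∘ u) (nhds ψ)) (nhds ψ) := by
      rw [Filter.tendsto_iff_comap]; exact inf_le_right
    have hev : Filter.Tendsto (fun φ : WeakDual ℝ H => φ v) (nhds ψ) (nhds (ψ v)) :=
      (WeakDual.eval_continuous v).tendsto ψ
    have hc := hev.comp hgt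
    have heq : (fun n : ℕ => ((g ∘ u) n) v) = fun n : ℕ => ⟪u n, v⟫ := by
      funext n; exact InnerProductSpace.toDual_apply_apply
    have hψv : ψ v = ⟪D.symm (WeakDual.toStrongDual ψ), v⟫ := by
      show ψ v = D (D.symm (WeakDual.toStrongDual ψ)) v
      rw [D.apply_symm_apply]; rfl
    rw [← heq, ← hψv]
    exact hc

section
variable {H : Type*} [NormedAddCommGroup H] [InnerProductSpace ℝ H]

lemma demiclosed_key (T : H → H) (hTne : ∀ x y : H, ‖T x - T y‖ ≤ ‖x - y‖) (z y : H) :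
    ‖z - T z‖^2 ≤ 2*⟪z - y, z - T z⟫ + 2*‖y - T y‖*‖y - z‖ + ‖y - T y‖^2 := by
  have h1 : ‖y - T z‖^2 = ‖y - z‖^2 + 2*⟪y - z, z - T z⟫ + ‖z - T z‖^2 := by
    have : y - T z = (y - z) + (z - T z) := by abel
    rw [this, @norm_add_sq_real]
  have h2 : ‖y - T z‖ ≤ ‖y - T y‖ + ‖y - z‖ := by
    calc ‖y - T z‖ ≤ ‖y - T y‖ + ‖T y - T z‖ := by
          have : y - T z = (y - T y) + (T y - T z) := by abel
          rw [this]; exact norm_add_le _ _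
      _ ≤ ‖y - T y‖ + ‖y - z‖ := by linarith [hTne y z]
  have h3 : ‖y - T z‖^2 ≤ (‖y - T y‖ + ‖y - z‖)^2 := by
    apply pow_le_pow_left₀ (norm_nonneg _) h2
  have h4 : ⟪y - z, z - T z⟫ = -⟪z - y, z - T z⟫ := by
    rw [← inner_neg_left]; congr 1; abel
  nlinarith [h1, h3, h4]

lemma demiclosed (T : H → H) (hTne : ∀ x y : H, ‖T x - T y‖ ≤ ‖x - y‖)
    (u : ℕ → H) (R : ℝ) (hu : ∀ n, ‖u n‖ ≤ R)
    (z : H) (G : Filter ℕ) (hGne : G.NeBot) (hG : G ≤ atTop)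
    (hinner : ∀ v : H, Tendsto (fun n => ⟪u n, v⟫) G (nhds ⟪z, v⟫))
    (hfix : Tendsto (fun n => ‖u n - T (u n)‖) atTop (nhds 0)) : T z = z := by
  set w := z - T z with hw
  have hfixG : Tendsto (fun n => ‖u n - T (u n)‖) G (nhds 0) := hfix.mono_left hG
  have t1 : Tendsto (fun n => 2*⟪z - u n, w⟫) G (nhds 0) := by
    have : Tendsto (fun n => ⟪z - u n, w⟫) G (nhds 0) := by
      have h := (hinner w).const_sub ⟪z, w⟫
      have heq : (fun n => ⟪z, w⟫ - ⟪u n, w⟫) = fun n => ⟪z - u n, w⟫ := by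
        funext n; rw [inner_sub_left]
      rw [heq] at h
      simpa using h
    simpa using this.const_mul 2
  have t2 : Tendsto (fun n => 2*‖u n - T (u n)‖*(R + ‖z‖)) G (nhds 0) := by
    simpa using (hfixG.const_mul 2).mul_const (R + ‖z‖)
  have t3 : Tendsto (fun n => ‖u n - T (u n)‖^2) G (nhds 0) := by
    simpa using hfixG.pow 2
  have hbig : Tendsto (fun n => 2*⟪z - u n, w⟫ + 2*‖u n - T (u n)‖*(R + ‖z‖) + ‖u n - T (u n)‖^2)
      G (nhds 0) := by
    simpa using (t1.add t2).add t3
  have hle : ∀ n, ‖w‖^2 ≤ 2*⟪z - u n, w⟫ + 2*‖u n - T (u n)‖*(R + ‖z‖) + ‖u n - T (u n)‖^2 := by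
    intro n
    have hkey := demiclosed_key T hTne z (u n)
    have hRz : ‖u n - z‖ ≤ R + ‖z‖ := by
      calc ‖u n - z‖ ≤ ‖u n‖ + ‖z‖ := norm_sub_le _ _
        _ ≤ R + ‖z‖ := by linarith [hu n]
    have : 2*‖u n - T (u n)‖*‖u n - z‖ ≤ 2*‖u n - T (u n)‖*(R + ‖z‖) :=
      mul_le_mul_of_nonneg_left hRz (by positivity)
    calc ‖w‖^2 ≤ 2*⟪z - u n, w⟫ + 2*‖u n - T (u n)‖*‖u n - z‖ + ‖u n - T (u n)‖^2 := hkey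
      _ ≤ _ := by linarith
  have : ‖w‖^2 ≤ 0 := ge_of_tendsto' hbig hle
  have hw0 : w = 0 := by
    have : ‖w‖ = 0 := by nlinarith [norm_nonneg w, sq_nonneg ‖w‖]
    exact norm_eq_zero.mp this
  have := sub_eq_zero.mp hw0
  exact this.symm

lemma quad_ineq (K μ t d e ip : ℝ) (hμ : 0 < μ) (hμK : μ ≤ K) (ht0 : 0 ≤ t)
    (htK : t * K^2 ≤ μ) (hd : 0 ≤ d) (he : 0 ≤ e) (hip : μ * d^2 ≤ ip) (heK : e ≤ K * d) :
    d^2 - 2*(t*ip) + (t*e)^2 ≤ ((1 - t*μ/2)*d)^2 := by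
  have f1 : t^2*e^2 ≤ t^2*((K*d)^2) :=
    mul_le_mul_of_nonneg_left (pow_le_pow_left₀ he heK 2) (sq_nonneg t)
  have f2 : t*(t*K^2)*d^2 ≤ t*μ*d^2 :=
    mul_le_mul_of_nonneg_right (mul_le_mul_of_nonneg_left htK ht0) (sq_nonneg d)
  have f3 : (2*t)*(μ*d^2) ≤ (2*t)*ip := mul_le_mul_of_nonneg_left hip (by positivity)
  have f4 : 0 ≤ t^2*μ^2*d^2 := by positivity
  nlinarith [f1, f2, f3, f4]

lemma contraction_step (f : H → H) (K μ : ℝ) (hμ : 0 < μ) (hμK : μ ≤ K)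
    (hf : ∀ x y : H, ‖f x - f y‖ ≤ K * ‖x - y‖)
    (hm : ∀ x y : H, μ * ‖x - y‖^2 ≤ ⟪f x - f y, x - y⟫)
    (t : ℝ) (ht0 : 0 ≤ t) (htK : t * K^2 ≤ μ) (x y : H) :
    ‖(x - t • f x) - (y - t • f y)‖ ≤ (1 - t*μ/2) * ‖x - y‖ := by
  have hK : 0 < K := lt_of_lt_of_le hμ hμK
  have htμ : t * μ ≤ 1 := by
    nlinarith [mul_le_mul_of_nonneg_left htK hμ.le, pow_le_pow_left₀ hμ.le hμK 2, mul_pos hK hK]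
  have hcoef : 0 ≤ 1 - t*μ/2 := by linarith
  have heq : (x - t • f x) - (y - t • f y) = (x - y) - t • (f x - f y) := by
    rw [smul_sub]; abel
  rw [heq]
  have hsq : ‖(x - y) - t • (f x - f y)‖^2 ≤ ((1 - t*μ/2) * ‖x - y‖)^2 := by
    rw [@norm_sub_sq_real]
    rw [real_inner_smul_right, norm_smul, Real.norm_eq_abs, abs_of_nonneg ht0]
    have h1 : μ * ‖x - y‖^2 ≤ ⟪f x - f y, x - y⟫ := hm x y
    have h1' : ⟪x - y, f x - f y⟫ = ⟪f x - f y, x - y⟫ := real_inner_comm _ _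
    have h2 : ‖f x - f y‖ ≤ K * ‖x - y‖ := hf x y
    have h3 : ‖f x - f y‖^2 ≤ K^2 * ‖x - y‖^2 := by nlinarith [norm_nonneg (f x - f y), norm_nonneg (x - y)]
    rw [h1']
    exact quad_ineq K μ t ‖x - y‖ ‖f x - f y‖ _ hμ hμK ht0 htK (norm_nonneg _) (norm_nonneg _) h1 h2
  have := le_of_pow_le_pow_left₀ (two_ne_zero) (by positivity) hsq
  exact this

end

section
variable {H : Type*} [NormedAddCommGroup H] [InnerProductSpace ℝ H] [CompleteSpace H]

lemma exists_q (T : H → H) (hTne : ∀ x y : H, ‖T x - T y‖ ≤ ‖x - y‖)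
    (hF : ∃ p : H, T p = p)
    (f : H → H) (K μ : ℝ) (hμ : 0 < μ) (hμK : μ ≤ K)
    (hf : ∀ x y : H, ‖f x - f y‖ ≤ K * ‖x - y‖)
    (hm : ∀ x y : H, μ * ‖x - y‖^2 ≤ ⟪f x - f y, x - y⟫) :
    ∃ q : H, T q = q ∧ ∀ p : H, T p = p → ⟪f q, q - p⟫ ≤ 0 := by
  obtain ⟨p, hp⟩ := hF
  have hK : 0 < K := lt_of_lt_of_le hμ hμK
  have : Nonempty H := ⟨0⟩
  set t : ℕ → ℝ := fun n => μ / (K^2 * (n+1)) with ht_def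
  have ht0 : ∀ n, 0 < t n := fun n => by positivity
  have htK : ∀ n, t n * K^2 ≤ μ := by
    intro n
    have h1 : t n * K^2 = μ / (n+1) := by
      simp only [ht_def]
      field_simp
    rw [h1]
    exact div_le_self hμ.le (by push_cast; linarith [Nat.cast_nonneg (α := ℝ) n])
  have htone : ∀ n, t n * μ ≤ 1 := by
    intro n
    have h2 := htK n
    nlinarith [mul_le_mul_of_nonneg_left h2 hμ.le, pow_le_pow_left₀ hμ.le hμK 2,
      mul_pos hK hK, (ht0 n).le]
  have htend : Tendsto t atTop (nhds 0) := by
    have h1 : Tendsto (fun n : ℕ => 1/((n:ℝ)+1)) atTop (nhds 0) :=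
      tendsto_one_div_add_atTop_nhds_zero_nat
    have h2 := h1.const_mul (μ/K^2)
    rw [mul_zero] at h2
    apply h2.congr
    intro n
    rw [ht_def]
    field_simp
  -- contraction and fixed points
  have hcontr : ∀ n (a b : H),
      ‖(T a - t n • f (T a)) - (T b - t n • f (T b))‖ ≤ (1 - t n*μ/2) * ‖a - b‖ := by
    intro n a b
    calc ‖(T a - t n • f (T a)) - (T b - t n • f (T b))‖
        ≤ (1 - t n*μ/2) * ‖T a - T b‖ :=
          contraction_step f K μ hμ hμK hf hm (t n) (ht0 n).le (htK n) (T a) (T b)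
      _ ≤ (1 - t n*μ/2) * ‖a - b‖ := by
          apply mul_le_mul_of_nonneg_left (hTne a b)
          nlinarith [htone n]
  have hzex : ∀ n, ∃ z : H, T z - t n • f (T z) = z := by
    intro n
    have hc1 : (1 : ℝ) - t n*μ/2 < 1 := by nlinarith [ht0 n, hμ]
    have hc0 : (0:ℝ) ≤ 1 - t n*μ/2 := by nlinarith [htone n]
    have hlip : LipschitzWith (Real.toNNReal (1 - t n*μ/2)) (fun a => T a - t n • f (T a)) := by
      apply LipschitzWith.of_dist_le_mul
      intro a b
      rw [dist_eq_norm, dist_eq_norm, Real.coe_toNNReal _ hc0]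
      exact hcontr n a b
    have hcw : ContractingWith (Real.toNNReal (1 - t n*μ/2)) (fun a => T a - t n • f (T a)) := by
      constructor
      · rw [← NNReal.coe_lt_one, Real.coe_toNNReal _ hc0]
        exact hc1
      · exact hlip
    exact ⟨hcw.fixedPoint _, hcw.fixedPoint_isFixedPt⟩
  choose z hzfix using hzex
  set w : ℕ → H := fun n => T (z n) with hw_def
  -- bound on z n - p
  have hzb : ∀ n, ‖z n - p‖ ≤ 2*‖f p‖/μ := by
    intro n
    have e1 : ‖z n - p‖ ≤ ‖(T (z n) - t n • f (T (z n))) - (p - t n • f p)‖ + t n * ‖f p‖ := by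
      have : z n - p = ((T (z n) - t n • f (T (z n))) - (p - t n • f p)) + (- t n • f p) := by
        rw [hzfix n]; module
      rw [this]
      calc ‖_ + (- t n • f p)‖ ≤ ‖(T (z n) - t n • f (T (z n))) - (p - t n • f p)‖ + ‖(- t n • f p)‖ := norm_add_le _ _
        _ = _ := by
            rw [norm_smul, Real.norm_eq_abs, abs_neg, abs_of_nonneg (ht0 n).le]
    have e2 : ‖(T (z n) - t n • f (T (z n))) - (p - t n • f p)‖ ≤ (1 - t n*μ/2) * ‖z n - p‖ := by
      have := hcontr n (z n) p
      rw [hp] at this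
      exact this
    have e3 : ‖z n - p‖ ≤ (1 - t n*μ/2) * ‖z n - p‖ + t n * ‖f p‖ := le_trans e1 (by linarith)
    have e4 : t n * μ/2 * ‖z n - p‖ ≤ t n * ‖f p‖ := by nlinarith
    rw [le_div_iff₀ hμ]
    nlinarith [ht0 n]
  set R0 : ℝ := 2*‖f p‖/μ with hR0
  have hR0nn : 0 ≤ R0 := by positivity
  have hwb : ∀ n, ‖w n - p‖ ≤ R0 := by
    intro n
    calc ‖w n - p‖ = ‖T (z n) - T p‖ := by rw [hw_def, hp]
      _ ≤ ‖z n - p‖ := hTne _ _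
      _ ≤ R0 := hzb n
  set R1 : ℝ := R0 + ‖p‖ with hR1
  have hwR1 : ∀ n, ‖w n‖ ≤ R1 := by
    intro n
    calc ‖w n‖ = ‖(w n - p) + p‖ := by congr 1; abel
      _ ≤ ‖w n - p‖ + ‖p‖ := norm_add_le _ _
      _ ≤ R1 := by linarith [hwb n]
  set Cf : ℝ := K*R0 + ‖f p‖ with hCf
  have hfw : ∀ n, ‖f (w n)‖ ≤ Cf := by
    intro n
    calc ‖f (w n)‖ = ‖(f (w n) - f p) + f p‖ := by congr 1; abel
      _ ≤ ‖f (w n) - f p‖ + ‖f p‖ := norm_add_le _ _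
      _ ≤ K * ‖w n - p‖ + ‖f p‖ := by linarith [hf (w n) p]
      _ ≤ Cf := by nlinarith [hwb n, hK]
  have hCfnn : 0 ≤ Cf := le_trans (norm_nonneg _) (hfw 0)
  have hzw : ∀ n, ‖z n - w n‖ ≤ t n * Cf := by
    intro n
    have : z n - w n = -(t n • f (w n)) := by
      rw [hw_def, ← hzfix n]; abel
    rw [this, norm_neg, norm_smul, Real.norm_eq_abs, abs_of_nonneg (ht0 n).le]
    exact mul_le_mul_of_nonneg_left (hfw n) (ht0 n).le
  have hzw0 : Tendsto (fun n => ‖z n - w n‖) atTop (nhds 0) := by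
    apply squeeze_zero (fun n => norm_nonneg _) hzw
    simpa using htend.mul_const Cf
  -- key VI inequality at each n
  have hVI : ∀ n (p' : H), T p' = p' → ⟪f (w n), z n - p'⟫ ≤ 0 := by
    intro n p' hp'
    have hid : ‖z n - p'‖^2 = ⟪w n - p', z n - p'⟫ - t n * ⟪f (w n), z n - p'⟫ := by
      have hz' : z n - p' = (w n - p') - t n • f (w n) := by
        rw [hw_def, ← hzfix n]; abel
      calc ‖z n - p'‖^2 = ⟪z n - p', z n - p'⟫ := (real_inner_self_eq_norm_sq _).symm
        _ = ⟪(w n - p') - t n • f (w n), z n - p'⟫ := by rw [← hz']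
        _ = ⟪w n - p', z n - p'⟫ - t n * ⟪f (w n), z n - p'⟫ := by
            rw [inner_sub_left, real_inner_smul_left]
    have h2 : ⟪w n - p', z n - p'⟫ ≤ ‖z n - p'‖^2 := by
      calc ⟪w n - p', z n - p'⟫ ≤ ‖w n - p'‖ * ‖z n - p'‖ := real_inner_le_norm _ _
        _ ≤ ‖z n - p'‖ * ‖z n - p'‖ := by
            apply mul_le_mul_of_nonneg_right _ (norm_nonneg _)
            calc ‖w n - p'‖ = ‖T (z n) - T p'‖ := by rw [hw_def, hp']
              _ ≤ ‖z n - p'‖ := hTne _ _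
        _ = ‖z n - p'‖^2 := by ring
    have h3 : t n * ⟪f (w n), z n - p'⟫ ≤ t n * 0 := by
      rw [mul_zero]; linarith
    exact le_of_mul_le_mul_left h3 (ht0 n)
  -- weak cluster point
  obtain ⟨q, G, hGne, hGle, hGinner⟩ := weak_cluster w R1 hwR1
  have hwT0 : Tendsto (fun n => ‖w n - T (w n)‖) atTop (nhds 0) := by
    apply squeeze_zero (fun n => norm_nonneg _) _ hzw0
    intro n
    calc ‖w n - T (w n)‖ = ‖T (z n) - T (w n)‖ := by rw [hw_def]
      _ ≤ ‖z n - w n‖ := hTne _ _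
  have hq : T q = q := demiclosed T hTne w R1 hwR1 q G hGne hGle hGinner hwT0
  -- strong convergence of w along G
  have hkey : ∀ n, μ*‖w n - q‖^2 ≤ Cf*(t n*Cf) + ⟪f q, q - w n⟫ := by
    intro n
    have h1 : μ * ‖w n - q‖^2 ≤ ⟪f (w n) - f q, w n - q⟫ := hm (w n) q
    have h2 : ⟪f (w n) - f q, w n - q⟫ = ⟪f (w n), w n - q⟫ - ⟪f q, w n - q⟫ := inner_sub_left _ _ _
    have h3 : ⟪f (w n), w n - q⟫ = ⟪f (w n), w n - z n⟫ + ⟪f (w n), z n - q⟫ := by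
      rw [← inner_add_right]; congr 1; abel
    have h4 : ⟪f (w n), z n - q⟫ ≤ 0 := hVI n q hq
    have h5 : ⟪f (w n), w n - z n⟫ ≤ Cf * (t n * Cf) := by
      calc ⟪f (w n), w n - z n⟫ ≤ ‖f (w n)‖ * ‖w n - z n‖ := real_inner_le_norm _ _
        _ ≤ Cf * (t n * Cf) := by
            have := hzw n
            rw [norm_sub_rev (z n) (w n)] at this
            exact mul_le_mul (hfw n) this (norm_nonneg _) hCfnn
    have h6 : -⟪f q, w n - q⟫ = ⟪f q, q - w n⟫ := by
      rw [← inner_neg_right]; congr 1; abel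
    linarith
  have hfq0 : Tendsto (fun n => ⟪f q, q - w n⟫) G (nhds 0) := by
    have h1 : ∀ n, ⟪f q, q - w n⟫ = ⟪q, f q⟫ - ⟪w n, f q⟫ := by
      intro n
      rw [inner_sub_right]
      rw [real_inner_comm q (f q), real_inner_comm (w n) (f q)]
    have h2 := (hGinner (f q)).const_sub ⟪q, f q⟫
    rw [sub_self] at h2
    exact h2.congr (fun n => (h1 n).symm)
  have htendG : Tendsto (fun n => Cf*(t n*Cf)) G (nhds 0) := by
    have := (htend.const_mul Cf).mul_const Cf
    rw [mul_zero, zero_mul] at this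
    exact (this.congr (fun n => by ring)).mono_left hGle
  have hw2 : Tendsto (fun n => μ*‖w n - q‖^2) G (nhds 0) := by
    apply squeeze_zero' (Filter.Eventually.of_forall (fun n => by positivity))
      (Filter.Eventually.of_forall hkey)
    simpa using htendG.add hfq0
  have hwq : Tendsto (fun n => ‖w n - q‖) G (nhds 0) := by
    have h1 : Tendsto (fun n => ‖w n - q‖^2) G (nhds 0) := by
      have := hw2.const_mul (1/μ)
      rw [mul_zero] at this
      apply this.congr
      intro n
      field_simp
    have h2 := (Real.continuous_sqrt.tendsto 0).comp h1
    rw [Real.sqrt_zero] at h2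
    apply h2.congr
    intro n
    simp [Real.sqrt_sq (norm_nonneg _)]
  have hwqG : Tendsto w G (nhds q) := by
    rw [tendsto_iff_norm_sub_tendsto_zero]
    exact hwq
  have hzqG : Tendsto z G (nhds q) := by
    rw [tendsto_iff_norm_sub_tendsto_zero]
    apply squeeze_zero (fun n => norm_nonneg _) (g := fun n => ‖z n - w n‖ + ‖w n - q‖)
    · intro n
      calc ‖z n - q‖ = ‖(z n - w n) + (w n - q)‖ := by congr 1; abel
        _ ≤ ‖z n - w n‖ + ‖w n - q‖ := norm_add_le _ _
    · simpa using (hzw0.mono_left hGle).add hwq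
  have hfc : Continuous f := by
    have : LipschitzWith (Real.toNNReal K) f := by
      apply LipschitzWith.of_dist_le_mul
      intro a b
      rw [dist_eq_norm, dist_eq_norm, Real.coe_toNNReal _ hK.le]
      exact hf a b
    exact this.continuous
  refine ⟨q, hq, fun p' hp' => ?_⟩
  have hfwq : Tendsto (fun n => f (w n)) G (nhds (f q)) := (hfc.tendsto q).comp hwqG
  have hzp : Tendsto (fun n => z n - p') G (nhds (q - p')) := hzqG.sub_const p'
  have hip : Tendsto (fun n => ⟪f (w n), z n - p'⟫) G (nhds ⟪f q, q - p'⟫) := hfwq.inner hzp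
  exact le_of_tendsto hip (Filter.Eventually.of_forall (fun n => hVI n p' hp'))

end

lemma tmu_le_one (K μ t : ℝ) (hμ : 0 < μ) (hμK : μ ≤ K) (ht0 : 0 ≤ t) (htK : t * K^2 ≤ μ) :
    t * μ ≤ 1 := by
  have hK : 0 < K := lt_of_lt_of_le hμ hμK
  nlinarith [mul_le_mul_of_nonneg_left htK hμ.le, pow_le_pow_left₀ hμ.le hμK 2, mul_pos hK hK]

set_option maxHeartbeats 2000000 in
theorem stmt_19
    {H : Type*} [NormedAddCommGroup H] [InnerProductSpace ℝ H] [CompleteSpace H]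
    (T : H → H) (hTne : ∀ x y : H, ‖T x - T y‖ ≤ ‖x - y‖)
    (hF : ∃ x : H, T x = x)
    (A : H → H)
    (L : ℝ) (hL : ∀ x y : H, ‖A x - A y‖ ≤ L * ‖x - y‖)
    (η : ℝ) (hη : 0 < η)
    (hmono : ∀ x y : H, η * ‖x - y‖ ^ 2 ≤ ⟪A x - A y, x - y⟫)
    (Φ : H → H) (ρ : ℝ) (hρ : ρ ∈ Set.Ioo (0 : ℝ) 1)
    (hΦ : ∀ x y : H, ‖Φ x - Φ y‖ ≤ ρ * ‖x - y‖)
    (γ : ℝ) (hγ0 : 0 < γ) (hγ : γ < η / ρ)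
    (α : ℕ → ℝ) (hα : ∀ n, α n ∈ Set.Ioo (0 : ℝ) 1)
    (hα1 : Tendsto α atTop (nhds 0))
    (hα2 : ¬ Summable α)
    (hα3 : (Summable fun n => |α (n + 1) - α n|) ∨
      Tendsto (fun n => α n / α (n + 1)) atTop (nhds 1))
    (x : ℕ → H)
    (hrec : ∀ n, x (n + 1) = T (x n) - α n • (A (T (x n)) - γ • Φ (T (x n)))) :
    ∃ q : H, (T q = q ∧ ∀ y : H, T y = y → ⟪A q - γ • Φ q, q - y⟫ ≤ 0) ∧
      (∀ q' : H, (T q' = q' ∧ ∀ y : H, T y = y → ⟪A q' - γ • Φ q', q' - y⟫ ≤ 0)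
        → q' = q) ∧
      Tendsto x atTop (nhds q) := by
  obtain ⟨f, hf_def⟩ : ∃ f : H → H, f = fun v => A v - γ • Φ v := ⟨_, rfl⟩
  obtain ⟨μ, hμ_def⟩ : ∃ μ : ℝ, μ = η - γ*ρ := ⟨_, rfl⟩
  have hμ : 0 < μ := by
    have : γ * ρ < η := (lt_div_iff₀ hρ.1).mp hγ
    rw [hμ_def]; linarith
  obtain ⟨K, hK_def⟩ : ∃ K : ℝ, K = max (L + γ*ρ) μ := ⟨_, rfl⟩
  have hμK : μ ≤ K := by rw [hK_def]; exact le_max_right _ _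
  have hK : 0 < K := lt_of_lt_of_le hμ hμK
  have hf : ∀ a b : H, ‖f a - f b‖ ≤ K * ‖a - b‖ := by
    intro a b
    have h1 : f a - f b = (A a - A b) - γ • (Φ a - Φ b) := by
      simp only [hf_def, smul_sub]; abel
    calc ‖f a - f b‖ = ‖(A a - A b) - γ • (Φ a - Φ b)‖ := by rw [h1]
      _ ≤ ‖A a - A b‖ + ‖γ • (Φ a - Φ b)‖ := norm_sub_le _ _
      _ ≤ L * ‖a - b‖ + γ * (ρ * ‖a - b‖) := by
          rw [norm_smul, Real.norm_eq_abs, abs_of_nonneg hγ0.le]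
          have := mul_le_mul_of_nonneg_left (hΦ a b) hγ0.le
          linarith [hL a b]
      _ = (L + γ*ρ) * ‖a - b‖ := by ring
      _ ≤ K * ‖a - b‖ := mul_le_mul_of_nonneg_right (by rw [hK_def]; exact le_max_left _ _) (norm_nonneg _)
  have hmf : ∀ a b : H, μ * ‖a - b‖^2 ≤ ⟪f a - f b, a - b⟫ := by
    intro a b
    have h1 : f a - f b = (A a - A b) - γ • (Φ a - Φ b) := by
      simp only [hf_def, smul_sub]; abel
    rw [h1, inner_sub_left, real_inner_smul_left]
    have h2 : ⟪Φ a - Φ b, a - b⟫ ≤ ρ * ‖a - b‖^2 := by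
      calc ⟪Φ a - Φ b, a - b⟫ ≤ ‖Φ a - Φ b‖ * ‖a - b‖ := real_inner_le_norm _ _
        _ ≤ (ρ * ‖a - b‖) * ‖a - b‖ := mul_le_mul_of_nonneg_right (hΦ a b) (norm_nonneg _)
        _ = ρ * ‖a - b‖^2 := by ring
    have h3 := mul_le_mul_of_nonneg_left h2 hγ0.le
    have h4 := hmono a b
    rw [hμ_def]
    nlinarith
  obtain ⟨q, hq, hqVI⟩ := exists_q T hTne hF f K μ hμ hμK hf hmf
  have hfq_eq : A q - γ • Φ q = f q := by rw [hf_def]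
  refine ⟨q, ⟨hq, fun y' hy' => by rw [hfq_eq]; exact hqVI y' hy'⟩, ?_, ?_⟩
  · -- uniqueness
    rintro q' ⟨hq', hq'VI⟩
    have h1 : ⟪f q', q' - q⟫ ≤ 0 := by
      have h1' := hq'VI q hq
      rw [show A q' - γ • Φ q' = f q' by rw [hf_def]] at h1'
      exact h1'
    have h2 : ⟪f q, q - q'⟫ ≤ 0 := hqVI q' hq'
    have h3 := hmf q' q
    have h4 : ⟪f q' - f q, q' - q⟫ = ⟪f q', q' - q⟫ - ⟪f q, q' - q⟫ := inner_sub_left _ _ _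
    have h5 : ⟪f q, q' - q⟫ = -⟪f q, q - q'⟫ := by
      rw [← inner_neg_right]; congr 1; abel
    have h6 : μ * ‖q' - q‖^2 ≤ 0 := by rw [h4, h5] at h3; linarith
    have h8 : ‖q' - q‖^2 ≤ 0 := le_of_mul_le_mul_left (by rw [mul_zero]; linarith) hμ
    have h9 : ‖q' - q‖^2 = 0 := le_antisymm h8 (sq_nonneg _)
    have h7 : ‖q' - q‖ = 0 := pow_eq_zero_iff two_ne_zero |>.mp h9
    exact sub_eq_zero.mp (norm_eq_zero.mp h7)
  -- convergence
  have hrec' : ∀ n, x (n + 1) = T (x n) - α n • f (T (x n)) := by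
    intro n; rw [hrec n, hf_def]
  obtain ⟨y, hy_def⟩ : ∃ y : ℕ → H, y = fun n => T (x n) := ⟨_, rfl⟩
  have hα0 : ∀ n, 0 < α n := fun n => (hα n).1
  -- threshold
  obtain ⟨N0, hN0⟩ : ∃ N0, ∀ n, N0 ≤ n → α n * K^2 ≤ μ := by
    have hev : ∀ᶠ n in atTop, α n < μ/K^2 :=
      hα1.eventually_lt_const (by positivity)
    obtain ⟨N0, hN0⟩ := hev.exists_forall_of_atTop
    exact ⟨N0, fun n hn => le_of_lt ((lt_div_iff₀ (by positivity)).mp (hN0 n hn))⟩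
  have hαμ1 : ∀ n, N0 ≤ n → α n * μ ≤ 1 :=
    fun n hn => tmu_le_one K μ (α n) hμ hμK (hα0 n).le (hN0 n hn)
  have hstep : ∀ n, N0 ≤ n → ∀ a b : H,
      ‖(a - α n • f a) - (b - α n • f b)‖ ≤ (1 - α n * μ/2) * ‖a - b‖ :=
    fun n hn a b => contraction_step f K μ hμ hμK hf hmf (α n) (hα0 n).le (hN0 n hn) a b
  have hyq : ∀ n, ‖y n - q‖ ≤ ‖x n - q‖ := by
    intro n
    calc ‖y n - q‖ = ‖T (x n) - T q‖ := by rw [hy_def, hq]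
      _ ≤ ‖x n - q‖ := hTne _ _
  have hxqrec : ∀ n, N0 ≤ n → ‖x (n+1) - q‖ ≤ (1 - α n * μ/2) * ‖x n - q‖ + α n * ‖f q‖ := by
    intro n hn
    have hsplit : x (n+1) - q = ((y n - α n • f (y n)) - (q - α n • f q)) + (-(α n • f q)) := by
      rw [hrec' n]; simp only [hy_def]; abel
    calc ‖x (n+1) - q‖ ≤ ‖(y n - α n • f (y n)) - (q - α n • f q)‖ + ‖-(α n • f q)‖ := by
          rw [hsplit]; exact norm_add_le _ _
      _ ≤ (1 - α n * μ/2) * ‖y n - q‖ + α n * ‖f q‖ := by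
          rw [norm_neg, norm_smul, Real.norm_eq_abs, abs_of_nonneg (hα0 n).le]
          linarith [hstep n hn (y n) q]
      _ ≤ (1 - α n * μ/2) * ‖x n - q‖ + α n * ‖f q‖ := by
          have hc : 0 ≤ 1 - α n * μ/2 := by linarith [hαμ1 n hn]
          have := mul_le_mul_of_nonneg_left (hyq n) hc
          linarith
  -- boundedness
  obtain ⟨M0, hM0_def⟩ : ∃ M0 : ℝ, M0 = max ‖x N0 - q‖ (2*‖f q‖/μ) := ⟨_, rfl⟩
  have hM0fq : ‖f q‖ ≤ μ * M0 / 2 := by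
    have h1 : 2*‖f q‖/μ ≤ M0 := by rw [hM0_def]; exact le_max_right _ _
    rw [div_le_iff₀ hμ] at h1
    linarith
  have hind : ∀ n, N0 ≤ n → ‖x n - q‖ ≤ M0 := by
    intro n hn
    induction n, hn using Nat.le_induction with
    | base => rw [hM0_def]; exact le_max_left _ _
    | succ n hn ih =>
      have h1 := hxqrec n hn
      have hc : 0 ≤ 1 - α n * μ/2 := by linarith [hαμ1 n hn]
      nlinarith [mul_le_mul_of_nonneg_left ih hc, (hα0 n).le,
        mul_le_mul_of_nonneg_left hM0fq (hα0 n).le]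
  obtain ⟨M, hM, hM0⟩ : ∃ M, (∀ n, ‖x n - q‖ ≤ M) ∧ 0 ≤ M := by
    set M1 := (Finset.range (N0+1)).sup' (Finset.nonempty_range_add_one) (fun k => ‖x k - q‖) with hM1
    refine ⟨max M0 M1, fun n => ?_, le_trans (norm_nonneg (x 0 - q)) ?_⟩
    · rcases le_or_gt n N0 with h | h
      · exact le_trans (Finset.le_sup' (fun k => ‖x k - q‖) (Finset.mem_range.mpr (by omega)))
          (le_max_right _ _)
      · exact le_trans (hind n h.le) (le_max_left _ _)
    · exact le_trans (Finset.le_sup' (fun k => ‖x k - q‖) (Finset.mem_range.mpr (by omega)))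
        (le_max_right _ _)
  obtain ⟨Cf, hCf_def⟩ : ∃ Cf : ℝ, Cf = K*M + ‖f q‖ := ⟨_, rfl⟩
  have hCfy : ∀ n, ‖f (y n)‖ ≤ Cf := by
    intro n
    calc ‖f (y n)‖ = ‖(f (y n) - f q) + f q‖ := by congr 1; abel
      _ ≤ ‖f (y n) - f q‖ + ‖f q‖ := norm_add_le _ _
      _ ≤ K * ‖y n - q‖ + ‖f q‖ := by linarith [hf (y n) q]
      _ ≤ Cf := by rw [hCf_def]; nlinarith [hyq n, hM n, hK]
  have hCf0 : 0 ≤ Cf := le_trans (norm_nonneg _) (hCfy 0)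
  -- divergence of partial sums of α and shifted α
  have hαdiv : Tendsto (fun n => ∑ k ∈ Finset.range n, α k) atTop atTop :=
    (not_summable_iff_tendsto_nat_atTop_of_nonneg (fun n => (hα0 n).le)).mp hα2
  have hα2' : ¬ Summable (fun k => α (k+1)) := by
    rw [summable_nat_add_iff 1]; exact hα2
  have hαdiv' : Tendsto (fun n => ∑ k ∈ Finset.range n, α (k+1)) atTop atTop :=
    (not_summable_iff_tendsto_nat_atTop_of_nonneg (fun n => (hα0 (n+1)).le)).mp hα2'
  have hsumdiv : ∀ (g : ℕ → ℝ), Tendsto (fun n => ∑ k ∈ Finset.range n, g k) atTop atTop →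
      Tendsto (fun n => ∑ k ∈ Finset.range n, (g k * μ/2)) atTop atTop := by
    intro g hg
    have h1 := hg.atTop_mul_const (show (0:ℝ) < μ/2 by positivity)
    apply h1.congr
    intro n
    rw [Finset.sum_mul]
    apply Finset.sum_congr rfl
    intro k _
    ring
  -- step differences tend to zero
  have hdrec : ∀ n, N0 ≤ n → ‖x (n+2) - x (n+1)‖ ≤
      (1 - α (n+1) * μ/2) * ‖x (n+1) - x n‖ + |α (n+1) - α n| * Cf := by
    intro n hn
    have hsplit : x (n+2) - x (n+1) =
        ((y (n+1) - α (n+1) • f (y (n+1))) - (y n - α (n+1) • f (y n)))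
          + ((α n - α (n+1)) • f (y n)) := by
      simp only [hy_def]
      rw [hrec' (n+1), hrec' n]
      simp only [sub_smul]
      abel
    have hyy : ‖y (n+1) - y n‖ ≤ ‖x (n+1) - x n‖ := by
      simp only [hy_def]; exact hTne _ _
    have hc : 0 ≤ 1 - α (n+1) * μ/2 := by linarith [hαμ1 (n+1) (by omega)]
    calc ‖x (n+2) - x (n+1)‖
        ≤ ‖(y (n+1) - α (n+1) • f (y (n+1))) - (y n - α (n+1) • f (y n))‖
          + ‖(α n - α (n+1)) • f (y n)‖ := by rw [hsplit]; exact norm_add_le _ _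
      _ ≤ (1 - α (n+1) * μ/2) * ‖y (n+1) - y n‖ + |α (n+1) - α n| * Cf := by
          rw [norm_smul, Real.norm_eq_abs, abs_sub_comm (α n) (α (n+1))]
          have h2 := mul_le_mul_of_nonneg_left (hCfy n) (abs_nonneg (α (n+1) - α n))
          linarith [hstep (n+1) (by omega) (y (n+1)) (y n)]
      _ ≤ _ := by
          have := mul_le_mul_of_nonneg_left hyy hc
          linarith
  have hd0 : Tendsto (fun n => ‖x (n+1) - x n‖) atTop (nhds 0) := by
    have hl1 : ∀ᶠ n in atTop, α (n+1) * μ/2 ≤ 1 := by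
      have : ∀ᶠ n in atTop, N0 ≤ n := eventually_ge_atTop N0
      exact this.mono (fun n hn => by linarith [hαμ1 (n+1) (by omega)])
    rcases hα3 with hsummable | hratio
    · exact xu_lemma (fun n => ‖x (n+1) - x n‖) (fun n => α (n+1) * μ/2)
        (fun _ => 0) (fun n => |α (n+1) - α n| * Cf)
        (fun n => norm_nonneg _)
        (fun n => div_nonneg (mul_nonneg (hα0 (n+1)).le hμ.le) (by norm_num)) hl1
        (hsumdiv _ hαdiv')
        (fun ε hε => Filter.Eventually.of_forall (fun n => le_of_lt hε))
        (fun n => by positivity)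
        (hsummable.mul_right Cf)
        ((eventually_ge_atTop N0).mono (fun n hn => by
          have := hdrec n hn
          simpa using this))
    · refine xu_lemma (fun n => ‖x (n+1) - x n‖) (fun n => α (n+1) * μ/2)
        (fun n => (2*Cf/μ) * |1 - α n / α (n+1)|) (fun _ => 0)
        (fun n => norm_nonneg _)
        (fun n => div_nonneg (mul_nonneg (hα0 (n+1)).le hμ.le) (by norm_num)) hl1
        (hsumdiv _ hαdiv')
        ?_
        (fun n => le_refl 0)
        summable_zero
        ?_
      · intro ε hε
        have h1 : Tendsto (fun n => (2*Cf/μ) * |1 - α n / α (n+1)|) atTop (nhds 0) := by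
          have h2 : Tendsto (fun n => 1 - α n / α (n+1)) atTop (nhds 0) := by
            have := hratio.const_sub 1
            simpa using this
          have h3 := (h2.abs).const_mul (2*Cf/μ)
          simpa using h3
        exact h1.eventually_le_const hε
      · refine (eventually_ge_atTop N0).mono (fun n hn => ?_)
        have h1 := hdrec n hn
        have e0 : α (n+1) * (1 - α n / α (n+1)) = α (n+1) - α n := by
          field_simp [(hα0 (n+1)).ne']
        have e1 : |α (n+1) - α n| = α (n+1) * |1 - α n / α (n+1)| := by
          rw [← e0, abs_mul, abs_of_pos (hα0 (n+1))]
        have h2 : α (n+1) * μ/2 * ((2*Cf/μ) * |1 - α n / α (n+1)|) = |α (n+1) - α n| * Cf := by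
          rw [e1]
          rw [show α (n+1) * μ/2 * ((2*Cf/μ) * |1 - α n / α (n+1)|)
              = (α (n+1) * |1 - α n / α (n+1)|) * Cf * (μ / μ) by ring]
          rw [div_self hμ.ne', mul_one]
        rw [add_zero, h2]
        exact h1
  -- x n - T x n → 0
  have hxT : Tendsto (fun n => ‖x n - T (x n)‖) atTop (nhds 0) := by
    apply squeeze_zero (fun n => norm_nonneg _) (g := fun n => ‖x (n+1) - x n‖ + α n * Cf)
    · intro n
      have hsplit : x n - T (x n) = -(x (n+1) - x n) + (-(α n • f (y n))) := by
        rw [hrec' n]; simp only [hy_def]; abel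
      calc ‖x n - T (x n)‖ ≤ ‖-(x (n+1) - x n)‖ + ‖-(α n • f (y n))‖ := by
            rw [hsplit]; exact norm_add_le _ _
        _ ≤ ‖x (n+1) - x n‖ + α n * Cf := by
            rw [norm_neg, norm_neg, norm_smul, Real.norm_eq_abs, abs_of_nonneg (hα0 n).le]
            have := mul_le_mul_of_nonneg_left (hCfy n) (hα0 n).le
            linarith
    · simpa using hd0.add (hα1.mul_const Cf)
  -- key limsup estimate
  have hb2 : ∀ ε, 0 < ε → ∀ᶠ n in atTop, (4/μ) * ⟪f q, q - x (n+1)⟫ ≤ ε := by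
    by_contra hcon
    push_neg at hcon
    obtain ⟨ε, hε, hfreq⟩ := hcon
    have hfreq' : ∃ᶠ n in atTop, ε < (4/μ) * ⟪f q, q - x (n+1)⟫ := by
      apply hfreq.mono
      intro n hn
      exact hn
    obtain ⟨φ, hφmono, hφ⟩ := Filter.extraction_of_frequently_atTop hfreq'
    obtain ⟨u, hu_def⟩ : ∃ u : ℕ → H, u = fun k => x (φ k + 1) := ⟨_, rfl⟩
    have hub : ∀ k, ‖u k‖ ≤ M + ‖q‖ := by
      intro k
      calc ‖u k‖ = ‖(x (φ k + 1) - q) + q‖ := by simp only [hu_def]; congr 1; abel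
        _ ≤ ‖x (φ k + 1) - q‖ + ‖q‖ := norm_add_le _ _
        _ ≤ M + ‖q‖ := by linarith [hM (φ k + 1)]
    obtain ⟨zc, G, hGne, hGle, hGinner⟩ := weak_cluster u (M + ‖q‖) hub
    have hφtend : Tendsto (fun k => φ k + 1) atTop atTop :=
      tendsto_atTop_mono (fun k => le_trans hφmono.le_apply (Nat.le_succ _)) tendsto_id
    have hufix : Tendsto (fun k => ‖u k - T (u k)‖) atTop (nhds 0) := by
      simpa only [hu_def, Function.comp_def] using hxT.comp hφtend
    have hzcfix : T zc = zc := demiclosed T hTne u (M + ‖q‖) hub zc G hGne hGle hGinner hufix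
    have hVIzc : ⟪f q, q - zc⟫ ≤ 0 := hqVI zc hzcfix
    have hlim : Tendsto (fun k => ⟪f q, q - u k⟫) G (nhds ⟪f q, q - zc⟫) := by
      have h1 : ∀ k, ⟪f q, q - u k⟫ = ⟪q, f q⟫ - ⟪u k, f q⟫ := by
        intro k
        rw [inner_sub_right, real_inner_comm q (f q), real_inner_comm (u k) (f q)]
      have h2 := (hGinner (f q)).const_sub ⟪q, f q⟫
      have h3 : ⟪f q, q - zc⟫ = ⟪q, f q⟫ - ⟪zc, f q⟫ := by
        rw [inner_sub_right, real_inner_comm q (f q), real_inner_comm zc (f q)]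
      rw [h3]
      exact h2.congr (fun k => (h1 k).symm)
    have hge : ε * μ / 4 ≤ ⟪f q, q - zc⟫ := by
      apply ge_of_tendsto hlim
      apply Filter.Eventually.of_forall
      intro k
      simp only [hu_def]
      have hk := hφ k
      have h6 : (4/μ) * ⟪f q, q - x (φ k + 1)⟫ * μ = 4 * ⟪f q, q - x (φ k + 1)⟫ := by
        field_simp
      have h7 := mul_lt_mul_of_pos_right hk hμ
      rw [h6] at h7
      linarith
    nlinarith [mul_pos hε hμ]
  -- main recurrence for s n = ‖x n - q‖²
  have hsrec : ∀ n, N0 ≤ n → ‖x (n+1) - q‖^2 ≤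
      (1 - α n * μ/2) * ‖x n - q‖^2 + (α n * μ/2) * ((4/μ) * ⟪f q, q - x (n+1)⟫) := by
    intro n hn
    have hc : 0 ≤ 1 - α n * μ/2 := by linarith [hαμ1 n hn]
    have hc1 : 1 - α n * μ/2 ≤ 1 := by nlinarith [(hα0 n).le, hμ.le]
    set v : H := (y n - α n • f (y n)) - (q - α n • f q) with hv_def
    have hsplit : x (n+1) - q = v + (-(α n • f q)) := by
      rw [hv_def, hrec' n]; simp only [hy_def]; abel
    have hnv : ‖v‖ ≤ (1 - α n * μ/2) * ‖x n - q‖ :=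
      le_trans (hstep n hn (y n) q) (by
        have := mul_le_mul_of_nonneg_left (hyq n) hc
        linarith)
    have hsq : ‖x (n+1) - q‖^2 = ‖v‖^2 + 2*⟪v, -(α n • f q)⟫ + ‖α n • f q‖^2 := by
      rw [hsplit, @norm_add_sq_real, norm_neg]
    have hinner : ⟪v, -(α n • f q)⟫ = ⟪x (n+1) - q, -(α n • f q)⟫ - ⟪-(α n • f q), -(α n • f q)⟫ := by
      rw [hsplit, inner_add_left]
      ring
    have hid2 : ⟪-(α n • f q), -(α n • f q)⟫ = ‖α n • f q‖^2 := by
      rw [inner_neg_neg, real_inner_self_eq_norm_sq]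
    have hxin : ⟪x (n+1) - q, -(α n • f q)⟫ = α n * ⟪f q, q - x (n+1)⟫ := by
      rw [inner_neg_right, real_inner_smul_right]
      rw [real_inner_comm]
      rw [show ⟪f q, x (n+1) - q⟫ = -⟪f q, q - x (n+1)⟫ by rw [← inner_neg_right]; congr 1; abel]
      ring
    have hv2 : ‖v‖^2 ≤ ((1 - α n * μ/2) * ‖x n - q‖)^2 :=
      pow_le_pow_left₀ (norm_nonneg v) hnv 2
    have hexp : ((1 - α n * μ/2) * ‖x n - q‖)^2 ≤ (1 - α n * μ/2) * ‖x n - q‖^2 := by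
      rw [mul_pow]
      apply mul_le_mul_of_nonneg_right _ (sq_nonneg _)
      nlinarith
    have hfin : (α n * μ/2) * ((4/μ) * ⟪f q, q - x (n+1)⟫) = 2 * (α n * ⟪f q, q - x (n+1)⟫) := by
      field_simp
      ring
    rw [hfin]
    have hsq2 : ‖α n • f q‖^2 ≥ 0 := sq_nonneg _
    nlinarith [hsq, hinner, hid2, hxin, hv2, hexp]
  have hs0 : Tendsto (fun n => ‖x n - q‖^2) atTop (nhds 0) := by
    have hl1 : ∀ᶠ n in atTop, α n * μ/2 ≤ 1 := by
      exact (eventually_ge_atTop N0).mono (fun n hn => by linarith [hαμ1 n hn])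
    refine xu_lemma (fun n => ‖x n - q‖^2) (fun n => α n * μ/2)
      (fun n => (4/μ) * ⟪f q, q - x (n+1)⟫) (fun _ => 0)
      (fun n => sq_nonneg _)
      (fun n => div_nonneg (mul_nonneg (hα0 n).le hμ.le) (by norm_num)) hl1
      (hsumdiv _ hαdiv)
      hb2
      (fun n => le_refl 0)
      summable_zero
      ((eventually_ge_atTop N0).mono (fun n hn => by
        have := hsrec n hn
        simpa using this))
  rw [tendsto_iff_norm_sub_tendsto_zero]
  have h2 := (Real.continuous_sqrt.tendsto 0).comp hs0
  rw [Real.sqrt_zero] at h2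
  apply h2.congr
  intro n
  simp [Real.sqrt_sq (norm_nonneg _)]
end
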